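/- arXiv:1803.10141 — 9 statements merged into one kernel-verified Lean document; each statement's English description precedes it below -/
import Mathlib

section
/- For every real p with p ≥ -1 and p ≠ 0, the 'p-parallel sum' map (x, y) ↦ ((x^p)⁻¹ + (y^p)⁻¹)⁻¹^(1/p) = (x^(-p) + y^(-p))^(-1/p) is jointly concave on the open positive quadrant {(x, y) : x > 0, y > 0}. In particular (p = 1), the parallel sum (x, y) ↦ (x⁻¹ + y⁻¹)⁻¹ is jointly concave on the positive quadrant. -/
open Real Set

/-- Bernoulli-type inequality for nonpositive exponents. -/
lemma PS.bern {s : ℝ} (hs : s ≤ 0) {u : ℝ} (hu : 0 < u) :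
    1 + s * (u - 1) ≤ u ^ s := by
  have hlog : Real.log u ≤ u - 1 := Real.log_le_sub_one_of_pos hu
  have h1 : s * (u - 1) ≤ s * Real.log u := by nlinarith
  calc 1 + s * (u - 1) ≤ s * Real.log u + 1 := by linarith
    _ ≤ Real.exp (s * Real.log u) := Real.add_one_le_exp _
    _ = u ^ s := by rw [Real.rpow_def_of_pos hu, mul_comm]

/-- Two-point convexity inequality for `x ↦ x^s`, `s < 0`. -/
lemma PS.mix_neg {s : ℝ} (hs : s < 0) {a b w1 w2 : ℝ} (ha : 0 < a) (hb : 0 < b)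
    (hw1 : 0 ≤ w1) (hw2 : 0 ≤ w2) (hw : w1 + w2 = 1) :
    (w1 * a + w2 * b) ^ s ≤ w1 * a ^ s + w2 * b ^ s := by
  have hm : 0 < w1 * a + w2 * b := by
    rcases lt_or_ge 0 w1 with h | h
    · have : 0 ≤ w2 * b := mul_nonneg hw2 hb.le
      nlinarith
    · have hw1' : w1 = 0 := le_antisymm h hw1
      have : w2 = 1 := by linarith
      rw [hw1', this]; simpa using hb
  set m := w1 * a + w2 * b with hmdef
  have h1 : 1 + s * (a / m - 1) ≤ (a / m) ^ s := PS.bern hs.le (div_pos ha hm)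
  have h2 : 1 + s * (b / m - 1) ≤ (b / m) ^ s := PS.bern hs.le (div_pos hb hm)
  have hda : (a / m) ^ s = a ^ s / m ^ s := Real.div_rpow ha.le hm.le s
  have hdb : (b / m) ^ s = b ^ s / m ^ s := Real.div_rpow hb.le hm.le s
  rw [hda] at h1; rw [hdb] at h2
  have hms : 0 < m ^ s := Real.rpow_pos_of_pos hm s
  have key : 1 ≤ w1 * (a ^ s / m ^ s) + w2 * (b ^ s / m ^ s) := by
    have e1 : w1 * (1 + s * (a / m - 1)) + w2 * (1 + s * (b / m - 1)) = 1 := by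
      have h : w1 * a / m + w2 * b / m = 1 := by
        rw [← add_div, ← hmdef, div_self hm.ne']
      linear_combination (1 - s) * hw + s * h
    nlinarith [mul_le_mul_of_nonneg_left h1 hw1, mul_le_mul_of_nonneg_left h2 hw2]
  calc m ^ s = m ^ s * 1 := (mul_one _).symm
    _ ≤ m ^ s * (w1 * (a ^ s / m ^ s) + w2 * (b ^ s / m ^ s)) := by
        exact mul_le_mul_of_nonneg_left key hms.le
    _ = w1 * a ^ s + w2 * b ^ s := by field_simp

/-- Two-point concavity inequality for `x ↦ x^s`, `0 < s ≤ 1`. -/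
lemma PS.mix_pos {s : ℝ} (hs0 : 0 < s) (hs1 : s ≤ 1) {a b w1 w2 : ℝ} (ha : 0 < a) (hb : 0 < b)
    (hw1 : 0 ≤ w1) (hw2 : 0 ≤ w2) (hw : w1 + w2 = 1) :
    w1 * a ^ s + w2 * b ^ s ≤ (w1 * a + w2 * b) ^ s := by
  have := (Real.concaveOn_rpow hs0.le hs1).2 (mem_Ici.2 ha.le) (mem_Ici.2 hb.le) hw1 hw2 hw
  simpa [smul_eq_mul] using this

/-- Superadditivity of the s-"norm". -/
lemma PS.superadd {s : ℝ} (hs : s ≤ 1) (hs0 : s ≠ 0) {x1 y1 x2 y2 : ℝ}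
    (hx1 : 0 < x1) (hy1 : 0 < y1) (hx2 : 0 < x2) (hy2 : 0 < y2) :
    (x1 ^ s + y1 ^ s) ^ (1 / s) + (x2 ^ s + y2 ^ s) ^ (1 / s)
      ≤ ((x1 + x2) ^ s + (y1 + y2) ^ s) ^ (1 / s) := by
  have hX1 : 0 < x1 ^ s + y1 ^ s := by positivity
  have hX2 : 0 < x2 ^ s + y2 ^ s := by positivity
  set A := (x1 ^ s + y1 ^ s) ^ (1 / s) with hAdef
  set B := (x2 ^ s + y2 ^ s) ^ (1 / s) with hBdef
  have hA : 0 < A := Real.rpow_pos_of_pos hX1 _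
  have hB : 0 < B := Real.rpow_pos_of_pos hX2 _
  have hAs : A ^ s = x1 ^ s + y1 ^ s := by
    rw [hAdef, ← Real.rpow_mul hX1.le, one_div, inv_mul_cancel₀ hs0, Real.rpow_one]
  have hBs : B ^ s = x2 ^ s + y2 ^ s := by
    rw [hBdef, ← Real.rpow_mul hX2.le, one_div, inv_mul_cancel₀ hs0, Real.rpow_one]
  have hAB : 0 < A + B := by linarith
  set w1 := A / (A + B) with hw1def
  set w2 := B / (A + B) with hw2def
  have hw1 : 0 < w1 := div_pos hA hAB
  have hw2 : 0 < w2 := div_pos hB hAB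
  have hw : w1 + w2 = 1 := by rw [hw1def, hw2def]; field_simp
  -- decomposition of the sums
  have hxd : x1 + x2 = (A + B) * (w1 * (x1 / A) + w2 * (x2 / B)) := by
    rw [hw1def, hw2def]; field_simp
  have hyd : y1 + y2 = (A + B) * (w1 * (y1 / A) + w2 * (y2 / B)) := by
    rw [hw1def, hw2def]; field_simp
  have hmixx : 0 < w1 * (x1 / A) + w2 * (x2 / B) := by positivity
  have hmixy : 0 < w1 * (y1 / A) + w2 * (y2 / B) := by positivity
  have hxs : (x1 + x2) ^ s = (A + B) ^ s * (w1 * (x1 / A) + w2 * (x2 / B)) ^ s := by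
    rw [hxd, Real.mul_rpow hAB.le hmixx.le]
  have hys : (y1 + y2) ^ s = (A + B) ^ s * (w1 * (y1 / A) + w2 * (y2 / B)) ^ s := by
    rw [hyd, Real.mul_rpow hAB.le hmixy.le]
  have hsum : w1 * ((x1 / A) ^ s + (y1 / A) ^ s) + w2 * ((x2 / B) ^ s + (y2 / B) ^ s) = 1 := by
    rw [Real.div_rpow hx1.le hA.le, Real.div_rpow hy1.le hA.le,
      Real.div_rpow hx2.le hB.le, Real.div_rpow hy2.le hB.le]
    have hAs' : (0:ℝ) < A ^ s := Real.rpow_pos_of_pos hA s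
    have hBs' : (0:ℝ) < B ^ s := Real.rpow_pos_of_pos hB s
    rw [← add_div, ← add_div, hAs, hBs]
    rw [hw1def, hw2def]
    field_simp
  have hABs : 0 < (A + B) ^ s := Real.rpow_pos_of_pos hAB s
  rcases lt_or_ge s 0 with hneg | hposle
  · -- s < 0
    have m1 := PS.mix_neg hneg (div_pos hx1 hA) (div_pos hx2 hB) hw1.le hw2.le hw
    have m2 := PS.mix_neg hneg (div_pos hy1 hA) (div_pos hy2 hB) hw1.le hw2.le hw
    have hkey : (x1 + x2) ^ s + (y1 + y2) ^ s ≤ (A + B) ^ s := by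
      rw [hxs, hys]
      calc (A + B) ^ s * (w1 * (x1 / A) + w2 * (x2 / B)) ^ s
            + (A + B) ^ s * (w1 * (y1 / A) + w2 * (y2 / B)) ^ s
          ≤ (A + B) ^ s * (w1 * (x1 / A) ^ s + w2 * (x2 / B) ^ s)
            + (A + B) ^ s * (w1 * (y1 / A) ^ s + w2 * (y2 / B) ^ s) := by
            gcongr
        _ = (A + B) ^ s * (w1 * ((x1 / A) ^ s + (y1 / A) ^ s)
              + w2 * ((x2 / B) ^ s + (y2 / B) ^ s)) := by ring
        _ = (A + B) ^ s := by rw [hsum, mul_one]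
    have h1s : (1:ℝ)/s ≤ 0 := (one_div_neg.2 hneg).le
    have := Real.rpow_le_rpow_of_nonpos (x := (x1 + x2) ^ s + (y1 + y2) ^ s)
      (by positivity) hkey h1s
    rw [← Real.rpow_mul hAB.le, mul_one_div, div_self hs0, Real.rpow_one] at this
    exact this
  · -- 0 < s ≤ 1
    have hspos : 0 < s := lt_of_le_of_ne hposle (Ne.symm hs0)
    have m1 := PS.mix_pos hspos hs (div_pos hx1 hA) (div_pos hx2 hB) hw1.le hw2.le hw
    have m2 := PS.mix_pos hspos hs (div_pos hy1 hA) (div_pos hy2 hB) hw1.le hw2.le hw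
    have hkey : (A + B) ^ s ≤ (x1 + x2) ^ s + (y1 + y2) ^ s := by
      rw [hxs, hys]
      calc (A + B) ^ s = (A + B) ^ s * (w1 * ((x1 / A) ^ s + (y1 / A) ^ s)
              + w2 * ((x2 / B) ^ s + (y2 / B) ^ s)) := by rw [hsum, mul_one]
        _ = (A + B) ^ s * (w1 * (x1 / A) ^ s + w2 * (x2 / B) ^ s)
            + (A + B) ^ s * (w1 * (y1 / A) ^ s + w2 * (y2 / B) ^ s) := by ring
        _ ≤ (A + B) ^ s * (w1 * (x1 / A) + w2 * (x2 / B)) ^ s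
            + (A + B) ^ s * (w1 * (y1 / A) + w2 * (y2 / B)) ^ s := by gcongr
    have := Real.rpow_le_rpow hABs.le hkey (by positivity : (0:ℝ) ≤ 1/s)
    rw [← Real.rpow_mul hAB.le, mul_one_div, div_self hs0, Real.rpow_one] at this
    exact this

lemma PS.rpow_neg_one (x : ℝ) : x ^ (-1 : ℝ) = x⁻¹ := by
  rw [show (-1 : ℝ) = ((-1 : ℤ) : ℝ) by norm_num, Real.rpow_intCast, zpow_neg_one]

lemma PS.hom {s t x y : ℝ} (hs0 : s ≠ 0) (ht : 0 < t) (hx : 0 < x) (hy : 0 < y) :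
    ((t * x) ^ s + (t * y) ^ s) ^ (1 / s) = t * (x ^ s + y ^ s) ^ (1 / s) := by
  rw [Real.mul_rpow ht.le hx.le, Real.mul_rpow ht.le hy.le, ← mul_add,
    Real.mul_rpow (Real.rpow_nonneg ht.le s) (by positivity),
    ← Real.rpow_mul ht.le, mul_one_div, div_self hs0, Real.rpow_one]

lemma PS.concave {s : ℝ} (hs : s ≤ 1) (hs0 : s ≠ 0) :
    ConcaveOn ℝ {q : ℝ × ℝ | 0 < q.1 ∧ 0 < q.2}
      (fun q : ℝ × ℝ => (q.1 ^ s + q.2 ^ s) ^ (1 / s)) := by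
  constructor
  · exact (convex_Ioi (0:ℝ)).prod (convex_Ioi 0)
  · rintro ⟨x1, x2⟩ ⟨hx1, hx2⟩ ⟨y1, y2⟩ ⟨hy1, hy2⟩ a b ha hb hab
    rcases eq_or_lt_of_le ha with rfl | ha'
    · have hb1 : b = 1 := by linarith
      subst hb1; simp
    rcases eq_or_lt_of_le hb with rfl | hb'
    · have ha1 : a = 1 := by linarith
      subst ha1; simp
    simp only [Prod.smul_mk, Prod.mk_add_mk, smul_eq_mul]
    have h := PS.superadd hs hs0 (mul_pos ha' hx1) (mul_pos ha' hx2)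
      (mul_pos hb' hy1) (mul_pos hb' hy2)
    rwa [PS.hom hs0 ha' hx1 hx2, PS.hom hs0 hb' hy1 hy2] at h

/-- For every real `p ≥ -1`, `p ≠ 0`, the `p`-parallel sum
`(x, y) ↦ (x^(-p) + y^(-p))^(-1/p)` is jointly concave on the open positive quadrant.
In particular (`p = 1`) the parallel sum `(x, y) ↦ (x⁻¹ + y⁻¹)⁻¹` is jointly concave there. -/
theorem parallel_sum_concave :
    (∀ p : ℝ, -1 ≤ p → p ≠ 0 →
      ConcaveOn ℝ {q : ℝ × ℝ | 0 < q.1 ∧ 0 < q.2}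
        (fun q : ℝ × ℝ => (q.1 ^ (-p) + q.2 ^ (-p)) ^ (-1 / p))) ∧
    ConcaveOn ℝ {q : ℝ × ℝ | 0 < q.1 ∧ 0 < q.2}
      (fun q : ℝ × ℝ => ((q.1)⁻¹ + (q.2)⁻¹)⁻¹) := by
  have main : ∀ p : ℝ, -1 ≤ p → p ≠ 0 →
      ConcaveOn ℝ {q : ℝ × ℝ | 0 < q.1 ∧ 0 < q.2}
        (fun q : ℝ × ℝ => (q.1 ^ (-p) + q.2 ^ (-p)) ^ (-1 / p)) := by
    intro p hp hp0
    have h := PS.concave (s := -p) (by linarith) (neg_ne_zero.2 hp0)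
    have heq : (fun q : ℝ × ℝ => (q.1 ^ (-p) + q.2 ^ (-p)) ^ (-1 / p))
        = fun q : ℝ × ℝ => (q.1 ^ (-p) + q.2 ^ (-p)) ^ (1 / -p) := by
      funext q; rw [div_neg, neg_div]
    rw [heq]; exact h
  refine ⟨main, ?_⟩
  have h := main 1 (by norm_num) one_ne_zero
  have heq : (fun q : ℝ × ℝ => (q.1 ^ (-1 : ℝ) + q.2 ^ (-1 : ℝ)) ^ (-1 / (1:ℝ)))
      = fun q : ℝ × ℝ => ((q.1)⁻¹ + (q.2)⁻¹)⁻¹ := by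
    funext q
    rw [PS.rpow_neg_one, PS.rpow_neg_one, show (-1 / (1:ℝ)) = (-1 : ℝ) by norm_num,
      PS.rpow_neg_one]
  rwa [heq] at h
end

section
/- Let p ≥ -1, p ≠ 0, and let f₁ : ℝ^{m₁} → (0, ∞) and f₂ : ℝ^{m₂} → (0, ∞) be continuous concave functions (on convex domains). Then the function (x, y) ↦ f₁(x) :ₚ f₂(y) = (f₁(x)^(-p) + f₂(y)^(-p))^(-1/p) is jointly concave on ℝ^{m₁} × ℝ^{m₂}. -/
open Real

/-- Two-term Hölder inequality. -/
lemma psum_holder2 {s t : ℝ} (hst : s.HolderConjugate t) {A B C D : ℝ}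
    (hA : 0 ≤ A) (hB : 0 ≤ B) (hC : 0 ≤ C) (hD : 0 ≤ D) :
    A * C + B * D ≤ (A ^ s + B ^ s) ^ (1/s) * (C ^ t + D ^ t) ^ (1/t) := by
  have h := Real.inner_le_Lp_mul_Lq_of_nonneg (Finset.univ : Finset (Fin 2))
    (f := ![A, B]) (g := ![C, D]) hst ?_ ?_
  · simpa [Fin.sum_univ_two] using h
  · intro i _; fin_cases i <;> simpa
  · intro i _; fin_cases i <;> simpa

/-- convex combination of positives is positive -/
lemma psum_combo_pos {α β a b : ℝ} (hα : 0 ≤ α) (hβ : 0 ≤ β) (hαβ : α + β = 1)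
    (ha : 0 < a) (hb : 0 < b) : 0 < α * a + β * b := by
  rcases hα.eq_or_lt with h | h
  · have hβ1 : β = 1 := by linarith
    simp [← h, hβ1, hb]
  · nlinarith [mul_nonneg hβ hb.le, mul_pos h ha]

/-- reverse Hölder with normalized weights -/
lemma psum_rev_holder {p : ℝ} (hp1 : -1 < p) (hp0 : p ≠ 0) {μ ν a b : ℝ}
    (hμ : 0 < μ) (hν : 0 < ν) (ha : 0 < a) (hb : 0 < b)
    (hμν : μ ^ (p/(p+1)) + ν ^ (p/(p+1)) = 1) :
    (a ^ (-p) + b ^ (-p)) ^ (-1/p) ≤ μ * a + ν * b := by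
  have hp1' : (0:ℝ) < p + 1 := by linarith
  rcases hp0.lt_or_gt with hneg | hpos
  · -- -1 < p < 0
    set q : ℝ := -p with hq
    have hq0 : 0 < q := by simp only [hq]; linarith
    have hq1 : q < 1 := by simp only [hq]; linarith
    have hst : (1/q).HolderConjugate (1/(1-q)) := by
      rw [Real.holderConjugate_iff]; constructor
      · rw [lt_div_iff₀ hq0]; linarith
      · rw [one_div, inv_inv, one_div, inv_inv]; ring
    have key := psum_holder2 hst (A := (μ*a)^q) (B := (ν*b)^q) (C := μ^(-q)) (D := ν^(-q))
      (by positivity) (by positivity) (by positivity) (by positivity)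
    have e1 : (μ*a)^q * μ^(-q) = a^q := by
      rw [Real.mul_rpow hμ.le ha.le, mul_comm (μ^q), mul_assoc, ← Real.rpow_add hμ]
      simp
    have e2 : (ν*b)^q * ν^(-q) = b^q := by
      rw [Real.mul_rpow hν.le hb.le, mul_comm (ν^q), mul_assoc, ← Real.rpow_add hν]
      simp
    have e3 : ((μ*a)^q)^(1/q) = μ*a := by
      rw [one_div, Real.rpow_rpow_inv (by positivity) hq0.ne']
    have e4 : ((ν*b)^q)^(1/q) = ν*b := by
      rw [one_div, Real.rpow_rpow_inv (by positivity) hq0.ne']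
    have e5 : (μ^(-q))^(1/(1-q)) = μ^(p/(p+1)) := by
      rw [← Real.rpow_mul hμ.le]
      congr 1
      rw [hq]
      have hne : (1:ℝ) + p ≠ 0 := by linarith
      field_simp [hne]
      ring
    have e6 : (ν^(-q))^(1/(1-q)) = ν^(p/(p+1)) := by
      rw [← Real.rpow_mul hν.le]
      congr 1
      rw [hq]
      have hne : (1:ℝ) + p ≠ 0 := by linarith
      field_simp [hne]
      ring
    rw [e1, e2, e3, e4, e5, e6, one_div_one_div, one_div_one_div, hμν, Real.one_rpow,
      mul_one] at key
    have hgoal : (-1)/p = 1/q := by rw [hq]; field_simp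
    rw [hgoal]
    calc (a^q + b^q)^(1/q) ≤ ((μ*a + ν*b)^q)^(1/q) := by
          apply Real.rpow_le_rpow (by positivity) key (by positivity)
      _ = μ*a + ν*b := by rw [one_div, Real.rpow_rpow_inv (by positivity) hq0.ne']
  · -- p > 0
    set r : ℝ := p/(p+1) with hr
    have hr0 : 0 < r := by positivity
    have hst : ((p+1)/p).HolderConjugate (p+1) := by
      rw [Real.holderConjugate_iff]; constructor
      · rw [lt_div_iff₀ hpos]; linarith
      · field_simp
    have key := psum_holder2 hst (A := (μ*a)^r) (B := (ν*b)^r) (C := a^(-r)) (D := b^(-r))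
      (by positivity) (by positivity) (by positivity) (by positivity)
    have e1 : (μ*a)^r * a^(-r) = μ^r := by
      rw [Real.mul_rpow hμ.le ha.le, mul_assoc, ← Real.rpow_add ha]
      simp
    have e2 : (ν*b)^r * b^(-r) = ν^r := by
      rw [Real.mul_rpow hν.le hb.le, mul_assoc, ← Real.rpow_add hb]
      simp
    have e3 : ((μ*a)^r)^((p+1)/p) = μ*a := by
      rw [← Real.rpow_mul (by positivity)]
      rw [show r * ((p+1)/p) = 1 by rw [hr]; field_simp [hpos.ne'], Real.rpow_one]
    have e4 : ((ν*b)^r)^((p+1)/p) = ν*b := by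
      rw [← Real.rpow_mul (by positivity)]
      rw [show r * ((p+1)/p) = 1 by rw [hr]; field_simp [hpos.ne'], Real.rpow_one]
    have e5 : (a^(-r))^(p+1) = a^(-p) := by
      rw [← Real.rpow_mul ha.le]
      congr 1
      rw [hr]
      have hne : p + 1 ≠ 0 := by positivity
      field_simp [hne]
    have e6 : (b^(-r))^(p+1) = b^(-p) := by
      rw [← Real.rpow_mul hb.le]
      congr 1
      rw [hr]
      have hne : p + 1 ≠ 0 := by positivity
      field_simp [hne]
    rw [e1, e2, e3, e4, e5, e6, hμν, one_div_div] at key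
    set S : ℝ := a^(-p) + b^(-p) with hS
    have hSpos : 0 < S := by positivity
    have h2 : S ^ (-(1/(p+1))) ≤ (μ*a + ν*b) ^ r := by
      rw [Real.rpow_neg hSpos.le, ← one_div]
      exact (div_le_iff₀ (Real.rpow_pos_of_pos hSpos _)).mpr key
    have h3 := Real.rpow_le_rpow (by positivity) h2 (le_of_lt (by positivity : (0:ℝ) < 1/r))
    rw [← Real.rpow_mul hSpos.le, ← Real.rpow_mul (by positivity)] at h3
    rw [show r * (1/r) = 1 by field_simp, Real.rpow_one] at h3
    rw [show -(1/(p+1)) * (1/r) = (-1)/p by rw [hr]; field_simp [hpos.ne']] at h3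
    exact h3

/-- concavity of the p-parallel sum on positives -/
lemma psum_concave {p : ℝ} (hp : -1 ≤ p) (hp0 : p ≠ 0) {a b c d α β : ℝ}
    (ha : 0 < a) (hb : 0 < b) (hc : 0 < c) (hd : 0 < d)
    (hα : 0 ≤ α) (hβ : 0 ≤ β) (hαβ : α + β = 1) :
    α * (a^(-p)+b^(-p))^(-1/p) + β * (c^(-p)+d^(-p))^(-1/p)
      ≤ ((α*a+β*c)^(-p) + (α*b+β*d)^(-p))^(-1/p) := by
  rcases hp.eq_or_lt with h | hp1
  · -- p = -1
    rw [← h]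
    norm_num [Real.rpow_one]
    ring_nf
    nlinarith []
  · have hp1' : (0:ℝ) < p + 1 := by linarith
    set X : ℝ := α*a+β*c with hX
    set Y : ℝ := α*b+β*d with hY
    have hXpos : 0 < X := psum_combo_pos hα hβ hαβ ha hc
    have hYpos : 0 < Y := psum_combo_pos hα hβ hαβ hb hd
    set S : ℝ := X^(-p) + Y^(-p) with hS
    have hSpos : 0 < S := by positivity
    set μ : ℝ := X^(-p-1) * S^(-1/p-1) with hμ
    set ν : ℝ := Y^(-p-1) * S^(-1/p-1) with hν
    have hμpos : 0 < μ := by positivity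
    have hνpos : 0 < ν := by positivity
    have hμr : μ ^ (p/(p+1)) = X^(-p) * S⁻¹ := by
      rw [hμ, Real.mul_rpow (by positivity) (by positivity),
        ← Real.rpow_mul hXpos.le, ← Real.rpow_mul hSpos.le,
        show (-p-1) * (p/(p+1)) = -p by field_simp [hp1'.ne']; ring,
        show (-1/p-1) * (p/(p+1)) = -1 by field_simp [hp0, hp1'.ne']; ring, Real.rpow_neg_one]
    have hνr : ν ^ (p/(p+1)) = Y^(-p) * S⁻¹ := by
      rw [hν, Real.mul_rpow (by positivity) (by positivity),
        ← Real.rpow_mul hYpos.le, ← Real.rpow_mul hSpos.le,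
        show (-p-1) * (p/(p+1)) = -p by field_simp [hp1'.ne']; ring,
        show (-1/p-1) * (p/(p+1)) = -1 by field_simp [hp0, hp1'.ne']; ring, Real.rpow_neg_one]
    have hμν : μ ^ (p/(p+1)) + ν ^ (p/(p+1)) = 1 := by
      rw [hμr, hνr, ← add_mul, ← hS, mul_inv_cancel₀ hSpos.ne']
    have hXX : X^(-p-1) * X = X^(-p) := by
      rw [Real.rpow_sub hXpos, Real.rpow_one, div_mul_cancel₀ _ hXpos.ne']
    have hYY : Y^(-p-1) * Y = Y^(-p) := by
      rw [Real.rpow_sub hYpos, Real.rpow_one, div_mul_cancel₀ _ hYpos.ne']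
    have hEuler : μ * X + ν * Y = S^(-1/p) := by
      rw [hμ, hν, mul_right_comm, mul_right_comm (Y^(-p-1)), hXX, hYY, ← add_mul, ← hS,
        mul_comm, ← Real.rpow_add_one hSpos.ne']
      congr 1
      ring
    have h1 := psum_rev_holder hp1 hp0 hμpos hνpos ha hb hμν
    have h2 := psum_rev_holder hp1 hp0 hμpos hνpos hc hd hμν
    calc α * (a^(-p)+b^(-p))^(-1/p) + β * (c^(-p)+d^(-p))^(-1/p)
        ≤ α * (μ*a + ν*b) + β * (μ*c + ν*d) :=
          add_le_add (mul_le_mul_of_nonneg_left h1 hα) (mul_le_mul_of_nonneg_left h2 hβ)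
      _ = μ * X + ν * Y := by rw [hX, hY]; ring
      _ = S^(-1/p) := hEuler

/-- monotonicity of the p-parallel sum -/
lemma psum_mono {p : ℝ} (hp0 : p ≠ 0) {x y x' y' : ℝ} (hx : 0 < x) (hy : 0 < y)
    (hx' : x ≤ x') (hy' : y ≤ y') :
    (x^(-p) + y^(-p))^(-1/p) ≤ (x'^(-p) + y'^(-p))^(-1/p) := by
  have hx'0 : 0 < x' := lt_of_lt_of_le hx hx'
  have hy'0 : 0 < y' := lt_of_lt_of_le hy hy'
  rcases hp0.lt_or_gt with hneg | hpos
  · have h1 : x^(-p) ≤ x'^(-p) := Real.rpow_le_rpow hx.le hx' (by linarith)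
    have h2 : y^(-p) ≤ y'^(-p) := Real.rpow_le_rpow hy.le hy' (by linarith)
    apply Real.rpow_le_rpow (by positivity) (by linarith)
    rw [neg_div]
    have : (0:ℝ) < 1/p → False := fun h => absurd (one_div_pos.mp h) (not_lt.mpr hneg.le)
    have h3 : 1/p < 0 := one_div_neg.mpr hneg
    linarith
  · have h1 : x'^(-p) ≤ x^(-p) := Real.rpow_le_rpow_of_nonpos hx hx' (by linarith)
    have h2 : y'^(-p) ≤ y^(-p) := Real.rpow_le_rpow_of_nonpos hy hy' (by linarith)
    apply Real.rpow_le_rpow_of_nonpos (by positivity) (by linarith)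
    rw [neg_div]
    have h3 : 0 < 1/p := one_div_pos.mpr hpos
    linarith

/-- Let `p ≥ -1`, `p ≠ 0`, and let `f₁ : ℝ^{m₁} → (0, ∞)` and
`f₂ : ℝ^{m₂} → (0, ∞)` be continuous concave functions on convex domains. Then
`(x, y) ↦ f₁(x) :ₚ f₂(y) = (f₁(x)^(-p) + f₂(y)^(-p))^(-1/p)` is jointly concave. -/
theorem parallel_sum_of_concave_concave (m₁ m₂ : ℕ) (p : ℝ) (hp : -1 ≤ p) (hp0 : p ≠ 0)
    (C₁ : Set (Fin m₁ → ℝ)) (C₂ : Set (Fin m₂ → ℝ))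
    (hC₁ : Convex ℝ C₁) (hC₂ : Convex ℝ C₂)
    (f₁ : (Fin m₁ → ℝ) → ℝ) (f₂ : (Fin m₂ → ℝ) → ℝ)
    (hf₁cont : ContinuousOn f₁ C₁) (hf₂cont : ContinuousOn f₂ C₂)
    (hf₁conc : ConcaveOn ℝ C₁ f₁) (hf₂conc : ConcaveOn ℝ C₂ f₂)
    (hf₁pos : ∀ x ∈ C₁, 0 < f₁ x) (hf₂pos : ∀ y ∈ C₂, 0 < f₂ y) :
    ConcaveOn ℝ (C₁ ×ˢ C₂)
      (fun q : (Fin m₁ → ℝ) × (Fin m₂ → ℝ) =>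
        (f₁ q.1 ^ (-p) + f₂ q.2 ^ (-p)) ^ (-1 / p)) := by
  refine ⟨hC₁.prod hC₂, ?_⟩
  rintro ⟨x₁, x₂⟩ ⟨hx₁, hx₂⟩ ⟨y₁, y₂⟩ ⟨hy₁, hy₂⟩ α β hα hβ hαβ
  simp only [Prod.smul_mk, Prod.mk_add_mk, smul_eq_mul]
  have hm₁ : α • x₁ + β • y₁ ∈ C₁ := hC₁ hx₁ hy₁ hα hβ hαβ
  have hm₂ : α • x₂ + β • y₂ ∈ C₂ := hC₂ hx₂ hy₂ hα hβ hαβ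
  have hf1 : α * f₁ x₁ + β * f₁ y₁ ≤ f₁ (α • x₁ + β • y₁) := by
    simpa using hf₁conc.2 hx₁ hy₁ hα hβ hαβ
  have hf2 : α * f₂ x₂ + β * f₂ y₂ ≤ f₂ (α • x₂ + β • y₂) := by
    simpa using hf₂conc.2 hx₂ hy₂ hα hβ hαβ
  have pa := hf₁pos x₁ hx₁
  have pb := hf₂pos x₂ hx₂
  have pc := hf₁pos y₁ hy₁
  have pd := hf₂pos y₂ hy₂
  have hA : 0 < α * f₁ x₁ + β * f₁ y₁ := psum_combo_pos hα hβ hαβ pa pc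
  have hB : 0 < α * f₂ x₂ + β * f₂ y₂ := psum_combo_pos hα hβ hαβ pb pd
  calc α * (f₁ x₁ ^ (-p) + f₂ x₂ ^ (-p)) ^ (-1/p)
        + β * (f₁ y₁ ^ (-p) + f₂ y₂ ^ (-p)) ^ (-1/p)
      ≤ ((α * f₁ x₁ + β * f₁ y₁)^(-p) + (α * f₂ x₂ + β * f₂ y₂)^(-p))^(-1/p) :=
        psum_concave hp hp0 pa pb pc pd hα hβ hαβ
    _ ≤ (f₁ (α • x₁ + β • y₁) ^ (-p) + f₂ (α • x₂ + β • y₂) ^ (-p)) ^ (-1/p) :=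
        psum_mono hp0 hA hB hf1 hf2
end

section
/- Let 1 ≤ k ≤ n and p ∈ (0, 1). The function φ_{k,n}(x) := (e_k(x^p) / e_{k-1}(x^p))^(1/p) is concave on the nonnegative orthant ℝ₊ⁿ (equivalently, on the positive orthant where it is finite and positive). -/
/-- The `k`-th elementary symmetric polynomial of `x ∈ ℝⁿ`:
`e_k(x) = Σ_{S ⊆ {1,…,n}, |S| = k} Π_{i ∈ S} x_i` (with `e_0 = 1`). -/
noncomputable def esymm (n k : ℕ) (x : Fin n → ℝ) : ℝ :=
  ∑ S ∈ Finset.powersetCard k (Finset.univ : Finset (Fin n)), ∏ i ∈ S, x i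

namespace ML

def E : List ℝ → ℕ → ℝ
  | _, 0 => 1
  | [], _+1 => 0
  | a :: l, k+1 => E l (k+1) + a * E l k

@[simp] lemma E_zero (l : List ℝ) : E l 0 = 1 := by cases l <;> rfl
@[simp] lemma E_nil_succ (k : ℕ) : E [] (k+1) = 0 := rfl
@[simp] lemma E_cons_succ (a : ℝ) (l : List ℝ) (k : ℕ) :
    E (a :: l) (k+1) = E l (k+1) + a * E l k := rfl

lemma E_nonneg {l : List ℝ} (hl : ∀ r ∈ l, 0 ≤ r) (k : ℕ) : 0 ≤ E l k := by
  induction l generalizing k with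
  | nil => cases k <;> simp
  | cons a t ih =>
    cases k with
    | zero => simp
    | succ k =>
      simp only [E_cons_succ]
      have ha : 0 ≤ a := hl a (by simp)
      have ht : ∀ r ∈ t, 0 ≤ r := fun r hr => hl r (by simp [hr])
      have := ih ht (k+1); have := ih ht k
      positivity

lemma E_one (l : List ℝ) : E l 1 = l.sum := by
  induction l with
  | nil => simp
  | cons a t ih => simp [ih]; ring

/-- Generalized log-concavity / interlacing inequality for elementary symmetric
polynomials of nonnegative reals. -/
lemma E_interp {l : List ℝ} (hl : ∀ r ∈ l, 0 ≤ r) :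
    ∀ {i s t j : ℕ}, i ≤ s → s ≤ t → t ≤ j → s + t = i + j →
      E l i * E l j ≤ E l s * E l t := by
  induction l with
  | nil =>
    intro i s t j h1 h2 h3 h4
    have hn : ∀ k, 0 ≤ E ([] : List ℝ) k := fun k => E_nonneg (by simp) k
    rcases Nat.eq_zero_or_pos j with hj | hj
    · have : i = 0 ∧ s = 0 ∧ t = 0 := by omega
      simp [this.1, this.2.1, this.2.2, hj]
    · rcases Nat.exists_eq_add_of_lt hj with ⟨j', rfl⟩
      simp only [zero_add, E_nil_succ, mul_zero]
      exact mul_nonneg (hn s) (hn t)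
  | cons a tl ih =>
    intro i s t j h1 h2 h3 h4
    have ha : 0 ≤ a := hl a (by simp)
    have htl : ∀ r ∈ tl, 0 ≤ r := fun r hr => hl r (by simp [hr])
    have hn : ∀ k, 0 ≤ E tl k := fun k => E_nonneg htl k
    rcases eq_or_lt_of_le h1 with rfl | h1'
    · have : t = j := by omega
      rw [this]
    · -- i < s, hence t < j
      have h3' : t < j := by omega
      rcases Nat.eq_zero_or_pos i with rfl | hi
      · -- i = 0
        obtain ⟨s', rfl⟩ : ∃ s', s = s' + 1 := ⟨s - 1, by omega⟩
        obtain ⟨t', rfl⟩ : ∃ t', t = t' + 1 := ⟨t - 1, by omega⟩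
        obtain ⟨j', rfl⟩ : ∃ j', j = j' + 1 := ⟨j - 1, by omega⟩
        have k1 : E tl (j'+1) ≤ E tl (s'+1) * E tl (t'+1) := by
          have := ih htl (i := 0) (s := s'+1) (t := t'+1) (j := j'+1)
            (by omega) (by omega) (by omega) (by omega)
          simpa using this
        have k2 : E tl j' ≤ E tl s' * E tl (t'+1) := by
          have := ih htl (i := 0) (s := s') (t := t'+1) (j := j')
            (by omega) (by omega) (by omega) (by omega)
          simpa using this
        simp only [E_zero, E_cons_succ, one_mul]
        nlinarith [hn s', hn t', hn (s'+1), hn (t'+1), mul_nonneg (hn (s'+1)) (hn t'),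
          mul_nonneg (mul_nonneg ha ha) (mul_nonneg (hn s') (hn t'))]
      · -- i ≥ 1
        obtain ⟨i', rfl⟩ : ∃ i', i = i' + 1 := ⟨i - 1, by omega⟩
        obtain ⟨s', rfl⟩ : ∃ s', s = s' + 1 := ⟨s - 1, by omega⟩
        obtain ⟨t', rfl⟩ : ∃ t', t = t' + 1 := ⟨t - 1, by omega⟩
        obtain ⟨j', rfl⟩ : ∃ j', j = j' + 1 := ⟨j - 1, by omega⟩
        have c1 : E tl (i'+1) * E tl (j'+1) ≤ E tl (s'+1) * E tl (t'+1) :=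
          ih htl (by omega) (by omega) (by omega) (by omega)
        have c2 : E tl i' * E tl j' ≤ E tl s' * E tl t' :=
          ih htl (by omega) (by omega) (by omega) (by omega)
        have c4 : E tl (i'+1) * E tl j' ≤ E tl s' * E tl (t'+1) :=
          ih htl (by omega) (by omega) (by omega) (by omega)
        rcases eq_or_lt_of_le (show s' ≤ t' by omega) with rfl | hst
        · -- s' = t'
          have c3 : E tl i' * E tl (j'+1) ≤ E tl s' * E tl (s'+1) :=
            ih htl (by omega) (by omega) (by omega) (by omega)
          simp only [E_cons_succ]
          nlinarith [hn i', hn j', hn (i'+1), hn (j'+1), hn s', hn (s'+1),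
            mul_nonneg ha ha]
        · -- s' < t'
          have c3 : E tl i' * E tl (j'+1) ≤ E tl (s'+1) * E tl t' :=
            ih htl (by omega) (by omega) (by omega) (by omega)
          simp only [E_cons_succ]
          nlinarith [hn i', hn j', hn (i'+1), hn (j'+1), hn s', hn (s'+1), hn t', hn (t'+1),
            mul_nonneg ha ha]

lemma forall_mem_of_forall₂_le {l m : List ℝ} (h : List.Forall₂ (· ≤ ·) l m)
    (hl : ∀ r ∈ l, 0 ≤ r) : ∀ r ∈ m, 0 ≤ r := by
  induction h with
  | nil => simp
  | cons hab h ih =>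
    intro r hr
    rcases List.mem_cons.1 hr with rfl | hr
    · exact le_trans (hl _ (by simp)) hab
    · exact ih (fun r hr => hl r (by simp [hr])) r hr

/-- Monotonicity of elementary symmetric polynomials. -/
lemma E_le {l m : List ℝ} (h : List.Forall₂ (· ≤ ·) l m) (hl : ∀ r ∈ l, 0 ≤ r) (k : ℕ) :
    E l k ≤ E m k := by
  induction h generalizing k with
  | nil => exact le_refl _
  | @cons a b l' m' hab h ih =>
    cases k with
    | zero => simp
    | succ k =>
      have hl' : ∀ r ∈ l', 0 ≤ r := fun r hr => hl r (by simp [hr])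
      have ha : 0 ≤ a := hl a (by simp)
      simp only [E_cons_succ]
      have h1 := ih hl' (k+1)
      have h2 := ih hl' k
      have := E_nonneg hl' k
      nlinarith

lemma E_succ_le_mul {l : List ℝ} (hl : ∀ r ∈ l, 0 ≤ r) (k : ℕ) :
    E l (k+1) ≤ E l k * E l 1 := by
  induction l generalizing k with
  | nil => simp [E_nonneg]
  | cons a t ih =>
    have ha : 0 ≤ a := hl a (by simp)
    have ht : ∀ r ∈ t, 0 ≤ r := fun r hr => hl r (by simp [hr])
    have hn : ∀ j, 0 ≤ E t j := fun j => E_nonneg ht j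
    cases k with
    | zero => simp
    | succ k =>
      have h1 := ih ht k
      simp only [E_cons_succ, E_zero, mul_one]
      have hs : 0 ≤ E t 1 := hn 1
      have e1 : E t (0+1) = E t 1 := by norm_num
      rw [e1]
      nlinarith [ih ht (k+1), mul_nonneg (mul_nonneg ha (hn k)) hs, mul_nonneg (mul_nonneg ha ha) (hn k)]

lemma E_eq_zero_mono {l : List ℝ} (hl : ∀ r ∈ l, 0 ≤ r) {j k : ℕ} (hjk : j ≤ k)
    (hj : E l j = 0) : E l k = 0 := by
  induction k with
  | zero => exact (show j = 0 by omega) ▸ hj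
  | succ k ih =>
    rcases Nat.lt_or_ge j (k+1) with h | h
    · have hk : E l k = 0 := ih (by omega)
      have := E_succ_le_mul hl k
      have h0 := E_nonneg hl (k+1)
      rw [hk, zero_mul] at this
      linarith
    · have : j = k + 1 := by omega
      rw [← this]; exact hj

lemma E_smul (l : List ℝ) (c : ℝ) (k : ℕ) : E (l.map (c * ·)) k = c ^ k * E l k := by
  induction l generalizing k with
  | nil => cases k <;> simp
  | cons a t ih =>
    cases k with
    | zero => simp
    | succ k => simp [ih]; ring

/-- Key monotonicity: if `l ≤ m` pointwise then `E l k * E m j ≤ E m k * E l j` for `j ≤ k`. -/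
lemma E_mul_le {l m : List ℝ} (h : List.Forall₂ (· ≤ ·) l m) (hl : ∀ r ∈ l, 0 ≤ r) :
    ∀ {j k : ℕ}, j ≤ k → E l k * E m j ≤ E m k * E l j := by
  induction h with
  | nil => intro j k _; exact le_refl _
  | @cons a b l' m' hab h ih =>
    intro j k hjk
    have hl' : ∀ r ∈ l', 0 ≤ r := fun r hr => hl r (by simp [hr])
    have hm' : ∀ r ∈ m', 0 ≤ r := forall_mem_of_forall₂_le h hl'
    have ha : 0 ≤ a := hl a (by simp)
    have hb : 0 ≤ b := le_trans ha hab
    have hX : ∀ r ∈ a :: l', 0 ≤ r := hl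
    have hZl : ∀ r ∈ a :: m', 0 ≤ r := by
      intro r hr; rcases List.mem_cons.1 hr with rfl | hr; exact ha; exact hm' r hr
    have hYl : ∀ r ∈ b :: m', 0 ≤ r := by
      intro r hr; rcases List.mem_cons.1 hr with rfl | hr; exact hb; exact hm' r hr
    have hA : ∀ u, 0 ≤ E l' u := fun u => E_nonneg hl' u
    have hB : ∀ u, 0 ≤ E m' u := fun u => E_nonneg hm' u
    have hXZ : List.Forall₂ (· ≤ ·) (a :: l') (a :: m') := List.Forall₂.cons (le_refl a) h
    have hZY : List.Forall₂ (· ≤ ·) (a :: m') (b :: m') :=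
      List.Forall₂.cons hab (List.forall₂_same.2 (fun x _ => le_refl x))
    rcases eq_or_lt_of_le hjk with rfl | hjk'
    · exact le_of_eq (mul_comm _ _)
    -- j < k
    have S1 : E (a :: l') k * E (a :: m') j ≤ E (a :: m') k * E (a :: l') j := by
      cases j with
      | zero => simpa using E_le hXZ hX k
      | succ j' =>
        obtain ⟨k'', rfl⟩ : ∃ k'', k = k'' + 1 := ⟨k - 1, by omega⟩
        have i1 : E l' (k''+1) * E m' (j'+1) ≤ E m' (k''+1) * E l' (j'+1) := ih hl' (by omega)
        have i2 : E l' k'' * E m' j' ≤ E m' k'' * E l' j' := ih hl' (by omega)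
        have i3 : E l' (k''+1) * E m' j' ≤ E m' (k''+1) * E l' j' := ih hl' (by omega)
        have i4 : E l' k'' * E m' (j'+1) ≤ E m' k'' * E l' (j'+1) := ih hl' (by omega)
        simp only [E_cons_succ]
        nlinarith [hA j', hA (j'+1), hA k'', hA (k''+1), hB j', hB (j'+1), hB k'', hB (k''+1),
          mul_nonneg ha ha]
    have S2 : E (a :: m') k * E (b :: m') j ≤ E (b :: m') k * E (a :: m') j := by
      cases j with
      | zero => simpa using E_le hZY hZl k
      | succ j' =>
        obtain ⟨k'', rfl⟩ : ∃ k'', k = k'' + 1 := ⟨k - 1, by omega⟩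
        have i5 : E m' j' * E m' (k''+1) ≤ E m' (j'+1) * E m' k'' :=
          E_interp hm' (by omega) (by omega) (by omega) (by omega)
        simp only [E_cons_succ]
        nlinarith [hB j', hB (j'+1), hB k'', hB (k''+1), sub_nonneg.2 hab]
    have hZn : ∀ u, 0 ≤ E (a :: m') u := fun u => E_nonneg hZl u
    have hXn : ∀ u, 0 ≤ E (a :: l') u := fun u => E_nonneg hX u
    have hYn : ∀ u, 0 ≤ E (b :: m') u := fun u => E_nonneg hYl u
    rcases eq_or_lt_of_le (hZn j) with hZj | hZj
    · -- E (a::m') j = 0, hence everything on the left vanishes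
      have hZk : E (a :: m') k = 0 := E_eq_zero_mono hZl hjk hZj.symm
      have hXk : E (a :: l') k = 0 :=
        le_antisymm (by simpa [hZk] using E_le hXZ hX k) (hXn k)
      rw [hXk, zero_mul]
      exact mul_nonneg (hYn k) (hXn j)
    rcases eq_or_lt_of_le (hZn k) with hZk | hZk
    · have hXk : E (a :: l') k = 0 :=
        le_antisymm (by simpa [← hZk] using E_le hXZ hX k) (hXn k)
      rw [hXk, zero_mul]
      exact mul_nonneg (hYn k) (hXn j)
    · have hmul := mul_le_mul S1 S2 (mul_nonneg (hZn k) (hYn j))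
        (mul_nonneg (hZn k) (hXn j))
      have key : (E (a :: l') k * E (b :: m') j) * (E (a :: m') j * E (a :: m') k) ≤
          (E (b :: m') k * E (a :: l') j) * (E (a :: m') j * E (a :: m') k) := by
        nlinarith [hmul]
      exact le_of_mul_le_mul_right key (by positivity)

lemma sum_map_add {α : Type*} (l : List α) (f g : α → ℝ) :
    (l.map fun q => f q + g q).sum = (l.map f).sum + (l.map g).sum := by
  induction l with
  | nil => simp
  | cons a t ih => simp [ih]; ring

lemma forall₂_map_map {α : Type*} {l : List α} {f g : α → ℝ} (h : ∀ a ∈ l, f a ≤ g a) :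
    List.Forall₂ (· ≤ ·) (l.map f) (l.map g) := by
  induction l with
  | nil => simp
  | cons a t ih =>
    simp only [List.map_cons]
    exact List.Forall₂.cons (h a (by simp)) (ih fun a ha => h a (by simp [ha]))

/-- The ratio `e_k / e_{k-1}`. -/
noncomputable def F (l : List ℝ) (k : ℕ) : ℝ := E l k / E l (k-1)

lemma F_nonneg {l : List ℝ} (hl : ∀ r ∈ l, 0 ≤ r) (k : ℕ) : 0 ≤ F l k :=
  div_nonneg (E_nonneg hl k) (E_nonneg hl (k-1))

lemma F_mono {l m : List ℝ} (h : List.Forall₂ (· ≤ ·) l m) (hl : ∀ r ∈ l, 0 ≤ r)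
    {k : ℕ} (hk : 1 ≤ k) : F l k ≤ F m k := by
  have hm' : ∀ r ∈ m, 0 ≤ r := forall_mem_of_forall₂_le h hl
  have hd : k - 1 ≤ k := Nat.sub_le _ _
  rcases eq_or_lt_of_le (E_nonneg hm' (k-1)) with hDm | hDm
  · have hDl : E l (k-1) = 0 :=
      le_antisymm (by simpa [← hDm] using E_le h hl (k-1)) (E_nonneg hl (k-1))
    rw [F, F, hDl, ← hDm, div_zero, div_zero]
  rcases eq_or_lt_of_le (E_nonneg hl (k-1)) with hDl | hDl
  · have : E l k = 0 := E_eq_zero_mono hl hd hDl.symm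
    rw [F, this, zero_div]
    exact F_nonneg hm' k
  · rw [F, F, div_le_div_iff₀ hDl hDm]
    exact E_mul_le h hl hd

lemma F_homog {l : List ℝ} {c : ℝ} (hc : 0 ≤ c) {k : ℕ} (hk : 1 ≤ k) :
    F (l.map (c * ·)) k = c * F l k := by
  obtain ⟨k', rfl⟩ : ∃ k', k = k' + 1 := ⟨k - 1, by omega⟩
  have h1 : (k' + 1 : ℕ) - 1 = k' := by omega
  rcases eq_or_lt_of_le hc with rfl | hc'
  · rw [F, E_smul]
    simp
  · rw [F, F, E_smul, E_smul, h1, pow_succ, mul_comm (c ^ k') c, mul_assoc,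
      mul_left_comm c (c ^ k') (E l (k' + 1)),
      mul_div_mul_left _ _ (pow_ne_zero k' (ne_of_gt hc')), mul_div_assoc]

/-- All ways to select one element from a list, together with the rest. -/
def sel {α : Type*} : List α → List (α × List α)
  | [] => []
  | a :: l => (a, l) :: (sel l).map (fun p => (p.1, a :: p.2))

lemma sel_map {α β : Type*} (g : α → β) (l : List α) :
    sel (l.map g) = (sel l).map (fun p => (g p.1, p.2.map g)) := by
  induction l with
  | nil => rfl
  | cons a t ih => simp [sel, ih, List.map_map, Function.comp_def]

lemma sel_mem {α : Type*} : ∀ {l : List α} {p : α × List α}, p ∈ sel l →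
    p.1 ∈ l ∧ p.2.Sublist l := by
  intro l
  induction l with
  | nil => intro p h; simp [sel] at h
  | cons a t ih =>
    intro p h
    rcases List.mem_cons.1 h with rfl | h
    · exact ⟨by simp, List.sublist_cons_self a t⟩
    · rcases List.mem_map.1 h with ⟨q, hq, rfl⟩
      have := ih hq
      exact ⟨by simp [this.1], List.Sublist.cons₂ a this.2⟩

lemma sel_expand : ∀ {l : List ℝ} {b : ℝ} {r : List ℝ}, (b, r) ∈ sel l →
    ∀ k, E l (k+1) = E r (k+1) + b * E r k := by
  intro l
  induction l with
  | nil => intro b r h; simp [sel] at h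
  | cons a t ih =>
    intro b r h k
    rcases List.mem_cons.1 h with hh | h
    · obtain ⟨rfl, rfl⟩ : b = a ∧ r = t := by
        constructor <;> [exact congrArg Prod.fst hh; exact congrArg Prod.snd hh]
      rfl
    · rcases List.mem_map.1 h with ⟨q, hq, hqe⟩
      obtain ⟨b', r', rfl⟩ : ∃ b' r', q = (b', r') := ⟨q.1, q.2, rfl⟩
      obtain ⟨rfl, rfl⟩ : b' = b ∧ a :: r' = r := by
        constructor <;> [exact congrArg Prod.fst hqe; exact congrArg Prod.snd hqe]
      have e1 := ih hq
      cases k with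
      | zero =>
        simp only [E_cons_succ, e1 0, E_zero, mul_one]
        ring
      | succ m =>
        simp only [E_cons_succ, e1 (m+1), e1 m]
        ring

lemma sel_fst_sum (l : List ℝ) : ((sel l).map (fun p => p.1)).sum = l.sum := by
  induction l with
  | nil => rfl
  | cons a t ih => simp [sel, List.map_map, Function.comp_def, ih]

lemma sel_sum (l : List ℝ) (k : ℕ) :
    ((sel l).map (fun p => p.1 * E p.2 k)).sum = (k+1 : ℝ) * E l (k+1) := by
  induction l generalizing k with
  | nil => simp [sel]
  | cons a t ih =>
    cases k with
    | zero =>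
      simp only [sel, List.map_cons, List.map_map, List.sum_cons, E_zero, mul_one,
        Function.comp_def, E_cons_succ]
      rw [sel_fst_sum, show (0:ℕ)+1 = 1 by rfl, E_one]
      push_cast
      ring
    | succ m =>
      simp only [sel, List.map_cons, List.map_map, List.sum_cons, Function.comp_def, E_cons_succ]
      have key : ((sel t).map (fun p : ℝ × List ℝ => p.1 * (E p.2 (m+1) + a * E p.2 m))).sum
          = (m+2 : ℝ) * E t (m+2) + a * ((m+1 : ℝ) * E t (m+1)) := by
        have : (fun p : ℝ × List ℝ => p.1 * (E p.2 (m+1) + a * E p.2 m)) =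
            (fun p : ℝ × List ℝ => p.1 * E p.2 (m+1) + a * (p.1 * E p.2 m)) := by
          funext p; ring
        rw [this, sum_map_add, List.sum_map_mul_left, ih (m+1), ih m]
        push_cast
        ring
      rw [key]
      push_cast
      ring

/-- Harmonic-type mean `a*c/(a+c)`. -/
noncomputable def hm (a c : ℝ) : ℝ := a * c / (a + c)

lemma hm_nonneg {a c : ℝ} (ha : 0 ≤ a) (hc : 0 ≤ c) : 0 ≤ hm a c :=
  div_nonneg (mul_nonneg ha hc) (add_nonneg ha hc)

lemma hm_comm (a c : ℝ) : hm a c = hm c a := by rw [hm, hm, mul_comm, add_comm]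

lemma hm_le_right {a c c' : ℝ} (ha : 0 ≤ a) (hc : 0 ≤ c) (hcc' : c ≤ c') :
    hm a c ≤ hm a c' := by
  rcases eq_or_lt_of_le ha with rfl | ha'
  · simp [hm]
  rcases eq_or_lt_of_le (le_trans hc hcc') with hc0 | hc0
  · have : c = 0 := le_antisymm (by linarith) hc
    rw [this, ← hc0]
  · have h1 : 0 < a + c := by linarith
    have h2 : 0 < a + c' := by linarith
    rw [hm, hm, div_le_div_iff₀ h1 h2]
    nlinarith [mul_le_mul_of_nonneg_left hcc' (mul_nonneg ha ha)]

lemma hm_le_left {a a' c : ℝ} (ha : 0 ≤ a) (hc : 0 ≤ c) (haa' : a ≤ a') :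
    hm a c ≤ hm a' c := by
  rw [hm_comm a c, hm_comm a' c]; exact hm_le_right hc ha haa'

lemma hm_super {x y u v : ℝ} (hx : 0 ≤ x) (hy : 0 ≤ y) (hu : 0 ≤ u) (hv : 0 ≤ v) :
    hm x u + hm y v ≤ hm (x+y) (u+v) := by
  rcases eq_or_lt_of_le (add_nonneg hx hu) with hxu | hxu
  · obtain ⟨rfl, rfl⟩ : x = 0 ∧ u = 0 := by constructor <;> linarith
    simp [hm]
  rcases eq_or_lt_of_le (add_nonneg hy hv) with hyv | hyv
  · obtain ⟨rfl, rfl⟩ : y = 0 ∧ v = 0 := by constructor <;> linarith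
    simp [hm]
  · have hs : 0 < x + y + (u + v) := by linarith
    rw [hm, hm, hm, div_add_div _ _ (ne_of_gt hxu) (ne_of_gt hyv),
      div_le_div_iff₀ (mul_pos hxu hyv) (by linarith : (0:ℝ) < x + y + (u + v))]
    nlinarith [sq_nonneg (x*v - y*u), mul_nonneg (mul_nonneg hx hu) (add_nonneg hy hv),
      mul_nonneg (mul_nonneg hy hv) (add_nonneg hx hu)]

/-- The key identity: `(k+1) * F l (k+1) = ∑ over selections of hm`. -/
lemma F_identity {l : List ℝ} (hl : ∀ r ∈ l, 0 ≤ r) {k : ℕ} (hk : 1 ≤ k)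
    (hpos : 0 < E l k) :
    ((sel l).map (fun p => hm p.1 (F p.2 k))).sum = (k+1 : ℝ) * F l (k+1) := by
  obtain ⟨k'', rfl⟩ : ∃ k'', k = k'' + 1 := ⟨k - 1, by omega⟩
  have hterm : ∀ p ∈ sel l, hm p.1 (F p.2 (k''+1)) = p.1 * E p.2 (k''+1) / E l (k''+1) := by
    intro p hp
    obtain ⟨b, r, rfl⟩ : ∃ b r, p = (b, r) := ⟨p.1, p.2, rfl⟩
    have hmem := sel_mem hp
    have hr : ∀ s ∈ r, 0 ≤ s := fun s hs => hl s (hmem.2.mem hs)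
    have hb : 0 ≤ b := hl _ hmem.1
    have hexp : E l (k''+1) = E r (k''+1) + b * E r k'' := sel_expand hp k''
    have hrpos : 0 < E r k'' := by
      rcases eq_or_lt_of_le (E_nonneg hr k'') with h0 | h0
      · exfalso
        have : E r (k''+1) = 0 := E_eq_zero_mono hr (by omega) h0.symm
        rw [hexp, this, ← h0] at hpos
        simp at hpos
      · exact h0
    have hFr : F r (k''+1) = E r (k''+1) / E r k'' := by rw [F]; norm_num
    have hden : b + E r (k''+1) / E r k'' = E l (k''+1) / E r k'' := by
      rw [hexp]
      field_simp
      ring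
    simp only [hm, hFr]
    rw [hden]
    rw [← mul_div_assoc, div_div_div_cancel_right₀ hrpos.ne']
  rw [List.map_congr_left hterm]
  have : (fun p : ℝ × List ℝ => p.1 * E p.2 (k''+1) / E l (k''+1)) =
      (fun p : ℝ × List ℝ => (p.1 * E p.2 (k''+1)) * (E l (k''+1))⁻¹) := by
    funext p; rw [div_eq_mul_inv]
  rw [this, List.sum_map_mul_right, sel_sum, F]
  norm_num
  ring

/-- Marcus–Lopes superadditivity of `e_k/e_{k-1}`. -/
lemma F_superadd : ∀ (k : ℕ) (l : List (ℝ × ℝ)), (∀ q ∈ l, 0 ≤ q.1 ∧ 0 ≤ q.2) →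
    F (l.map fun q => q.1) (k+1) + F (l.map fun q => q.2) (k+1) ≤
      F (l.map fun q => q.1 + q.2) (k+1) := by
  intro k
  induction k with
  | zero =>
    intro l hl
    simp [F, E_one, sum_map_add]
  | succ k ih =>
    intro l hl
    set X := l.map (fun q : ℝ × ℝ => q.1) with hXdef
    set Y := l.map (fun q : ℝ × ℝ => q.2) with hYdef
    set Z := l.map (fun q : ℝ × ℝ => q.1 + q.2) with hZdef
    have hX : ∀ r ∈ X, 0 ≤ r := by
      intro r hr; rcases List.mem_map.1 hr with ⟨q, hq, rfl⟩; exact (hl q hq).1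
    have hY : ∀ r ∈ Y, 0 ≤ r := by
      intro r hr; rcases List.mem_map.1 hr with ⟨q, hq, rfl⟩; exact (hl q hq).2
    have hZ : ∀ r ∈ Z, 0 ≤ r := by
      intro r hr; rcases List.mem_map.1 hr with ⟨q, hq, rfl⟩
      exact add_nonneg (hl q hq).1 (hl q hq).2
    have hXZ : List.Forall₂ (· ≤ ·) X Z :=
      forall₂_map_map (fun q hq => le_add_of_nonneg_right (hl q hq).2)
    have hYZ : List.Forall₂ (· ≤ ·) Y Z :=
      forall₂_map_map (fun q hq => le_add_of_nonneg_left (hl q hq).1)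
    rcases eq_or_lt_of_le (E_nonneg hX (k+1)) with hx0 | hx0
    · have hFX : F X (k+1+1) = 0 := by
        rw [F, show k+1+1-1 = k+1 from rfl, ← hx0, div_zero]
      rw [hFX, zero_add]
      exact F_mono hYZ hY (by omega)
    rcases eq_or_lt_of_le (E_nonneg hY (k+1)) with hy0 | hy0
    · have hFY : F Y (k+1+1) = 0 := by
        rw [F, show k+1+1-1 = k+1 from rfl, ← hy0, div_zero]
      rw [hFY, add_zero]
      exact F_mono hXZ hX (by omega)
    have hz0 : 0 < E Z (k+1) := lt_of_lt_of_le hx0 (E_le hXZ hX (k+1))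
    have idX := F_identity hX (by omega : 1 ≤ k+1) hx0
    have idY := F_identity hY (by omega : 1 ≤ k+1) hy0
    have idZ := F_identity hZ (by omega : 1 ≤ k+1) hz0
    rw [hXdef, sel_map, List.map_map] at idX
    rw [hYdef, sel_map, List.map_map] at idY
    rw [hZdef, sel_map, List.map_map] at idZ
    have hsum : ((sel l).map ((fun p : ℝ × List ℝ => hm p.1 (F p.2 (k+1))) ∘
            (fun p : (ℝ × ℝ) × List (ℝ × ℝ) => ((fun q : ℝ × ℝ => q.1) p.1,
              p.2.map (fun q : ℝ × ℝ => q.1))))).sum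
        + ((sel l).map ((fun p : ℝ × List ℝ => hm p.1 (F p.2 (k+1))) ∘
            (fun p : (ℝ × ℝ) × List (ℝ × ℝ) => ((fun q : ℝ × ℝ => q.2) p.1,
              p.2.map (fun q : ℝ × ℝ => q.2))))).sum
        ≤ ((sel l).map ((fun p : ℝ × List ℝ => hm p.1 (F p.2 (k+1))) ∘
            (fun p : (ℝ × ℝ) × List (ℝ × ℝ) => ((fun q : ℝ × ℝ => q.1 + q.2) p.1,
              p.2.map (fun q : ℝ × ℝ => q.1 + q.2))))).sum := by
      rw [← sum_map_add]
      apply List.sum_le_sum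
      intro q hq
      simp only [Function.comp_apply]
      have hsub : q.2.Sublist l := (sel_mem hq).2
      have hq2 : ∀ r ∈ q.2, 0 ≤ r.1 ∧ 0 ≤ r.2 := fun r hr => hl r (hsub.mem hr)
      have hq1 : 0 ≤ q.1.1 ∧ 0 ≤ q.1.2 := hl q.1 (sel_mem hq).1
      have hFX2 : 0 ≤ F (q.2.map fun q : ℝ × ℝ => q.1) (k+1) := by
        apply F_nonneg
        intro r hr; rcases List.mem_map.1 hr with ⟨w, hw, rfl⟩; exact (hq2 w hw).1
      have hFY2 : 0 ≤ F (q.2.map fun q : ℝ × ℝ => q.2) (k+1) := by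
        apply F_nonneg
        intro r hr; rcases List.mem_map.1 hr with ⟨w, hw, rfl⟩; exact (hq2 w hw).2
      calc hm q.1.1 (F (q.2.map fun q : ℝ × ℝ => q.1) (k+1)) +
            hm q.1.2 (F (q.2.map fun q : ℝ × ℝ => q.2) (k+1))
          ≤ hm (q.1.1 + q.1.2) (F (q.2.map fun q : ℝ × ℝ => q.1) (k+1) +
              F (q.2.map fun q : ℝ × ℝ => q.2) (k+1)) :=
            hm_super hq1.1 hq1.2 hFX2 hFY2
        _ ≤ hm (q.1.1 + q.1.2) (F (q.2.map fun q : ℝ × ℝ => q.1 + q.2) (k+1)) :=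
            hm_le_right (add_nonneg hq1.1 hq1.2) (add_nonneg hFX2 hFY2) (ih q.2 hq2)
    rw [idX, idY, idZ] at hsum
    have hk2 : (0:ℝ) < ((k+1 : ℕ) : ℝ) + 1 := by positivity
    have h2 : (((k+1 : ℕ) : ℝ) + 1) * (F X (k+1+1) + F Y (k+1+1)) ≤
        (((k+1 : ℕ) : ℝ) + 1) * F Z (k+1+1) := by
      rw [mul_add]
      push_cast at hsum ⊢
      linarith [hsum]
    exact le_of_mul_le_mul_left h2 hk2

lemma multiset_esymm_eq (l : List ℝ) (k : ℕ) : Multiset.esymm (↑l) k = E l k := by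
  induction l generalizing k with
  | nil =>
    cases k with
    | zero => simp [Multiset.esymm]
    | succ k => simp [Multiset.esymm, Multiset.powersetCard_zero_right]
  | cons a t ih =>
    cases k with
    | zero => simp [Multiset.esymm]
    | succ k =>
      rw [show ((a :: t : List ℝ) : Multiset ℝ) = a ::ₘ (↑t : Multiset ℝ) from rfl]
      rw [Multiset.esymm, Multiset.powersetCard_cons, Multiset.map_add, Multiset.sum_add,
        Multiset.map_map]
      have h2 : (Multiset.map (Multiset.prod ∘ Multiset.cons a)
          (Multiset.powersetCard k (↑t : Multiset ℝ))).sum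
          = a * E t k := by
        rw [show Multiset.prod ∘ Multiset.cons a = fun s : Multiset ℝ => a * s.prod by
          funext s; simp [Multiset.prod_cons]]
        rw [Multiset.sum_map_mul_left, ← Multiset.esymm, ih]
      rw [h2, ← Multiset.esymm, ih]
      simp

lemma esymm_eq_E (n k : ℕ) (x : Fin n → ℝ) : esymm n k x = E (List.ofFn x) k := by
  have h1 : esymm n k x = ((Finset.univ : Finset (Fin n)).val.map x).esymm k :=
    (Finset.esymm_map_val x Finset.univ k).symm
  rw [h1, show (Finset.univ : Finset (Fin n)).val.map x = ((List.ofFn x : List ℝ) : Multiset ℝ) by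
    rw [Fin.univ_def]
    simp [List.ofFn_eq_map], multiset_esymm_eq]

lemma forall₂_ofFn : ∀ {n : ℕ} {f g : Fin n → ℝ}, (∀ i, f i ≤ g i) →
    List.Forall₂ (· ≤ ·) (List.ofFn f) (List.ofFn g) := by
  intro n
  induction n with
  | zero => intro f g h; simp
  | succ m ih =>
    intro f g h
    rw [List.ofFn_succ, List.ofFn_succ]
    exact List.Forall₂.cons (h 0) (ih fun i => h i.succ)

lemma zipWith_ofFn : ∀ {n : ℕ} (f g : Fin n → ℝ),
    List.zipWith (· + ·) (List.ofFn f) (List.ofFn g) = List.ofFn (fun i => f i + g i) := by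
  intro n
  induction n with
  | zero => intro f g; simp
  | succ m ih => intro f g; simp [List.ofFn_succ, ih]

/-- Superadditivity for a pair of equal-length lists. -/
lemma F_superadd₂ {u v : List ℝ} (h : u.length = v.length) (hu : ∀ r ∈ u, 0 ≤ r)
    (hv : ∀ r ∈ v, 0 ≤ r) {k : ℕ} (hk : 1 ≤ k) :
    F u k + F v k ≤ F (List.zipWith (· + ·) u v) k := by
  obtain ⟨k', rfl⟩ : ∃ k', k = k' + 1 := ⟨k - 1, by omega⟩
  have h1 : (u.zip v).map (fun q : ℝ × ℝ => q.1) = u := List.map_fst_zip (le_of_eq h)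
  have h2 : (u.zip v).map (fun q : ℝ × ℝ => q.2) = v := List.map_snd_zip (ge_of_eq h)
  have h3 : (u.zip v).map (fun q : ℝ × ℝ => q.1 + q.2) = List.zipWith (· + ·) u v := by
    clear h1 h2 h hu hv
    induction u generalizing v with
    | nil => simp
    | cons a t ih => cases v with
      | nil => simp
      | cons b w => simp [ih]
  have key := F_superadd k' (u.zip v) (fun q hq =>
    ⟨hu q.1 (List.of_mem_zip hq).1, hv q.2 (List.of_mem_zip hq).2⟩)
  rwa [h1, h2, h3] at key

section Outer

variable {p : ℝ}

lemma rpow_combine (hp0 : 0 < p) (hp1 : p < 1) {a b lam mu : ℝ} (ha : 0 ≤ a) (hb : 0 ≤ b)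
    (hlam : 0 ≤ lam) (hmu : 0 ≤ mu) (hs : lam + mu = 1) :
    lam ^ (1-p) * a ^ p + mu ^ (1-p) * b ^ p ≤ (a + b) ^ p := by
  have h1p : (1:ℝ) - p ≠ 0 := by linarith
  rcases eq_or_lt_of_le hlam with hl0 | hl0
  · rw [← hl0, Real.zero_rpow h1p, zero_mul, zero_add,
      show mu = 1 by linarith, Real.one_rpow, one_mul]
    exact Real.rpow_le_rpow hb (by linarith) hp0.le
  rcases eq_or_lt_of_le hmu with hm0 | hm0
  · rw [← hm0, Real.zero_rpow h1p, zero_mul, add_zero,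
      show lam = 1 by linarith, Real.one_rpow, one_mul]
    exact Real.rpow_le_rpow ha (by linarith) hp0.le
  · have hC := (Real.concaveOn_rpow hp0.le hp1.le).2
      (Set.mem_Ici.2 (div_nonneg ha hl0.le)) (Set.mem_Ici.2 (div_nonneg hb hm0.le))
      hlam hmu hs
    have e1 : lam • (a/lam) + mu • (b/mu) = a + b := by
      rw [smul_eq_mul, smul_eq_mul, mul_div_assoc', mul_div_assoc', mul_div_cancel_left₀ _ hl0.ne',
        mul_div_cancel_left₀ _ hm0.ne']
    have e2 : lam • ((a/lam) ^ p) = lam ^ (1-p) * a ^ p := by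
      rw [smul_eq_mul, Real.div_rpow ha hl0.le, Real.rpow_sub hl0, Real.rpow_one]
      field_simp
    have e3 : mu • ((b/mu) ^ p) = mu ^ (1-p) * b ^ p := by
      rw [smul_eq_mul, Real.div_rpow hb hm0.le, Real.rpow_sub hm0, Real.rpow_one]
      field_simp
    rw [e1, e2, e3] at hC
    exact hC

lemma lam_sum (hp0 : 0 < p) {a b : ℝ} (ha : 0 ≤ a) (hb : 0 ≤ b) (hs : 0 < a + b) :
    (a/(a+b)) ^ (1-p) * a ^ p + (b/(a+b)) ^ (1-p) * b ^ p = (a+b) ^ p := by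
  have key : ∀ c : ℝ, 0 ≤ c → (c/(a+b)) ^ (1-p) * c ^ p = c / (a+b) ^ (1-p) := by
    intro c hc
    rw [Real.div_rpow hc hs.le, div_mul_eq_mul_div, mul_comm,
      ← Real.rpow_add' hc (by norm_num : p + (1-p) ≠ 0)]
    norm_num
  rw [key a ha, key b hb, ← add_div, eq_comm]
  rw [eq_div_iff (ne_of_gt (Real.rpow_pos_of_pos hs (1-p))),
    ← Real.rpow_add' hs.le (by norm_num : p + (1-p) ≠ 0)]
  norm_num

lemma ofFn_nonneg {m : ℕ} {f : Fin m → ℝ} (h : ∀ i, 0 ≤ f i) :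
    ∀ r ∈ List.ofFn f, 0 ≤ r := by
  intro r hr
  obtain ⟨i, rfl⟩ := List.mem_ofFn.1 hr
  exact h i

variable {n : ℕ}

/-- φ(x) as used below. -/
noncomputable def phi (p : ℝ) (k : ℕ) (x : Fin n → ℝ) : ℝ :=
  (F (List.ofFn fun i => x i ^ p) k) ^ (1/p)

lemma phi_nonneg (p : ℝ) (k : ℕ) (x : Fin n → ℝ) (hx : ∀ i, 0 ≤ x i) : 0 ≤ phi p k x :=
  Real.rpow_nonneg (F_nonneg (ofFn_nonneg fun i => Real.rpow_nonneg (hx i) p) k) _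

lemma phi_homog (hp0 : 0 < p) {k : ℕ} (hk : 1 ≤ k) {c : ℝ} (hc : 0 ≤ c)
    (x : Fin n → ℝ) (hx : ∀ i, 0 ≤ x i) :
    phi p k (fun i => c * x i) = c * phi p k x := by
  have e1 : (List.ofFn fun i => (c * x i) ^ p) =
      (List.ofFn fun i => x i ^ p).map (c ^ p * ·) := by
    rw [List.map_ofFn]
    congr 1
    funext i
    exact (Real.mul_rpow hc (hx i)).trans rfl
  rw [phi, phi, e1, F_homog (Real.rpow_nonneg hc p) hk,
    Real.mul_rpow (Real.rpow_nonneg hc p)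
      (F_nonneg (ofFn_nonneg fun i => Real.rpow_nonneg (hx i) p) k),
    ← Real.rpow_mul hc, mul_one_div_cancel (ne_of_gt hp0), Real.rpow_one]

lemma phi_super (hp0 : 0 < p) (hp1 : p < 1) {k : ℕ} (hk : 1 ≤ k)
    (x y : Fin n → ℝ) (hx : ∀ i, 0 ≤ x i) (hy : ∀ i, 0 ≤ y i) :
    phi p k x + phi p k y ≤ phi p k (fun i => x i + y i) := by
  have hxp : ∀ r ∈ (List.ofFn fun i => x i ^ p), 0 ≤ r :=
    ofFn_nonneg fun i => Real.rpow_nonneg (hx i) p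
  have hyp : ∀ r ∈ (List.ofFn fun i => y i ^ p), 0 ≤ r :=
    ofFn_nonneg fun i => Real.rpow_nonneg (hy i) p
  have ha : 0 ≤ phi p k x := phi_nonneg p k x hx
  have hb : 0 ≤ phi p k y := phi_nonneg p k y hy
  rcases eq_or_lt_of_le (add_nonneg ha hb) with hs | hs
  · rw [← hs]
    exact phi_nonneg p k _ (fun i => add_nonneg (hx i) (hy i))
  · set a := phi p k x with hadef
    set b := phi p k y with hbdef
    set lam := a / (a + b) with hlamdef
    set mu := b / (a + b) with hmudef
    have hlam : 0 ≤ lam := div_nonneg ha hs.le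
    have hmu : 0 ≤ mu := div_nonneg hb hs.le
    have hsum1 : lam + mu = 1 := by
      rw [hlamdef, hmudef, ← add_div, div_self (ne_of_gt hs)]
    have hcoord : ∀ i, lam ^ (1-p) * (x i ^ p) + mu ^ (1-p) * (y i ^ p) ≤ (x i + y i) ^ p :=
      fun i => rpow_combine hp0 hp1 (hx i) (hy i) hlam hmu hsum1
    have hlp : (0:ℝ) ≤ lam ^ (1-p) := Real.rpow_nonneg hlam _
    have hmp : (0:ℝ) ≤ mu ^ (1-p) := Real.rpow_nonneg hmu _
    have hup : ∀ r ∈ (List.ofFn fun i => lam ^ (1-p) * (x i ^ p)), 0 ≤ r :=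
      ofFn_nonneg fun i => mul_nonneg hlp (Real.rpow_nonneg (hx i) p)
    have hvp : ∀ r ∈ (List.ofFn fun i => mu ^ (1-p) * (y i ^ p)), 0 ≤ r :=
      ofFn_nonneg fun i => mul_nonneg hmp (Real.rpow_nonneg (hy i) p)
    have hsuper := F_superadd₂ (by simp) hup hvp hk
    rw [zipWith_ofFn] at hsuper
    have hmono : F (List.ofFn fun i => lam ^ (1-p) * (x i ^ p) + mu ^ (1-p) * (y i ^ p)) k ≤
        F (List.ofFn fun i => (x i + y i) ^ p) k :=
      F_mono (forall₂_ofFn hcoord)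
        (ofFn_nonneg fun i =>
          add_nonneg (mul_nonneg hlp (Real.rpow_nonneg (hx i) p))
            (mul_nonneg hmp (Real.rpow_nonneg (hy i) p))) hk
    have hFu : F (List.ofFn fun i => lam ^ (1-p) * (x i ^ p)) k =
        lam ^ (1-p) * F (List.ofFn fun i => x i ^ p) k := by
      rw [show (List.ofFn fun i => lam ^ (1-p) * (x i ^ p)) =
          (List.ofFn fun i => x i ^ p).map (lam ^ (1-p) * ·) by rw [List.map_ofFn]; rfl]
      exact F_homog hlp hk
    have hFv : F (List.ofFn fun i => mu ^ (1-p) * (y i ^ p)) k =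
        mu ^ (1-p) * F (List.ofFn fun i => y i ^ p) k := by
      rw [show (List.ofFn fun i => mu ^ (1-p) * (y i ^ p)) =
          (List.ofFn fun i => y i ^ p).map (mu ^ (1-p) * ·) by rw [List.map_ofFn]; rfl]
      exact F_homog hmp hk
    have hap : a ^ p = F (List.ofFn fun i => x i ^ p) k := by
      rw [hadef, phi, ← Real.rpow_mul (F_nonneg hxp k), one_div,
        inv_mul_cancel₀ (ne_of_gt hp0), Real.rpow_one]
    have hbp : b ^ p = F (List.ofFn fun i => y i ^ p) k := by
      rw [hbdef, phi, ← Real.rpow_mul (F_nonneg hyp k), one_div,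
        inv_mul_cancel₀ (ne_of_gt hp0), Real.rpow_one]
    have hkey : (a + b) ^ p ≤ F (List.ofFn fun i => (x i + y i) ^ p) k := by
      calc (a + b) ^ p = lam ^ (1-p) * a ^ p + mu ^ (1-p) * b ^ p :=
            (lam_sum hp0 ha hb hs).symm
        _ = F (List.ofFn fun i => lam ^ (1-p) * (x i ^ p)) k +
            F (List.ofFn fun i => mu ^ (1-p) * (y i ^ p)) k := by
            rw [hFu, hFv, hap, hbp]
        _ ≤ F (List.ofFn fun i => lam ^ (1-p) * (x i ^ p) + mu ^ (1-p) * (y i ^ p)) k := hsuper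
        _ ≤ F (List.ofFn fun i => (x i + y i) ^ p) k := hmono
    have := Real.rpow_le_rpow (Real.rpow_nonneg (add_nonneg ha hb) p) hkey
      (le_of_lt (by positivity : (0:ℝ) < 1/p))
    rwa [← Real.rpow_mul (add_nonneg ha hb), mul_one_div_cancel (ne_of_gt hp0),
      Real.rpow_one] at this

end Outer

end ML

/-- Let `1 ≤ k ≤ n` and `p ∈ (0, 1)`. The function
`φ_{k,n}(x) = (e_k(x^p) / e_{k-1}(x^p))^(1/p)` is concave on the nonnegative orthant. -/
theorem esymm_ratio_rpow_concave (n k : ℕ) (hk1 : 1 ≤ k) (hkn : k ≤ n)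
    (p : ℝ) (hp : p ∈ Set.Ioo (0 : ℝ) 1) :
    ConcaveOn ℝ {x : Fin n → ℝ | ∀ i, 0 ≤ x i}
      (fun x =>
        (esymm n k (fun i => x i ^ p) / esymm n (k - 1) (fun i => x i ^ p)) ^ (1 / p)) := by
  obtain ⟨hp0, hp1⟩ := hp
  have hrw : ∀ z : Fin n → ℝ,
      (esymm n k (fun i => z i ^ p) / esymm n (k - 1) fun i => z i ^ p) ^ (1/p)
        = ML.phi p k z := by
    intro z
    rw [ML.esymm_eq_E, ML.esymm_eq_E]
    rfl
  constructor
  · intro x hx y hy a b ha hb hab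
    intro i
    have hxi : 0 ≤ x i := hx i
    have hyi : 0 ≤ y i := hy i
    simp only [Pi.add_apply, Pi.smul_apply, smul_eq_mul]
    exact add_nonneg (mul_nonneg ha hxi) (mul_nonneg hb hyi)
  · intro x hx y hy a b ha hb hab
    simp only [smul_eq_mul]
    rw [hrw x, hrw y, hrw _]
    have hx' : ∀ i, 0 ≤ x i := hx
    have hy' : ∀ i, 0 ≤ y i := hy
    have e1 : ML.phi p k (a • x + b • y) = ML.phi p k (fun i => a * x i + b * y i) := by
      congr 1
    have e2 := ML.phi_super hp0 hp1 hk1 (fun i => a * x i) (fun i => b * y i)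
      (fun i => mul_nonneg ha (hx' i)) (fun i => mul_nonneg hb (hy' i))
    rw [ML.phi_homog hp0 hk1 ha x hx', ML.phi_homog hp0 hk1 hb y hy'] at e2
    rw [e1]
    exact e2
end

section
/- Let 1 ≤ k ≤ n and p ∈ (0, 1). The function x ↦ (e_k(x^p))^(1/(pk)) is concave on the nonnegative orthant ℝ₊ⁿ. Equivalently, for all x, y ∈ ℝ₊ⁿ, (e_k((x+y)^p))^(1/(pk)) ≥ (e_k(x^p))^(1/(pk)) + (e_k(y^p))^(1/(pk)). -/
set_option linter.unusedSectionVars false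
set_option linter.unusedVariables false

open Finset

namespace EsymmAux

variable {ι : Type*} [DecidableEq ι]

noncomputable def Es (A : Finset ι) (k : ℕ) (x : ι → ℝ) : ℝ :=
  ∑ S ∈ A.powersetCard k, ∏ i ∈ S, x i

lemma Es_zero (A : Finset ι) (x : ι → ℝ) : Es A 0 x = 1 := by simp [Es]

lemma Es_one (A : Finset ι) (x : ι → ℝ) : Es A 1 x = ∑ i ∈ A, x i := by
  rw [Es, Finset.powersetCard_one, Finset.sum_map]
  simp

lemma Es_nonneg {A : Finset ι} {k : ℕ} {x : ι → ℝ} (hx : ∀ i ∈ A, 0 ≤ x i) :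
    0 ≤ Es A k x :=
  Finset.sum_nonneg fun S hS => Finset.prod_nonneg fun i hi =>
    hx i ((Finset.mem_powersetCard.1 hS).1 hi)

lemma Es_pos {A : Finset ι} {k : ℕ} {x : ι → ℝ} (hx : ∀ i ∈ A, 0 < x i)
    (hk : k ≤ A.card) : 0 < Es A k x :=
  Finset.sum_pos
    (fun S hS => Finset.prod_pos fun i hi => hx i ((Finset.mem_powersetCard.1 hS).1 hi))
    (Finset.powersetCard_nonempty.2 hk)

lemma Es_mono {A : Finset ι} {k : ℕ} {u v : ι → ℝ} (hu : ∀ i ∈ A, 0 ≤ u i)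
    (huv : ∀ i ∈ A, u i ≤ v i) : Es A k u ≤ Es A k v :=
  Finset.sum_le_sum fun S hS =>
    Finset.prod_le_prod (fun i hi => hu i ((mem_powersetCard.1 hS).1 hi))
      (fun i hi => huv i ((mem_powersetCard.1 hS).1 hi))

lemma Es_homog (A : Finset ι) (k : ℕ) (c : ℝ) (x : ι → ℝ) :
    Es A k (fun i => c * x i) = c ^ k * Es A k x := by
  rw [Es, Es, Finset.mul_sum]
  refine Finset.sum_congr rfl fun S hS => ?_
  rw [Finset.prod_mul_distrib, Finset.prod_const, (mem_powersetCard.1 hS).2]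

lemma Es_rec {A : Finset ι} {i : ι} (hi : i ∈ A) (k : ℕ) (x : ι → ℝ) :
    Es A (k+1) x = x i * Es (A.erase i) k x + Es (A.erase i) (k+1) x := by
  have h0 : i ∉ A.erase i := Finset.notMem_erase i A
  have hins : A = insert i (A.erase i) := (Finset.insert_erase hi).symm
  have hdisj : Disjoint ((A.erase i).powersetCard (k+1))
      (((A.erase i).powersetCard k).image (insert i)) := by
    rw [Finset.disjoint_left]
    intro S hS hS'
    rcases Finset.mem_image.1 hS' with ⟨T, hT, rfl⟩
    exact (fun h => h0 ((mem_powersetCard.1 hS).1 h)) (Finset.mem_insert_self i T)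
  have hinj : ∀ S ∈ (A.erase i).powersetCard k, ∀ T ∈ (A.erase i).powersetCard k,
      insert i S = insert i T → S = T := by
    intro S hS T hT h
    have hiS : i ∉ S := fun h' => h0 ((mem_powersetCard.1 hS).1 h')
    have hiT : i ∉ T := fun h' => h0 ((mem_powersetCard.1 hT).1 h')
    rw [← Finset.erase_insert hiS, ← Finset.erase_insert hiT, h]
  conv_lhs => rw [Es, hins, Finset.powersetCard_succ_insert h0]
  rw [Finset.sum_union hdisj, Finset.sum_image hinj, add_comm]
  congr 1
  rw [Es, Finset.mul_sum]
  refine Finset.sum_congr rfl fun S hS => ?_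
  have hiS : i ∉ S := fun h' => h0 ((mem_powersetCard.1 hS).1 h')
  rw [Finset.prod_insert hiS]

lemma Es_weight (A : Finset ι) (k : ℕ) (x : ι → ℝ) :
    ((k+1 : ℕ) : ℝ) * Es A (k+1) x = ∑ i ∈ A, x i * Es (A.erase i) k x := by
  have lhs : ((k+1 : ℕ) : ℝ) * Es A (k+1) x
      = ∑ T ∈ A.powersetCard (k+1), ∑ i ∈ T, x i * ∏ j ∈ T.erase i, x j := by
    rw [Es, Finset.mul_sum]
    refine Finset.sum_congr rfl fun T hT => ?_
    have hcard : T.card = k+1 := (mem_powersetCard.1 hT).2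
    rw [Finset.sum_congr rfl fun i hi => Finset.mul_prod_erase T x hi,
      Finset.sum_const, hcard, nsmul_eq_mul]
  have rhs : ∑ i ∈ A, x i * Es (A.erase i) k x
      = ∑ i ∈ A, ∑ S ∈ (A.erase i).powersetCard k, x i * ∏ j ∈ S, x j := by
    refine Finset.sum_congr rfl fun i _ => ?_
    rw [Es, Finset.mul_sum]
  rw [lhs, rhs, Finset.sum_sigma', Finset.sum_sigma']
  refine Finset.sum_nbij' (fun P => ⟨P.2, P.1.erase P.2⟩) (fun Q => ⟨insert Q.1 Q.2, Q.1⟩)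
    ?_ ?_ ?_ ?_ ?_
  · rintro ⟨T, i⟩ hP
    rw [Finset.mem_sigma] at hP ⊢
    obtain ⟨hT, hiT⟩ := hP
    rw [mem_powersetCard] at hT
    refine ⟨hT.1 hiT, mem_powersetCard.2 ⟨?_, ?_⟩⟩
    · exact fun j hj => Finset.mem_erase.2 ⟨(Finset.mem_erase.1 hj).1,
        hT.1 (Finset.mem_of_mem_erase hj)⟩
    · rw [Finset.card_erase_of_mem hiT, hT.2]; rfl
  · rintro ⟨i, S⟩ hQ
    rw [Finset.mem_sigma] at hQ ⊢
    obtain ⟨hi, hS⟩ := hQ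
    rw [mem_powersetCard] at hS
    have hiS : i ∉ S := fun h => Finset.notMem_erase i A (hS.1 h)
    refine ⟨mem_powersetCard.2 ⟨?_, ?_⟩, Finset.mem_insert_self i S⟩
    · intro j hj
      rcases Finset.mem_insert.1 hj with rfl | hj
      · exact hi
      · exact Finset.mem_of_mem_erase (hS.1 hj)
    · rw [Finset.card_insert_of_notMem hiS, hS.2]
  · rintro ⟨T, i⟩ hP
    rw [Finset.mem_sigma] at hP
    simp only [Finset.insert_erase hP.2]
  · rintro ⟨i, S⟩ hQ
    rw [Finset.mem_sigma] at hQ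
    have hiS : i ∉ S := fun h => Finset.notMem_erase i A ((mem_powersetCard.1 hQ.2).1 h)
    simp only [Finset.erase_insert hiS]
  · rintro ⟨T, i⟩ hP
    rfl


lemma milne_mono {a s s' : ℝ} (ha : 0 < a) (hs : 0 < s) (h : s ≤ s') :
    a * s / (a + s) ≤ a * s' / (a + s') := by
  have hs' : 0 < s' := lt_of_lt_of_le hs h
  rw [div_le_div_iff₀ (by positivity) (by positivity)]
  nlinarith [mul_le_mul_of_nonneg_left h (mul_pos ha ha).le]

lemma milne_superadd {a b s t : ℝ} (ha : 0 < a) (hb : 0 < b) (hs : 0 < s) (ht : 0 < t) :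
    a * s / (a + s) + b * t / (b + t) ≤ (a + b) * (s + t) / (a + b + (s + t)) := by
  rw [div_add_div _ _ (by positivity) (by positivity),
    div_le_div_iff₀ (by positivity) (by positivity)]
  nlinarith [sq_nonneg (a*t - b*s), mul_pos ha hb, mul_pos hs ht, mul_pos ha ht,
    mul_pos hb hs]

lemma Es_repr {A : Finset ι} {k : ℕ} (hcard : k + 2 ≤ A.card)
    {x : ι → ℝ} (hx : ∀ i ∈ A, 0 < x i) :
    ((k+2 : ℕ) : ℝ) * (Es A (k+2) x / Es A (k+1) x)
      = ∑ i ∈ A, (x i * (Es (A.erase i) (k+1) x / Es (A.erase i) k x)) /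
          (x i + Es (A.erase i) (k+1) x / Es (A.erase i) k x) := by
  have hA : 0 < Es A (k+1) x := Es_pos hx (by omega)
  have step : ∀ i ∈ A,
      (x i * (Es (A.erase i) (k+1) x / Es (A.erase i) k x)) /
          (x i + Es (A.erase i) (k+1) x / Es (A.erase i) k x)
        = x i * Es (A.erase i) (k+1) x / Es A (k+1) x := by
    intro i hi
    have hxe : ∀ j ∈ A.erase i, 0 < x j := fun j hj => hx j (Finset.mem_of_mem_erase hj)
    have hce : k + 1 ≤ (A.erase i).card := by
      rw [Finset.card_erase_of_mem hi]; omega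
    have h0 : 0 < Es (A.erase i) k x := Es_pos hxe (by omega)
    have h1 : 0 < Es (A.erase i) (k+1) x := Es_pos hxe hce
    have hrec : Es A (k+1) x = x i * Es (A.erase i) k x + Es (A.erase i) (k+1) x :=
      Es_rec hi k x
    rw [hrec]
    have hxi : 0 < x i := hx i hi
    field_simp
  rw [Finset.sum_congr rfl step, ← Finset.sum_div, ← Es_weight A (k+1) x]
  push_cast
  ring

lemma ML : ∀ (k : ℕ) (A : Finset ι) (x y : ι → ℝ), k + 1 ≤ A.card →
    (∀ i ∈ A, 0 < x i) → (∀ i ∈ A, 0 < y i) →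
    Es A (k+1) x / Es A k x + Es A (k+1) y / Es A k y
      ≤ Es A (k+1) (fun i => x i + y i) / Es A k (fun i => x i + y i) := by
  intro k
  induction k with
  | zero =>
    intro A x y hc hx hy
    simp only [zero_add, Es_zero, div_one, Es_one]
    exact le_of_eq Finset.sum_add_distrib.symm
  | succ k IH =>
    intro A x y hc hx hy
    have hxy : ∀ i ∈ A, 0 < x i + y i := fun i hi => add_pos (hx i hi) (hy i hi)
    have hrx := Es_repr hc hx
    have hry := Es_repr hc hy
    have hrxy := Es_repr hc hxy
    have key : ∑ i ∈ A, (x i * (Es (A.erase i) (k+1) x / Es (A.erase i) k x)) /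
          (x i + Es (A.erase i) (k+1) x / Es (A.erase i) k x)
        + ∑ i ∈ A, (y i * (Es (A.erase i) (k+1) y / Es (A.erase i) k y)) /
          (y i + Es (A.erase i) (k+1) y / Es (A.erase i) k y)
        ≤ ∑ i ∈ A, ((x i + y i) *
            (Es (A.erase i) (k+1) (fun j => x j + y j) / Es (A.erase i) k (fun j => x j + y j))) /
          ((x i + y i) +
            Es (A.erase i) (k+1) (fun j => x j + y j) / Es (A.erase i) k (fun j => x j + y j)) := by
      rw [← Finset.sum_add_distrib]
      refine Finset.sum_le_sum fun i hi => ?_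
      have hxe : ∀ j ∈ A.erase i, 0 < x j := fun j hj => hx j (Finset.mem_of_mem_erase hj)
      have hye : ∀ j ∈ A.erase i, 0 < y j := fun j hj => hy j (Finset.mem_of_mem_erase hj)
      have hce : k + 1 ≤ (A.erase i).card := by
        rw [Finset.card_erase_of_mem hi]; omega
      have sx0 : 0 < Es (A.erase i) k x := Es_pos hxe (by omega)
      have sx1 : 0 < Es (A.erase i) (k+1) x := Es_pos hxe hce
      have sy0 : 0 < Es (A.erase i) k y := Es_pos hye (by omega)
      have sy1 : 0 < Es (A.erase i) (k+1) y := Es_pos hye hce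
      have sxy0 : 0 < Es (A.erase i) k (fun j => x j + y j) :=
        Es_pos (fun j hj => add_pos (hxe j hj) (hye j hj)) (by omega)
      have hIH := IH (A.erase i) x y hce hxe hye
      have hsx : 0 < Es (A.erase i) (k+1) x / Es (A.erase i) k x := by positivity
      have hsy : 0 < Es (A.erase i) (k+1) y / Es (A.erase i) k y := by positivity
      calc x i * (Es (A.erase i) (k+1) x / Es (A.erase i) k x) /
              (x i + Es (A.erase i) (k+1) x / Es (A.erase i) k x)
            + y i * (Es (A.erase i) (k+1) y / Es (A.erase i) k y) /
              (y i + Es (A.erase i) (k+1) y / Es (A.erase i) k y)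
          ≤ (x i + y i) * ((Es (A.erase i) (k+1) x / Es (A.erase i) k x)
              + Es (A.erase i) (k+1) y / Es (A.erase i) k y) /
              ((x i + y i) + ((Es (A.erase i) (k+1) x / Es (A.erase i) k x)
              + Es (A.erase i) (k+1) y / Es (A.erase i) k y)) :=
            milne_superadd (hx i hi) (hy i hi) hsx hsy
        _ ≤ _ := milne_mono (add_pos (hx i hi) (hy i hi)) (add_pos hsx hsy) hIH
    rw [← hrx, ← hry, ← hrxy, ← mul_add] at key
    have hk2 : (0:ℝ) < ((k+2 : ℕ) : ℝ) := by positivity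
    exact le_of_mul_le_mul_left key hk2



lemma Es_telescope {A : Finset ι} {x : ι → ℝ} (hx : ∀ i ∈ A, 0 < x i) :
    ∀ k, k ≤ A.card → Es A k x = ∏ j ∈ Finset.range k, (Es A (j+1) x / Es A j x) := by
  intro k
  induction k with
  | zero => intro _; simp [Es_zero]
  | succ k IH =>
    intro hk
    rw [Finset.prod_range_succ, ← IH (by omega)]
    have h0 : Es A k x ≠ 0 := ne_of_gt (Es_pos hx (by omega))
    rw [mul_comm, div_mul_cancel₀ _ h0]

lemma mahler {α : Type*} (T : Finset α) (hT : T.Nonempty) (u v : α → ℝ)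
    (hu : ∀ i ∈ T, 0 < u i) (hv : ∀ i ∈ T, 0 < v i) :
    (∏ i ∈ T, u i) ^ (1 / (T.card : ℝ)) + (∏ i ∈ T, v i) ^ (1 / (T.card : ℝ))
      ≤ (∏ i ∈ T, (u i + v i)) ^ (1 / (T.card : ℝ)) := by
  have hc : (0:ℝ) < T.card := by exact_mod_cast Finset.card_pos.2 hT
  set c : ℝ := 1 / (T.card : ℝ) with hcdef
  have hc0 : 0 < c := by positivity
  have hcw : ∑ _i ∈ T, c = 1 := by
    rw [Finset.sum_const, nsmul_eq_mul, hcdef]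
    field_simp
  have h1 : (∏ i ∈ T, (u i / (u i + v i)) ^ c) ≤ ∑ i ∈ T, c * (u i / (u i + v i)) := by
    simpa using Real.geom_mean_le_arith_mean_weighted T (fun _ => c)
      (fun i => u i / (u i + v i)) (fun i _ => hc0.le) hcw
      (fun i hi => by have := hu i hi; have := hv i hi; positivity)
  have h2 : (∏ i ∈ T, (v i / (u i + v i)) ^ c) ≤ ∑ i ∈ T, c * (v i / (u i + v i)) := by
    simpa using Real.geom_mean_le_arith_mean_weighted T (fun _ => c)
      (fun i => v i / (u i + v i)) (fun i _ => hc0.le) hcw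
      (fun i hi => by have := hu i hi; have := hv i hi; positivity)
  have hW : 0 < ∏ i ∈ T, (u i + v i) :=
    Finset.prod_pos fun i hi => add_pos (hu i hi) (hv i hi)
  have hU : 0 < ∏ i ∈ T, u i := Finset.prod_pos hu
  have hV : 0 < ∏ i ∈ T, v i := Finset.prod_pos hv
  have eq1 : ∏ i ∈ T, (u i / (u i + v i)) ^ c
      = (∏ i ∈ T, u i) ^ c / (∏ i ∈ T, (u i + v i)) ^ c := by
    rw [Real.finset_prod_rpow T _ (fun i hi => by
      have := hu i hi; have := hv i hi; positivity) c, Finset.prod_div_distrib,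
      Real.div_rpow hU.le hW.le]
  have eq2 : ∏ i ∈ T, (v i / (u i + v i)) ^ c
      = (∏ i ∈ T, v i) ^ c / (∏ i ∈ T, (u i + v i)) ^ c := by
    rw [Real.finset_prod_rpow T _ (fun i hi => by
      have := hu i hi; have := hv i hi; positivity) c, Finset.prod_div_distrib,
      Real.div_rpow hV.le hW.le]
  rw [eq1] at h1
  rw [eq2] at h2
  have hsum : ∑ i ∈ T, c * (u i / (u i + v i)) + ∑ i ∈ T, c * (v i / (u i + v i)) = 1 := by
    rw [← Finset.sum_add_distrib, ← hcw]
    refine Finset.sum_congr rfl fun i hi => ?_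
    have h1 : 0 < u i + v i := add_pos (hu i hi) (hv i hi)
    field_simp
  have hWp : 0 < (∏ i ∈ T, (u i + v i)) ^ c := Real.rpow_pos_of_pos hW c
  have := add_le_add h1 h2
  rw [hsum, ← add_div, div_le_one hWp] at this
  exact this

lemma ML_rpow {A : Finset ι} {k : ℕ} (hk1 : 1 ≤ k) (hk : k ≤ A.card)
    {x y : ι → ℝ} (hx : ∀ i ∈ A, 0 < x i) (hy : ∀ i ∈ A, 0 < y i) :
    (Es A k x) ^ (1/(k:ℝ)) + (Es A k y) ^ (1/(k:ℝ))
      ≤ (Es A k (fun i => x i + y i)) ^ (1/(k:ℝ)) := by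
  have hxy : ∀ i ∈ A, 0 < x i + y i := fun i hi => add_pos (hx i hi) (hy i hi)
  set u : ℕ → ℝ := fun j => Es A (j+1) x / Es A j x with hu
  set v : ℕ → ℝ := fun j => Es A (j+1) y / Es A j y with hv
  have hupos : ∀ j ∈ Finset.range k, 0 < u j := fun j hj => by
    have hj' := Finset.mem_range.1 hj
    exact div_pos (Es_pos hx (by omega)) (Es_pos hx (by omega))
  have hvpos : ∀ j ∈ Finset.range k, 0 < v j := fun j hj => by
    have hj' := Finset.mem_range.1 hj
    exact div_pos (Es_pos hy (by omega)) (Es_pos hy (by omega))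
  have hTcard : ((Finset.range k).card : ℝ) = (k : ℝ) := by rw [Finset.card_range]
  have hmah := mahler (Finset.range k) (by simp; omega) u v hupos hvpos
  rw [hTcard] at hmah
  rw [Es_telescope hx k hk, Es_telescope hy k hk, Es_telescope hxy k hk]
  refine le_trans hmah (Real.rpow_le_rpow ?_ ?_ (by positivity))
  · exact Finset.prod_nonneg fun j hj => (add_pos (hupos j hj) (hvpos j hj)).le
  · refine Finset.prod_le_prod (fun j hj => (add_pos (hupos j hj) (hvpos j hj)).le)
      (fun j hj => ?_)
    have hj' := Finset.mem_range.1 hj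
    exact ML j A x y (by omega) hx hy



lemma scalar_concave {p : ℝ} (hp0 : 0 < p) (hp1 : p < 1) {a b l : ℝ}
    (ha : 0 < a) (hb : 0 < b) (hl0 : 0 < l) (hl1 : l < 1) :
    l ^ (1-p) * a ^ p + (1-l) ^ (1-p) * b ^ p ≤ (a + b) ^ p := by
  have hl1' : 0 < 1 - l := by linarith
  have hmem1 : a / l ∈ Set.Ici (0:ℝ) := Set.mem_Ici.2 (by positivity)
  have hmem2 : b / (1-l) ∈ Set.Ici (0:ℝ) := Set.mem_Ici.2 (by positivity)
  have hconc := (Real.concaveOn_rpow hp0.le hp1.le).2 hmem1 hmem2 hl0.le hl1'.le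
    (by ring)
  simp only [smul_eq_mul] at hconc
  have heq : l * (a / l) + (1 - l) * (b / (1 - l)) = a + b := by
    field_simp
  rw [heq] at hconc
  refine le_trans (le_of_eq ?_) hconc
  have e1 : l * (a / l) ^ p = l ^ (1-p) * a ^ p := by
    rw [Real.div_rpow ha.le hl0.le, Real.rpow_sub hl0, Real.rpow_one]
    field_simp
  have e2 : (1-l) * (b / (1-l)) ^ p = (1-l) ^ (1-p) * b ^ p := by
    rw [Real.div_rpow hb.le hl1'.le, Real.rpow_sub hl1', Real.rpow_one]
    field_simp
  rw [e1, e2]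

/-- `(c^k * U)^(1/k) = c * U^(1/k)` for nonnegative `c, U`. -/
lemma pow_mul_rpow {c U : ℝ} (hc : 0 ≤ c) (hU : 0 ≤ U) {k : ℕ} (hk : 1 ≤ k) :
    (c ^ k * U) ^ (1/(k:ℝ)) = c * U ^ (1/(k:ℝ)) := by
  have hk0 : (k:ℝ) ≠ 0 := by positivity
  rw [Real.mul_rpow (by positivity) hU, ← Real.rpow_natCast c k,
    ← Real.rpow_mul hc, mul_one_div, div_self hk0, Real.rpow_one]

lemma g_superadd_weighted {A : Finset ι} {k : ℕ} (hk1 : 1 ≤ k) (hk : k ≤ A.card)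
    {x y : ι → ℝ} (hx : ∀ i ∈ A, 0 < x i) (hy : ∀ i ∈ A, 0 < y i)
    {c d : ℝ} (hc : 0 < c) (hd : 0 < d) :
    c * (Es A k x) ^ (1/(k:ℝ)) + d * (Es A k y) ^ (1/(k:ℝ))
      ≤ (Es A k (fun i => c * x i + d * y i)) ^ (1/(k:ℝ)) := by
  have h := ML_rpow hk1 hk (x := fun i => c * x i) (y := fun i => d * y i)
    (fun i hi => mul_pos hc (hx i hi)) (fun i hi => mul_pos hd (hy i hi))
  rw [Es_homog A k c x, Es_homog A k d y,
    pow_mul_rpow hc.le (Es_nonneg fun i hi => (hx i hi).le) hk1,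
    pow_mul_rpow hd.le (Es_nonneg fun i hi => (hy i hi).le) hk1] at h
  exact h



lemma f_superadd_pos {A : Finset ι} {k : ℕ} (hk1 : 1 ≤ k) (hk : k ≤ A.card)
    {p : ℝ} (hp0 : 0 < p) (hp1 : p < 1)
    {x y : ι → ℝ} (hx : ∀ i ∈ A, 0 < x i) (hy : ∀ i ∈ A, 0 < y i) :
    (Es A k (fun i => x i ^ p)) ^ (1/(p*(k:ℝ))) + (Es A k (fun i => y i ^ p)) ^ (1/(p*(k:ℝ)))
      ≤ (Es A k (fun i => (x i + y i) ^ p)) ^ (1/(p*(k:ℝ))) := by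
  have hk0 : (0:ℝ) < (k:ℝ) := by exact_mod_cast hk1
  have hxp : ∀ i ∈ A, 0 < x i ^ p := fun i hi => Real.rpow_pos_of_pos (hx i hi) p
  have hyp : ∀ i ∈ A, 0 < y i ^ p := fun i hi => Real.rpow_pos_of_pos (hy i hi) p
  have hU : 0 < Es A k (fun i => x i ^ p) := Es_pos hxp hk
  have hV : 0 < Es A k (fun i => y i ^ p) := Es_pos hyp hk
  have hW : 0 < Es A k (fun i => (x i + y i) ^ p) :=
    Es_pos (fun i hi => Real.rpow_pos_of_pos (add_pos (hx i hi) (hy i hi)) p) hk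
  set U := Es A k (fun i => x i ^ p) with hUdef
  set V := Es A k (fun i => y i ^ p) with hVdef
  set W := Es A k (fun i => (x i + y i) ^ p) with hWdef
  set α := U ^ (1/(p*(k:ℝ))) with hαdef
  set β := V ^ (1/(p*(k:ℝ))) with hβdef
  have hα : 0 < α := Real.rpow_pos_of_pos hU _
  have hβ : 0 < β := Real.rpow_pos_of_pos hV _
  have hαβ : 0 < α + β := add_pos hα hβ
  set l := α / (α + β) with hldef
  have hl0 : 0 < l := div_pos hα hαβ
  have hl1 : l < 1 := (div_lt_one hαβ).2 (by linarith)
  have h1l : 1 - l = β / (α + β) := by rw [hldef]; field_simp; ring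
  -- coordinatewise concavity bound
  have hcoord : ∀ i ∈ A,
      l ^ (1-p) * x i ^ p + (1-l) ^ (1-p) * y i ^ p ≤ (x i + y i) ^ p :=
    fun i hi => scalar_concave hp0 hp1 (hx i hi) (hy i hi) hl0 hl1
  -- monotonicity
  have hmono : Es A k (fun i => l ^ (1-p) * x i ^ p + (1-l) ^ (1-p) * y i ^ p) ≤ W := by
    refine Es_mono (fun i hi => ?_) hcoord
    have := hxp i hi; have := hyp i hi
    have h1l0 : 0 < 1 - l := by linarith
    positivity
  -- weighted superadditivity
  have hsup := g_superadd_weighted hk1 hk hxp hyp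
    (c := l ^ (1-p)) (d := (1-l) ^ (1-p))
    (Real.rpow_pos_of_pos hl0 _) (Real.rpow_pos_of_pos (by linarith : (0:ℝ) < 1 - l) _)
  have hmid : (Es A k (fun i => l ^ (1-p) * x i ^ p + (1-l) ^ (1-p) * y i ^ p)) ^ (1/(k:ℝ))
      ≤ W ^ (1/(k:ℝ)) := by
    refine Real.rpow_le_rpow ?_ hmono (by positivity)
    refine Es_nonneg fun i hi => ?_
    have := hxp i hi; have := hyp i hi
    have h1l0 : 0 < 1 - l := by linarith
    positivity
  have hchain : l ^ (1-p) * U ^ (1/(k:ℝ)) + (1-l) ^ (1-p) * V ^ (1/(k:ℝ)) ≤ W ^ (1/(k:ℝ)) :=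
    le_trans hsup hmid
  -- identify U^(1/k) = α^p, V^(1/k) = β^p
  have hexp : 1/(p*(k:ℝ)) * p = 1/(k:ℝ) := by field_simp
  have hUk : U ^ (1/(k:ℝ)) = α ^ p := by
    rw [hαdef, ← Real.rpow_mul hU.le, hexp]
  have hVk : V ^ (1/(k:ℝ)) = β ^ p := by
    rw [hβdef, ← Real.rpow_mul hV.le, hexp]
  rw [hUk, hVk] at hchain
  -- compute LHS = (α+β)^p
  have hlhs : l ^ (1-p) * α ^ p + (1-l) ^ (1-p) * β ^ p = (α + β) ^ p := by
    rw [hldef, h1l, Real.div_rpow hα.le hαβ.le, Real.div_rpow hβ.le hαβ.le]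
    rw [div_mul_eq_mul_div, div_mul_eq_mul_div, ← Real.rpow_add hα, ← Real.rpow_add hβ]
    rw [sub_add_cancel, Real.rpow_one, Real.rpow_one, ← add_div,
      div_eq_iff (ne_of_gt (Real.rpow_pos_of_pos hαβ _)), ← Real.rpow_add hαβ,
      show p + (1-p) = 1 by ring, Real.rpow_one]
  rw [hlhs] at hchain
  -- conclude
  have hfinal : ((α + β) ^ p) ^ (1/p) ≤ (W ^ (1/(k:ℝ))) ^ (1/p) :=
    Real.rpow_le_rpow (by positivity) hchain (by positivity)
  rw [← Real.rpow_mul hαβ.le, mul_one_div, div_self hp0.ne', Real.rpow_one] at hfinal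
  rw [← Real.rpow_mul hW.le] at hfinal
  have : (1:ℝ)/(k:ℝ) * (1/p) = 1/(p*(k:ℝ)) := by field_simp
  rwa [this] at hfinal



open Filter Topology in
lemma tendsto_aux {n k : ℕ} {p : ℝ} (hp0 : 0 < p) (z : Fin n → ℝ) (c : ℝ) :
    Filter.Tendsto
      (fun ε : ℝ => (Es (Finset.univ : Finset (Fin n)) k (fun i => (z i + c*ε) ^ p)) ^ (1/(p*(k:ℝ))))
      (𝓝 0) (𝓝 ((Es Finset.univ k (fun i => z i ^ p)) ^ (1/(p*(k:ℝ))))) := by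
  have h2 : Filter.Tendsto (fun ε : ℝ => Es (Finset.univ : Finset (Fin n)) k (fun i => (z i + c*ε) ^ p))
      (𝓝 0) (𝓝 (Es Finset.univ k (fun i => z i ^ p))) := by
    simp only [Es]
    refine tendsto_finset_sum _ (fun S _ => tendsto_finset_prod _ (fun i _ => ?_))
    have hb : Filter.Tendsto (fun ε : ℝ => z i + c*ε) (𝓝 0) (𝓝 (z i)) := by
      have h := (tendsto_const_nhds : Filter.Tendsto (fun _ : ℝ => z i) (𝓝 (0:ℝ)) (𝓝 (z i))).add
        ((tendsto_id (α := ℝ) (x := 𝓝 (0:ℝ))).const_mul c)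
      simpa using h
    exact ((Real.continuousAt_rpow_const (z i) p (Or.inr hp0.le)).tendsto).comp hb
  exact ((Real.continuousAt_rpow_const _ (1/(p*(k:ℝ))) (Or.inr (by positivity))).tendsto).comp h2

open Filter Topology in
lemma f_superadd {n k : ℕ} (hk1 : 1 ≤ k) (hkn : k ≤ n) {p : ℝ} (hp0 : 0 < p) (hp1 : p < 1)
    {x y : Fin n → ℝ} (hx : ∀ i, 0 ≤ x i) (hy : ∀ i, 0 ≤ y i) :
    (Es Finset.univ k (fun i => x i ^ p)) ^ (1/(p*(k:ℝ)))
      + (Es Finset.univ k (fun i => y i ^ p)) ^ (1/(p*(k:ℝ)))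
      ≤ (Es Finset.univ k (fun i => (x i + y i) ^ p)) ^ (1/(p*(k:ℝ))) := by
  have hcard : k ≤ (Finset.univ : Finset (Fin n)).card := by simpa using hkn
  have ineq : ∀ ε ∈ Set.Ioi (0:ℝ),
      (Es (Finset.univ : Finset (Fin n)) k (fun i => (x i + 1*ε) ^ p)) ^ (1/(p*(k:ℝ)))
        + (Es Finset.univ k (fun i => (y i + 1*ε) ^ p)) ^ (1/(p*(k:ℝ)))
      ≤ (Es Finset.univ k (fun i => ((x i + y i) + 2*ε) ^ p)) ^ (1/(p*(k:ℝ))) := by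
    intro ε hε
    rw [Set.mem_Ioi] at hε
    have h : (Es (Finset.univ : Finset (Fin n)) k (fun i => (x i + 1*ε) ^ p)) ^ (1/(p*(k:ℝ)))
        + (Es Finset.univ k (fun i => (y i + 1*ε) ^ p)) ^ (1/(p*(k:ℝ)))
        ≤ (Es Finset.univ k (fun i => ((x i + 1*ε) + (y i + 1*ε)) ^ p)) ^ (1/(p*(k:ℝ))) :=
      f_superadd_pos hk1 hcard hp0 hp1
        (x := fun i => x i + 1*ε) (y := fun i => y i + 1*ε)
        (fun i _ => by show (0:ℝ) < x i + 1*ε; have := hx i; linarith)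
        (fun i _ => by show (0:ℝ) < y i + 1*ε; have := hy i; linarith)
    have e2 : (fun i => ((x i + 1*ε) + (y i + 1*ε)) ^ p)
        = fun i => ((x i + y i) + 2*ε) ^ p := by
      funext i; congr 1; ring
    rwa [e2] at h
  have tx := (tendsto_aux (n := n) (k := k) hp0 x 1).mono_left
    (nhdsWithin_le_nhds (s := Set.Ioi (0:ℝ)))
  have ty := (tendsto_aux (n := n) (k := k) hp0 y 1).mono_left
    (nhdsWithin_le_nhds (s := Set.Ioi (0:ℝ)))
  have txy := (tendsto_aux (n := n) (k := k) hp0 (fun i => x i + y i) 2).mono_left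
    (nhdsWithin_le_nhds (s := Set.Ioi (0:ℝ)))
  exact le_of_tendsto_of_tendsto (tx.add ty) txy
    (Filter.eventually_of_mem self_mem_nhdsWithin ineq)

lemma f_homog {n k : ℕ} (hk1 : 1 ≤ k) {p : ℝ} (hp0 : 0 < p) {c : ℝ} (hc : 0 ≤ c)
    (z : Fin n → ℝ) (hz : ∀ i, 0 ≤ z i) :
    (Es (Finset.univ : Finset (Fin n)) k (fun i => (c * z i) ^ p)) ^ (1/(p*(k:ℝ)))
      = c * (Es Finset.univ k (fun i => z i ^ p)) ^ (1/(p*(k:ℝ))) := by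
  have hk0 : (0:ℝ) < (k:ℝ) := by exact_mod_cast hk1
  have hpk : p * (k:ℝ) ≠ 0 := by positivity
  have e : (fun i => (c * z i) ^ p) = fun i => c ^ p * z i ^ p :=
    funext fun i => Real.mul_rpow hc (hz i)
  have hE : 0 ≤ Es (Finset.univ : Finset (Fin n)) k (fun i => z i ^ p) :=
    Es_nonneg fun i _ => Real.rpow_nonneg (hz i) p
  rw [e, show Es (Finset.univ : Finset (Fin n)) k (fun i => c ^ p * z i ^ p)
      = (c ^ p) ^ k * Es Finset.univ k (fun i => z i ^ p) from
      Es_homog Finset.univ k (c ^ p) (fun i => z i ^ p)]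
  rw [Real.mul_rpow (by positivity) hE, ← Real.rpow_natCast (c ^ p) k,
    ← Real.rpow_mul hc, ← Real.rpow_mul hc, mul_one_div, div_self hpk, Real.rpow_one]

end EsymmAux


/-- Let `1 ≤ k ≤ n` and `p ∈ (0, 1)`. The function
`x ↦ (e_k(x^p))^(1/(pk))` is concave on the nonnegative orthant; equivalently, for all
nonnegative `x, y`, `(e_k((x+y)^p))^(1/(pk)) ≥ (e_k(x^p))^(1/(pk)) + (e_k(y^p))^(1/(pk))`. -/
theorem esymm_rpow_concave (n k : ℕ) (hk1 : 1 ≤ k) (hkn : k ≤ n)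
    (p : ℝ) (hp : p ∈ Set.Ioo (0 : ℝ) 1) :
    ConcaveOn ℝ {x : Fin n → ℝ | ∀ i, 0 ≤ x i}
      (fun x => (esymm n k (fun i => x i ^ p)) ^ (1 / (p * k))) ∧
    ∀ x y : Fin n → ℝ, (∀ i, 0 ≤ x i) → (∀ i, 0 ≤ y i) →
      (esymm n k (fun i => x i ^ p)) ^ (1 / (p * k)) +
        (esymm n k (fun i => y i ^ p)) ^ (1 / (p * k)) ≤
      (esymm n k (fun i => (x i + y i) ^ p)) ^ (1 / (p * k)) := by
  obtain ⟨hp0, hp1⟩ := hp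
  have hesymm : ∀ z : Fin n → ℝ, esymm n k z = EsymmAux.Es Finset.univ k z := fun z => rfl
  have part2 : ∀ x y : Fin n → ℝ, (∀ i, 0 ≤ x i) → (∀ i, 0 ≤ y i) →
      (esymm n k (fun i => x i ^ p)) ^ (1 / (p * k)) +
        (esymm n k (fun i => y i ^ p)) ^ (1 / (p * k)) ≤
      (esymm n k (fun i => (x i + y i) ^ p)) ^ (1 / (p * k)) := by
    intro x y hx hy
    simpa only [hesymm] using EsymmAux.f_superadd hk1 hkn hp0 hp1 hx hy
  refine ⟨⟨?_, ?_⟩, part2⟩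
  · intro x hx y hy a b ha hb hab i
    have h1 := hx i
    have h2 := hy i
    simp only [Pi.add_apply, Pi.smul_apply, smul_eq_mul]
    positivity
  · intro x hx y hy a b ha hb hab
    have hax : ∀ i, 0 ≤ a * x i := fun i => mul_nonneg ha (hx i)
    have hby : ∀ i, 0 ≤ b * y i := fun i => mul_nonneg hb (hy i)
    have h := EsymmAux.f_superadd (n := n) hk1 hkn hp0 hp1 hax hby
    rw [EsymmAux.f_homog hk1 hp0 ha x hx, EsymmAux.f_homog hk1 hp0 hb y hy] at h
    have e : (fun i : Fin n => ((a • x + b • y) i) ^ p)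
        = fun i => (a * x i + b * y i) ^ p := by
      funext i
      simp [smul_eq_mul]
    show a • (esymm n k fun i => x i ^ p) ^ (1/(p*(k:ℝ)))
        + b • (esymm n k fun i => y i ^ p) ^ (1/(p*(k:ℝ)))
      ≤ (esymm n k fun i => ((a • x + b • y) i) ^ p) ^ (1/(p*(k:ℝ)))
    rw [e]
    simp only [smul_eq_mul, hesymm]
    exact h
end

section
/- For every real p > 0, the multivariate p-parallel sum map x ↦ (x₁^(-p) + x₂^(-p) + ⋯ + xₙ^(-p))^(-1/p) is concave on the positive orthant (0, ∞)ⁿ. -/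
open Finset Real

/-- Reverse Hölder: for positive `x` and simplex weights `w`,
`(∑ xᵢ^(-p))^(-1/p) ≤ ∑ wᵢ^((p+1)/p) xᵢ`. -/
lemma key_holder {n : ℕ} {p : ℝ} (hp : 0 < p) (x w : Fin n → ℝ)
    (hx : ∀ i, 0 < x i) (hw : ∀ i, 0 ≤ w i) (hw1 : ∑ i, w i = 1) :
    (∑ i, x i ^ (-p)) ^ (-1 / p) ≤ ∑ i, w i ^ ((p + 1) / p) * x i := by
  have hpp1 : (0:ℝ) < p + 1 := by linarith
  set A := ∑ i, w i ^ ((p + 1) / p) * x i with hA_def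
  set B := ∑ i, x i ^ (-p) with hB_def
  have hne : (Finset.univ : Finset (Fin n)).Nonempty := by
    by_contra h
    rw [Finset.not_nonempty_iff_eq_empty] at h
    rw [h, Finset.sum_empty] at hw1
    norm_num at hw1
  have hA : 0 ≤ A := by
    apply Finset.sum_nonneg; intro i _
    exact mul_nonneg (rpow_nonneg (hw i) _) (hx i).le
  have hB : 0 < B := by
    apply Finset.sum_pos (fun i _ => rpow_pos_of_pos (hx i) _) hne
  have hq : Real.HolderConjugate ((p + 1) / p) (p + 1) := by
    constructor
    · rw [inv_div, inv_one, ← one_div, ← add_div, div_self hpp1.ne']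
    · exact div_pos hpp1 hp
    · exact hpp1
  have holder := Real.inner_le_Lp_mul_Lq_of_nonneg (s := Finset.univ)
      (f := fun i => (w i ^ ((p + 1) / p) * x i) ^ (p / (p + 1)))
      (g := fun i => (x i ^ (-p)) ^ (1 / (p + 1))) hq
      (fun i _ => rpow_nonneg (mul_nonneg (rpow_nonneg (hw i) _) (hx i).le) _)
      (fun i _ => rpow_nonneg (rpow_nonneg (hx i).le _) _)
  have e1 : ∑ i, (w i ^ ((p + 1) / p) * x i) ^ (p / (p + 1)) *
      (x i ^ (-p)) ^ (1 / (p + 1)) = 1 := by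
    have hterm : ∀ i : Fin n, (w i ^ ((p + 1) / p) * x i) ^ (p / (p + 1)) *
        (x i ^ (-p)) ^ (1 / (p + 1)) = w i := by
      intro i
      have h1 : (p + 1) / p * (p / (p + 1)) = 1 := by field_simp
      have h2 : p / (p + 1) + -p * (1 / (p + 1)) = 0 := by field_simp; ring
      rw [Real.mul_rpow (rpow_nonneg (hw i) _) (hx i).le,
        ← Real.rpow_mul (hw i), ← Real.rpow_mul (hx i).le,
        mul_assoc, ← Real.rpow_add (hx i), h1, h2, Real.rpow_one, Real.rpow_zero, mul_one]
    rw [Finset.sum_congr rfl (fun i _ => hterm i), hw1]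
  have e2 : ∑ i, ((w i ^ ((p + 1) / p) * x i) ^ (p / (p + 1))) ^ ((p + 1) / p) = A := by
    apply Finset.sum_congr rfl
    intro i _
    rw [← Real.rpow_mul (mul_nonneg (rpow_nonneg (hw i) _) (hx i).le)]
    have : p / (p + 1) * ((p + 1) / p) = 1 := by field_simp
    rw [this, Real.rpow_one]
  have e3 : ∑ i, ((x i ^ (-p)) ^ (1 / (p + 1))) ^ (p + 1) = B := by
    apply Finset.sum_congr rfl
    intro i _
    rw [← Real.rpow_mul (rpow_nonneg (hx i).le _)]
    have : 1 / (p + 1) * (p + 1) = 1 := by field_simp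
    rw [this, Real.rpow_one]
  rw [e1, e2, e3] at holder
  -- holder : 1 ≤ A ^ (1 / ((p+1)/p)) * B ^ (1 / (p+1))
  have hinv : 1 / ((p + 1) / p) = p / (p + 1) := by field_simp
  rw [hinv] at holder
  -- raise to the power (p+1)/p
  have hr : (0:ℝ) ≤ (p + 1) / p := by positivity
  have hmain : (1:ℝ) ≤ A * B ^ (1 / p) := by
    have h := Real.rpow_le_rpow zero_le_one holder hr
    rw [Real.one_rpow, Real.mul_rpow (rpow_nonneg hA _) (rpow_nonneg hB.le _),
      ← Real.rpow_mul hA, ← Real.rpow_mul hB.le] at h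
    have h1 : p / (p + 1) * ((p + 1) / p) = 1 := by field_simp
    have h2 : 1 / (p + 1) * ((p + 1) / p) = 1 / p := by field_simp
    rwa [h1, h2, Real.rpow_one] at h
  calc B ^ (-1 / p) = B ^ (-1 / p) * 1 := (mul_one _).symm
    _ ≤ B ^ (-1 / p) * (A * B ^ (1 / p)) := by
        exact mul_le_mul_of_nonneg_left hmain (rpow_nonneg hB.le _)
    _ = A * (B ^ (-1 / p) * B ^ (1 / p)) := by ring
    _ = A := by
        rw [← Real.rpow_add hB, show -1 / p + 1 / p = 0 by ring, Real.rpow_zero, mul_one]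

/-- For every real `p > 0`, the multivariate `p`-parallel sum
`x ↦ (x₁^(-p) + ⋯ + xₙ^(-p))^(-1/p)` is concave on the positive orthant. -/
theorem multivariate_parallel_sum_concave (n : ℕ) (p : ℝ) (hp : 0 < p) :
    ConcaveOn ℝ {x : Fin n → ℝ | ∀ i, 0 < x i}
      (fun x => (∑ i, x i ^ (-p)) ^ (-1 / p)) := by
  have hconv : Convex ℝ {x : Fin n → ℝ | ∀ i, 0 < x i} := by
    have : {x : Fin n → ℝ | ∀ i, 0 < x i} = Set.pi Set.univ (fun _ => Set.Ioi (0:ℝ)) := by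
      ext x; simp [Set.mem_pi]
    rw [this]
    exact convex_pi fun i _ => convex_Ioi 0
  refine ⟨hconv, ?_⟩
  intro x hx y hy a b ha hb hab
  rcases Nat.eq_zero_or_pos n with hn | hn
  · subst hn
    simp only [Finset.univ_eq_empty, Finset.sum_empty]
    rw [Real.zero_rpow (by positivity : -1/p ≠ 0)]
    simp
  · have hz : ∀ i, 0 < (a • x + b • y) i := hconv hx hy ha hb hab
    set z := a • x + b • y with hz_def
    set S := ∑ i, z i ^ (-p) with hS_def
    have hne : (Finset.univ : Finset (Fin n)).Nonempty := by
      rwa [Finset.univ_nonempty_iff, ← Fin.pos_iff_nonempty]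
    have hS : 0 < S := Finset.sum_pos (fun i _ => rpow_pos_of_pos (hz i) _) hne
    set w : Fin n → ℝ := fun i => z i ^ (-p) / S with hw_def
    have hw : ∀ i, 0 ≤ w i := fun i => div_nonneg (rpow_nonneg (hz i).le _) hS.le
    have hw1 : ∑ i, w i = 1 := by
      rw [← Finset.sum_div, ← hS_def, div_self hS.ne']
    -- the linear functional values
    have hwq : ∀ i, w i ^ ((p + 1) / p) = z i ^ (-(p+1)) / S ^ ((p+1)/p) := by
      intro i
      rw [hw_def, Real.div_rpow (rpow_nonneg (hz i).le _) hS.le,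
        ← Real.rpow_mul (hz i).le]
      congr 2
      field_simp
    have heq : ∑ i, w i ^ ((p + 1) / p) * z i = S ^ (-1 / p) := by
      have : ∀ i, w i ^ ((p + 1) / p) * z i = z i ^ (-p) / S ^ ((p+1)/p) := by
        intro i
        rw [hwq i, div_mul_eq_mul_div, ← Real.rpow_add_one (hz i).ne']
        norm_num
      rw [Finset.sum_congr rfl (fun i _ => this i), ← Finset.sum_div, ← hS_def]
      have h1 : S / S ^ ((p+1)/p) = S ^ (1 - (p+1)/p) := by
        rw [Real.rpow_sub hS, Real.rpow_one]
      rw [h1]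
      congr 1
      field_simp
      ring
    have hkx := key_holder hp x w hx hw hw1
    have hky := key_holder hp y w hy hw hw1
    have hsplit : ∑ i, w i ^ ((p + 1) / p) * z i
        = a * ∑ i, w i ^ ((p + 1) / p) * x i + b * ∑ i, w i ^ ((p + 1) / p) * y i := by
      rw [Finset.mul_sum, Finset.mul_sum, ← Finset.sum_add_distrib]
      apply Finset.sum_congr rfl
      intro i _
      simp only [hz_def, Pi.add_apply, Pi.smul_apply, smul_eq_mul]
      ring
    calc a • (∑ i, x i ^ (-p)) ^ (-1 / p) + b • (∑ i, y i ^ (-p)) ^ (-1 / p)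
        ≤ a * ∑ i, w i ^ ((p + 1) / p) * x i + b * ∑ i, w i ^ ((p + 1) / p) * y i := by
          simp only [smul_eq_mul]
          exact add_le_add (mul_le_mul_of_nonneg_left hkx ha)
            (mul_le_mul_of_nonneg_left hky hb)
      _ = ∑ i, w i ^ ((p + 1) / p) * z i := hsplit.symm
      _ = S ^ (-1 / p) := heq
      _ = (∑ i, (a • x + b • y) i ^ (-p)) ^ (-1 / p) := rfl
end

section
/- Let ξ₁, …, ξₙ be independent standard exponential random variables (rate 1). Then for any integer k ≥ 0 and any x ∈ ℝ₊ⁿ, (1/k!) · E[(ξ₁x₁ + ⋯ + ξₙxₙ)^k] = h_k(x), where h_k is the k-th complete homogeneous symmetric polynomial. -/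
open MeasureTheory ProbabilityTheory

/-- The `k`-th complete homogeneous symmetric polynomial of `x ∈ ℝⁿ`:
the sum of all monomials `x_{i₁} x_{i₂} ⋯ x_{i_k}` with `1 ≤ i₁ ≤ ⋯ ≤ i_k ≤ n`. -/
noncomputable def hsymm (n k : ℕ) (x : Fin n → ℝ) : ℝ :=
  ∑ m ∈ (Finset.univ : Finset (Fin n)).sym k, (m.1.map x).prod


section Moments

open Real Set
open scoped NNReal ENNReal

lemma gammaPDFReal_one_one (x : ℝ) :
    gammaPDFReal 1 1 x = if 0 ≤ x then Real.exp (-x) else 0 := by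
  simp [gammaPDFReal, Real.Gamma_one]

lemma expMeasure_one_eq :
    expMeasure 1 = volume.withDensity
      (fun x => ((Real.toNNReal (gammaPDFReal 1 1 x) : ℝ≥0) : ℝ≥0∞)) := rfl

lemma integrableOn_exp_pow (j : ℕ) :
    IntegrableOn (fun t : ℝ => Real.exp (-t) * t ^ j) (Ioi 0) := by
  have h := Real.GammaIntegral_convergent (s := (j : ℝ) + 1) (by positivity)
  simpa [Real.rpow_natCast] using h

lemma smul_density_eq (j : ℕ) (t : ℝ) :
    (Real.toNNReal (gammaPDFReal 1 1 t) : ℝ≥0) • (t ^ j)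
      = Set.indicator (Ici (0:ℝ)) (fun t => Real.exp (-t) * t ^ j) t := by
  have hnn : 0 ≤ gammaPDFReal 1 1 t := gammaPDFReal_nonneg zero_lt_one zero_lt_one t
  rw [NNReal.smul_def, smul_eq_mul, Real.coe_toNNReal _ hnn, gammaPDFReal_one_one]
  by_cases h : 0 ≤ t <;> simp [h, Set.indicator_of_mem, Set.indicator_of_notMem]

lemma exp_integrable_pow (j : ℕ) :
    Integrable (fun t : ℝ => t ^ j) (expMeasure 1) := by
  rw [expMeasure_one_eq,
    integrable_withDensity_iff_integrable_smul
      ((measurable_gammaPDFReal 1 1).real_toNNReal)]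
  have : (fun t : ℝ => (Real.toNNReal (gammaPDFReal 1 1 t) : ℝ≥0) • (t ^ j))
      = Set.indicator (Ici (0:ℝ)) (fun t => Real.exp (-t) * t ^ j) := by
    funext t; exact smul_density_eq j t
  rw [this, integrable_indicator_iff measurableSet_Ici]
  rw [integrableOn_Ici_iff_integrableOn_Ioi]
  exact integrableOn_exp_pow j

lemma exp_integral_pow (j : ℕ) :
    ∫ t, t ^ j ∂(expMeasure 1) = (Nat.factorial j : ℝ) := by
  rw [expMeasure_one_eq,
    integral_withDensity_eq_integral_smul
      ((measurable_gammaPDFReal 1 1).real_toNNReal)]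
  have : (fun t : ℝ => (Real.toNNReal (gammaPDFReal 1 1 t) : ℝ≥0) • (t ^ j))
      = Set.indicator (Ici (0:ℝ)) (fun t => Real.exp (-t) * t ^ j) := by
    funext t; exact smul_density_eq j t
  rw [this, integral_indicator measurableSet_Ici, integral_Ici_eq_integral_Ioi]
  have h := Real.Gamma_eq_integral (s := (j : ℝ) + 1) (by positivity)
  rw [Real.Gamma_nat_eq_factorial] at h
  rw [h]
  congr 1
  funext t
  simp [Real.rpow_natCast, add_sub_cancel_right]

end Moments

lemma hsymm_eq_sum_piAntidiag (n k : ℕ) (x : Fin n → ℝ) :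
    hsymm n k x = ∑ f ∈ Finset.piAntidiag Finset.univ k, ∏ i, x i ^ f i := by
  classical
  have hcount : ∀ (f : Fin n → ℕ) (a : Fin n),
      Multiset.count a (∑ i, f i • ({i} : Multiset (Fin n))) = f a := by
    intro f a
    simp [Multiset.count_sum', Multiset.count_singleton]
  unfold hsymm
  refine Finset.sum_bij' (i := fun m _ => fun a => Multiset.count a (m : Multiset (Fin n)))
    (j := fun f hf => ⟨∑ i, f i • ({i} : Multiset (Fin n)), ?_⟩) ?_ ?_ ?_ ?_ ?_
  · -- card
    rw [← Multiset.sum_count_eq_card (s := Finset.univ) (fun a _ => Finset.mem_univ a)]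
    simp only [hcount]
    exact (Finset.mem_piAntidiag.mp hf).1
  · -- hi
    intro m _
    rw [Finset.mem_piAntidiag]
    refine ⟨?_, fun i _ => Finset.mem_univ i⟩
    rw [Multiset.sum_count_eq_card (fun a _ => Finset.mem_univ a)]
    exact m.2
  · -- hj
    intro f hf
    exact Finset.mem_sym_iff.mpr fun a _ => Finset.mem_univ a
  · -- left inv
    intro m hm
    refine Subtype.ext (Multiset.ext.mpr fun a => ?_)
    exact hcount (fun i => Multiset.count i (m : Multiset (Fin n))) a
  · -- right inv
    intro f hf
    funext a
    exact hcount f a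
  · -- values
    intro m _
    rw [Finset.prod_multiset_map_count]
    refine Finset.prod_subset (Finset.subset_univ _) fun i _ hi => ?_
    rw [Multiset.count_eq_zero_of_notMem (by simpa using hi), pow_zero]

/-- If `ξ₁, …, ξₙ` are independent standard exponential random variables,
then for any integer `k ≥ 0` and any `x ∈ ℝ₊ⁿ`,
`(1/k!) ⬝ E[(ξ₁x₁ + ⋯ + ξₙxₙ)^k] = h_k(x)`. -/
theorem hsymm_expectation_exponential {Ω : Type*} [MeasurableSpace Ω]
    (μ : Measure Ω) [IsProbabilityMeasure μ] (n : ℕ) (ξ : Fin n → Ω → ℝ)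
    (hmeas : ∀ i, Measurable (ξ i))
    (hindep : iIndepFun ξ μ)
    (hdist : ∀ i, μ.map (ξ i) = expMeasure 1)
    (k : ℕ) (x : Fin n → ℝ) (hx : ∀ i, 0 ≤ x i) :
    (1 / (Nat.factorial k : ℝ)) * ∫ ω, (∑ i, ξ i ω * x i) ^ k ∂μ = hsymm n k x := by
  classical
  -- moments of each ξ i
  have hint : ∀ (i : Fin n) (j : ℕ), Integrable (fun ω => ξ i ω ^ j) μ := by
    intro i j
    have h := exp_integrable_pow j
    rw [← hdist i] at h
    exact (integrable_map_measure (h.aestronglyMeasurable) (hmeas i).aemeasurable).mp h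
  have hival : ∀ (i : Fin n) (j : ℕ),
      ∫ ω, ξ i ω ^ j ∂μ = (Nat.factorial j : ℝ) := by
    intro i j
    have h := exp_integral_pow j
    rw [← hdist i, integral_map (hmeas i).aemeasurable
      (Measurable.aestronglyMeasurable (by fun_prop))] at h
    exact h
  -- product moments via independence
  have key : ∀ (kf : Fin n → ℕ) (s : Finset (Fin n)),
      Integrable (fun ω => ∏ i ∈ s, ξ i ω ^ kf i) μ ∧
      ∫ ω, ∏ i ∈ s, ξ i ω ^ kf i ∂μ = ∏ i ∈ s, (Nat.factorial (kf i) : ℝ) := by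
    intro kf
    have hPindep : iIndepFun (fun i ω => ξ i ω ^ kf i) μ :=
      hindep.comp (fun i t => t ^ kf i) (fun i => measurable_id.pow_const (kf i))
    have hPmeas : ∀ i, Measurable (fun ω => ξ i ω ^ kf i) :=
      fun i => (hmeas i).pow_const (kf i)
    intro s
    induction s using Finset.induction_on with
    | empty => simp
    | @insert a s ha ih =>
      have hfin : IndepFun (fun ω => ξ a ω ^ kf a) (∏ j ∈ s, fun ω => ξ j ω ^ kf j) μ :=
        (iIndepFun.indepFun_finset_prod_of_notMem hPindep hPmeas ha).symm
      have heq : (fun ω => ∏ i ∈ insert a s, ξ i ω ^ kf i)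
          = (fun ω => ξ a ω ^ kf a) * (∏ j ∈ s, fun ω => ξ j ω ^ kf j) := by
        funext ω
        simp [Finset.prod_insert ha, Finset.prod_apply]
      have hintprod : Integrable (∏ j ∈ s, fun ω => ξ j ω ^ kf j) μ := by
        have : (∏ j ∈ s, fun ω => ξ j ω ^ kf j) = fun ω => ∏ i ∈ s, ξ i ω ^ kf i := by
          funext ω; simp [Finset.prod_apply]
        rw [this]; exact ih.1
      constructor
      · rw [heq]
        exact hfin.integrable_mul (hint a (kf a)) hintprod
      · rw [show (fun ω => ∏ i ∈ insert a s, ξ i ω ^ kf i)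
            = ((fun ω => ξ a ω ^ kf a) * (∏ j ∈ s, fun ω => ξ j ω ^ kf j)) from heq]
        rw [hfin.integral_mul_eq_mul_integral (hint a (kf a)).aestronglyMeasurable hintprod.aestronglyMeasurable]
        rw [Finset.prod_insert ha]
        congr 1
        · exact hival a (kf a)
        · rw [show (∏ j ∈ s, fun ω => ξ j ω ^ kf j) = fun ω => ∏ i ∈ s, ξ i ω ^ kf i by
            funext ω; simp [Finset.prod_apply]]
          exact ih.2
  -- expand the power
  have expand : (fun ω => (∑ i, ξ i ω * x i) ^ k)
      = fun ω => ∑ f ∈ Finset.piAntidiag (Finset.univ : Finset (Fin n)) k,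
          (Nat.multinomial Finset.univ f : ℝ) *
            ((∏ i, ξ i ω ^ f i) * ∏ i, x i ^ f i) := by
    funext ω
    rw [Finset.sum_pow_eq_sum_piAntidiag]
    refine Finset.sum_congr rfl fun f hf => ?_
    congr 1
    rw [← Finset.prod_mul_distrib]
    exact Finset.prod_congr rfl fun i _ => mul_pow _ _ _
  rw [expand, integral_finset_sum _ (fun f _ => (((key f Finset.univ).1.mul_const _).const_mul _))]
  rw [hsymm_eq_sum_piAntidiag, Finset.mul_sum]
  refine Finset.sum_congr rfl fun f hf => ?_
  rw [MeasureTheory.integral_const_mul, MeasureTheory.integral_mul_const, (key f Finset.univ).2]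
  rw [Finset.mem_piAntidiag] at hf
  have hspec : (Nat.multinomial Finset.univ f : ℝ) * ∏ i, (Nat.factorial (f i) : ℝ)
      = (Nat.factorial k : ℝ) := by
    rw [← Nat.cast_prod, ← Nat.cast_mul, mul_comm, Nat.multinomial_spec, hf.1]
  have hk : (Nat.factorial k : ℝ) ≠ 0 := Nat.cast_ne_zero.mpr (Nat.factorial_ne_zero k)
  rw [← mul_assoc (Nat.multinomial Finset.univ f : ℝ), hspec, ← mul_assoc,
    one_div_mul_cancel hk, one_mul]
end

section
/- Let x, y ∈ ℝ₊ⁿ, let k ≥ 1 be an integer, and let p ≥ 1. Then (h_k((x+y)^p))^(1/(kp)) ≤ (h_k(x^p))^(1/(kp)) + (h_k(y^p))^(1/(kp)). -/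
open MeasureTheory ENNReal Real Set

/-- The exponential distribution on `ℝ`, as a measure. -/
noncomputable def expM : Measure ℝ :=
  (volume.restrict (Set.Ioi (0:ℝ))).withDensity fun t => ENNReal.ofReal (Real.exp (-t))

lemma exp_mul_pow_integrable (m : ℕ) :
    IntegrableOn (fun t : ℝ => Real.exp (-t) * t ^ m) (Set.Ioi 0) := by
  have h := Real.GammaIntegral_convergent (s := (m + 1 : ℝ)) (by positivity)
  refine h.congr_fun ?_ measurableSet_Ioi
  intro t ht
  simp only [add_sub_cancel_right]
  rw [Real.rpow_natCast]

lemma exp_mul_pow_integral (m : ℕ) :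
    ∫ t in Set.Ioi (0:ℝ), Real.exp (-t) * t ^ m = m.factorial := by
  have h := (Real.Gamma_eq_integral (s := (m + 1 : ℝ)) (by positivity)).symm
  have h2 : ∫ t in Set.Ioi (0:ℝ), Real.exp (-t) * t ^ m
      = ∫ t in Set.Ioi (0:ℝ), Real.exp (-t) * t ^ ((m + 1 : ℝ) - 1) := by
    refine setIntegral_congr_fun measurableSet_Ioi fun t ht => ?_
    simp only [add_sub_cancel_right]
    rw [Real.rpow_natCast]
  rw [h2, h]
  rw [show (m + 1 : ℝ) = ((m : ℕ) : ℝ) + 1 by norm_num,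
    Real.Gamma_nat_eq_factorial]

/-- Moments of the exponential distribution: `∫ tᵐ e^{-t} dt = m!`. -/
lemma expM_moment (m : ℕ) :
    ∫⁻ t, ENNReal.ofReal t ^ m ∂expM = (m.factorial : ℝ≥0∞) := by
  have hmeas : Measurable fun t : ℝ => ENNReal.ofReal t ^ m :=
    (ENNReal.measurable_ofReal.comp measurable_id).pow_const m
  rw [expM, lintegral_withDensity_eq_lintegral_mul _ (by fun_prop) hmeas]
  have h1 : ∫⁻ t in Set.Ioi (0:ℝ),
      ((fun t => ENNReal.ofReal (Real.exp (-t))) * fun t => ENNReal.ofReal t ^ m) t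
      = ∫⁻ t in Set.Ioi (0:ℝ), ENNReal.ofReal (Real.exp (-t) * t ^ m) := by
    refine setLIntegral_congr_fun measurableSet_Ioi fun t ht => ?_
    simp only [Pi.mul_apply]
    rw [ENNReal.ofReal_mul (Real.exp_nonneg _), ← ENNReal.ofReal_pow (le_of_lt ht)]
  rw [h1, ← MeasureTheory.ofReal_integral_eq_lintegral_ofReal (exp_mul_pow_integrable m)
    ((ae_restrict_iff' measurableSet_Ioi).2 (Filter.Eventually.of_forall fun t ht =>
      mul_nonneg (Real.exp_nonneg _) (pow_nonneg (le_of_lt ht) m))),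
    exp_mul_pow_integral m, ENNReal.ofReal_natCast]

instance : IsProbabilityMeasure expM := by
  constructor
  have := expM_moment 0
  simpa using this

/-- The Lebesgue integral of a product of coordinate functions against a product measure
factorizes. -/
lemma lintegral_pi_prod (μ : Measure ℝ) [SigmaFinite μ] :
    ∀ (n : ℕ) (g : Fin n → ℝ → ℝ≥0∞), (∀ i, Measurable (g i)) →
    ∫⁻ ω : Fin n → ℝ, ∏ i, g i (ω i) ∂(Measure.pi fun _ => μ) = ∏ i, ∫⁻ t, g i t ∂μ := by
  intro n
  induction n with
  | zero =>
    intro g hg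
    simp [lintegral_const, Measure.pi_univ]
  | succ n ih =>
    intro g hg
    have hmp := (MeasureTheory.measurePreserving_piFinSuccAbove (fun _ : Fin (n+1) => μ) 0).symm
    have hF : Measurable fun ω : Fin (n+1) → ℝ => ∏ i, g i (ω i) :=
      Finset.measurable_prod _ fun i _ => (hg i).comp (measurable_pi_apply i)
    rw [← hmp.lintegral_comp hF]
    have : ∀ q : ℝ × (Fin n → ℝ),
        (∏ i, g i (((MeasurableEquiv.piFinSuccAbove (fun _ : Fin (n+1) => ℝ) 0).symm q) i))
        = g 0 q.1 * ∏ i : Fin n, g i.succ (q.2 i) := by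
      intro q
      rw [Fin.prod_univ_succ]
      have h0 : ((MeasurableEquiv.piFinSuccAbove (fun _ : Fin (n+1) => ℝ) 0).symm q) 0 = q.1 := by
        simp [MeasurableEquiv.piFinSuccAbove]
      have hs : ∀ i : Fin n,
          ((MeasurableEquiv.piFinSuccAbove (fun _ : Fin (n+1) => ℝ) 0).symm q) i.succ = q.2 i := by
        intro i
        simp [MeasurableEquiv.piFinSuccAbove, Fin.succAbove]
      rw [h0]
      simp only [hs]
    simp only [this]
    rw [lintegral_prod_mul (f := g 0) (g := fun ω : Fin n → ℝ => ∏ i : Fin n, g i.succ (ω i))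
      ((hg 0).aemeasurable)
      ((Finset.measurable_prod _ fun i _ => (hg i.succ).comp (measurable_pi_apply i)).aemeasurable)]
    rw [ih (fun i => g i.succ) (fun i => hg i.succ), Fin.prod_univ_succ]

lemma multiset_multinomial_mul_prod_factorial {n k : ℕ} (m : Multiset (Fin n))
    (hm : Multiset.card m = k) :
    m.countPerms * ∏ i : Fin n, (m.count i).factorial = k.factorial := by
  classical
  have hsupp : m.toFinsupp.support = m.toFinset := Multiset.toFinsupp_support m
  have hspec := Nat.multinomial_spec (s := m.toFinset) (f := fun i => m.count i)
  have h1 : ∏ i : Fin n, (m.count i).factorial = ∏ i ∈ m.toFinset, (m.count i).factorial := by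
    refine (Finset.prod_subset (Finset.subset_univ _) fun i _ hi => ?_).symm
    rw [Multiset.count_eq_zero_of_notMem (by simpa using hi)]
    rfl
  have h2 : m.countPerms = Nat.multinomial m.toFinset fun i => m.count i := by
    rw [Multiset.countPerms, Finsupp.multinomial_eq, hsupp]
    exact Nat.multinomial_congr fun a _ => by simp
  have h3 : ∑ i ∈ m.toFinset, m.count i = k := by
    rw [Multiset.toFinset_sum_count_eq, hm]
  rw [h1, h2, mul_comm, hspec, h3]

lemma multiset_prod_map_pow_count {n : ℕ} (m : Multiset (Fin n)) (T : Fin n → ℝ≥0∞) :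
    (m.map T).prod = ∏ i : Fin n, T i ^ m.count i := by
  classical
  rw [Finset.prod_multiset_map_count]
  refine Finset.prod_subset (Finset.subset_univ _) fun i _ hi => ?_
  rw [Multiset.count_eq_zero_of_notMem (by simpa using hi), pow_zero]

/-- The probabilistic representation of the complete homogeneous symmetric polynomial:
if `E_i` are i.i.d. exponential random variables, then `E[(∑ zᵢ Eᵢ)^k] = k! h_k(z)`. -/
lemma key_identity (n k : ℕ) (z : Fin n → ℝ≥0∞) :
    ∫⁻ ω : Fin n → ℝ, (∑ i, z i * ENNReal.ofReal (ω i)) ^ k ∂(Measure.pi fun _ => expM)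
      = (k.factorial : ℝ≥0∞) * ∑ m ∈ (Finset.univ : Finset (Fin n)).sym k, (m.1.map z).prod := by
  classical
  have expand : ∀ ω : Fin n → ℝ, (∑ i, z i * ENNReal.ofReal (ω i)) ^ k
      = ∑ m ∈ (Finset.univ : Finset (Fin n)).sym k,
          (m.1.countPerms : ℝ≥0∞) * (m.1.map z).prod
            * ∏ i, ENNReal.ofReal (ω i) ^ m.1.count i := by
    intro ω
    rw [show (∑ i, z i * ENNReal.ofReal (ω i))
        = Finset.univ.sum (fun i => z i * ENNReal.ofReal (ω i)) from rfl,
      Finset.sum_pow]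
    refine Finset.sum_congr rfl fun m _ => ?_
    rw [Multiset.prod_map_mul,
      multiset_prod_map_pow_count m.1 (fun i => ENNReal.ofReal (ω i)), mul_assoc]
  simp only [expand]
  rw [lintegral_finset_sum]
  · rw [Finset.mul_sum]
    refine Finset.sum_congr rfl fun m hm => ?_
    rw [lintegral_const_mul _ (Finset.measurable_prod _ fun i _ =>
      (((measurable_pi_apply i).ennreal_ofReal).pow_const _)),
      lintegral_pi_prod expM n (fun i t => ENNReal.ofReal t ^ m.1.count i)
        (fun i => ENNReal.measurable_ofReal.pow_const _)]
    have hcard : Multiset.card m.1 = k := m.2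
    calc (m.1.countPerms : ℝ≥0∞) * (m.1.map z).prod
          * ∏ i, ∫⁻ t, ENNReal.ofReal t ^ m.1.count i ∂expM
        = ((m.1.countPerms * ∏ i : Fin n, (m.1.count i).factorial : ℕ) : ℝ≥0∞)
            * (m.1.map z).prod := by
          simp only [expM_moment]
          push_cast
          ring
      _ = (k.factorial : ℝ≥0∞) * (m.1.map z).prod := by
          rw [multiset_multinomial_mul_prod_factorial m.1 hcard]
  · intro m _
    exact Measurable.const_mul (Finset.measurable_prod _ fun i _ =>
      (((measurable_pi_apply i).ennreal_ofReal).pow_const _)) _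

lemma ofReal_multiset_prod {n : ℕ} (f : Fin n → ℝ) (hf : ∀ i, 0 ≤ f i) (m : Multiset (Fin n)) :
    (m.map fun i => ENNReal.ofReal (f i)).prod = ENNReal.ofReal ((m.map f).prod) := by
  induction m using Multiset.induction_on with
  | empty => simp
  | cons a s ih =>
    rw [Multiset.map_cons, Multiset.map_cons, Multiset.prod_cons, Multiset.prod_cons, ih,
      ← ENNReal.ofReal_mul (hf a)]

lemma hsymm_nonneg {n k : ℕ} (f : Fin n → ℝ) (hf : ∀ i, 0 ≤ f i) : 0 ≤ hsymm n k f := by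
  refine Finset.sum_nonneg fun m _ => Multiset.prod_nonneg fun a ha => ?_
  obtain ⟨i, -, rfl⟩ := Multiset.mem_map.1 ha
  exact hf i

lemma ofReal_hsymm {n k : ℕ} (f : Fin n → ℝ) (hf : ∀ i, 0 ≤ f i) :
    (∑ m ∈ (Finset.univ : Finset (Fin n)).sym k,
      ((m.1.map fun i => ENNReal.ofReal (f i)).prod)) = ENNReal.ofReal (hsymm n k f) := by
  rw [hsymm, ENNReal.ofReal_sum_of_nonneg fun m _ => Multiset.prod_nonneg fun a ha => by
    obtain ⟨i, -, rfl⟩ := Multiset.mem_map.1 ha; exact hf i]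
  exact Finset.sum_congr rfl fun m _ => ofReal_multiset_prod f hf m.1

/-- Pointwise (weighted-`ℓ^p`) Minkowski inequality. -/
lemma pt_minkowski {n : ℕ} (x y : Fin n → ℝ) (hx : ∀ i, 0 ≤ x i) (hy : ∀ i, 0 ≤ y i)
    (p : ℝ) (hp : 1 ≤ p) (T : Fin n → ℝ≥0∞) :
    (∑ i, ENNReal.ofReal ((x i + y i) ^ p) * T i) ^ (1/p)
      ≤ (∑ i, ENNReal.ofReal (x i ^ p) * T i) ^ (1/p)
        + (∑ i, ENNReal.ofReal (y i ^ p) * T i) ^ (1/p) := by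
  have hp0 : (0:ℝ) < p := lt_of_lt_of_le one_pos hp
  set a : Fin n → ℝ≥0∞ := fun i => ENNReal.ofReal (x i) * T i ^ (1/p) with ha
  set b : Fin n → ℝ≥0∞ := fun i => ENNReal.ofReal (y i) * T i ^ (1/p) with hb
  have hT : ∀ i, (T i ^ (1/p)) ^ p = T i := fun i => by
    rw [← ENNReal.rpow_mul, one_div_mul_cancel hp0.ne', ENNReal.rpow_one]
  have hab : ∀ i, (a i + b i) ^ p = ENNReal.ofReal ((x i + y i) ^ p) * T i := by
    intro i
    rw [ha, hb]
    simp only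
    rw [← add_mul, ← ENNReal.ofReal_add (hx i) (hy i),
      ENNReal.mul_rpow_of_nonneg _ _ hp0.le, hT i,
      ENNReal.ofReal_rpow_of_nonneg (add_nonneg (hx i) (hy i)) hp0.le]
  have hax : ∀ i, a i ^ p = ENNReal.ofReal (x i ^ p) * T i := fun i => by
    rw [ha]; simp only
    rw [ENNReal.mul_rpow_of_nonneg _ _ hp0.le, hT i,
      ENNReal.ofReal_rpow_of_nonneg (hx i) hp0.le]
  have hby : ∀ i, b i ^ p = ENNReal.ofReal (y i ^ p) * T i := fun i => by
    rw [hb]; simp only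
    rw [ENNReal.mul_rpow_of_nonneg _ _ hp0.le, hT i,
      ENNReal.ofReal_rpow_of_nonneg (hy i) hp0.le]
  have H := ENNReal.Lp_add_le Finset.univ a b hp
  simp only [hab, hax, hby] at H
  exact H

/-- Let `x, y ∈ ℝ₊ⁿ`, `k ≥ 1` an integer and `p ≥ 1`. Then
`(h_k((x+y)^p))^(1/(kp)) ≤ (h_k(x^p))^(1/(kp)) + (h_k(y^p))^(1/(kp))`. -/
theorem hsymm_rpow_subadditive (n : ℕ) (x y : Fin n → ℝ)
    (hx : ∀ i, 0 ≤ x i) (hy : ∀ i, 0 ≤ y i) (k : ℕ) (hk : 1 ≤ k) (p : ℝ) (hp : 1 ≤ p) :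
    (hsymm n k (fun i => (x i + y i) ^ p)) ^ (1 / ((k : ℝ) * p)) ≤
      (hsymm n k (fun i => x i ^ p)) ^ (1 / ((k : ℝ) * p)) +
      (hsymm n k (fun i => y i ^ p)) ^ (1 / ((k : ℝ) * p)) := by
  classical
  have hp0 : (0:ℝ) < p := lt_of_lt_of_le one_pos hp
  have hk1 : (1:ℝ) ≤ (k:ℝ) := by exact_mod_cast hk
  set q : ℝ := (k : ℝ) * p with hqdef
  have hq1 : 1 ≤ q := by nlinarith
  have hq0 : (0:ℝ) < q := lt_of_lt_of_le one_pos hq1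
  -- nonnegativity of the three hsymm values
  have hxyp : ∀ i, 0 ≤ (x i + y i) ^ p := fun i => Real.rpow_nonneg (add_nonneg (hx i) (hy i)) p
  have hxp : ∀ i, 0 ≤ x i ^ p := fun i => Real.rpow_nonneg (hx i) p
  have hyp : ∀ i, 0 ≤ y i ^ p := fun i => Real.rpow_nonneg (hy i) p
  have hA : 0 ≤ hsymm n k (fun i => (x i + y i) ^ p) := hsymm_nonneg _ hxyp
  have hB : 0 ≤ hsymm n k (fun i => x i ^ p) := hsymm_nonneg _ hxp
  have hC : 0 ≤ hsymm n k (fun i => y i ^ p) := hsymm_nonneg _ hyp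
  -- the main inequality in ℝ≥0∞
  have main : (ENNReal.ofReal (hsymm n k (fun i => (x i + y i) ^ p))) ^ (1/q)
      ≤ (ENNReal.ofReal (hsymm n k (fun i => x i ^ p))) ^ (1/q)
        + (ENNReal.ofReal (hsymm n k (fun i => y i ^ p))) ^ (1/q) := by
    set μn := (Measure.pi fun _ : Fin n => expM) with hμn
    set f : (Fin n → ℝ) → ℝ≥0∞ :=
      fun ω => (∑ i, ENNReal.ofReal (x i ^ p) * ENNReal.ofReal (ω i)) ^ (1/p) with hfdef
    set g : (Fin n → ℝ) → ℝ≥0∞ :=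
      fun ω => (∑ i, ENNReal.ofReal (y i ^ p) * ENNReal.ofReal (ω i)) ^ (1/p) with hgdef
    set h : (Fin n → ℝ) → ℝ≥0∞ :=
      fun ω => (∑ i, ENNReal.ofReal ((x i + y i) ^ p) * ENNReal.ofReal (ω i)) ^ (1/p) with hhdef
    have hsum_meas : ∀ c : Fin n → ℝ,
        Measurable fun ω : Fin n → ℝ => ∑ i, ENNReal.ofReal (c i) * ENNReal.ofReal (ω i) :=
      fun c => Finset.measurable_sum _ fun i _ =>
        ((measurable_pi_apply i).ennreal_ofReal.const_mul _)
    have hfm : Measurable f :=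
      (ENNReal.continuous_rpow_const.measurable).comp (hsum_meas _)
    have hgm : Measurable g :=
      (ENNReal.continuous_rpow_const.measurable).comp (hsum_meas _)
    -- rpow exponent juggling : (S^(1/p))^q = S^k
    have hexp : ∀ S : ℝ≥0∞, (S ^ (1/p)) ^ q = S ^ k := by
      intro S
      rw [← ENNReal.rpow_natCast S k, ← ENNReal.rpow_mul]
      congr 1
      field_simp
      rw [hqdef, mul_comm]
    -- the three integrals
    have int_f : ∫⁻ ω, f ω ^ q ∂μn
        = (k.factorial : ℝ≥0∞) * ENNReal.ofReal (hsymm n k (fun i => x i ^ p)) := by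
      simp only [hfdef, hexp]
      rw [key_identity n k fun i => ENNReal.ofReal (x i ^ p), ofReal_hsymm _ hxp]
    have int_g : ∫⁻ ω, g ω ^ q ∂μn
        = (k.factorial : ℝ≥0∞) * ENNReal.ofReal (hsymm n k (fun i => y i ^ p)) := by
      simp only [hgdef, hexp]
      rw [key_identity n k fun i => ENNReal.ofReal (y i ^ p), ofReal_hsymm _ hyp]
    have int_h : ∫⁻ ω, h ω ^ q ∂μn
        = (k.factorial : ℝ≥0∞) * ENNReal.ofReal (hsymm n k (fun i => (x i + y i) ^ p)) := by
      simp only [hhdef, hexp]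
      rw [key_identity n k fun i => ENNReal.ofReal ((x i + y i) ^ p), ofReal_hsymm _ hxyp]
    -- Minkowski
    have hpt : ∀ ω, h ω ≤ f ω + g ω := fun ω => pt_minkowski x y hx hy p hp _
    have step1 : (∫⁻ ω, h ω ^ q ∂μn) ^ (1/q) ≤ (∫⁻ ω, (f ω + g ω) ^ q ∂μn) ^ (1/q) :=
      ENNReal.rpow_le_rpow (lintegral_mono fun ω =>
        ENNReal.rpow_le_rpow (hpt ω) hq0.le) (by positivity)
    have step2 := ENNReal.lintegral_Lp_add_le (p := q) (μ := μn)
      hfm.aemeasurable hgm.aemeasurable hq1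
    have chain : ((k.factorial : ℝ≥0∞) * ENNReal.ofReal
          (hsymm n k (fun i => (x i + y i) ^ p))) ^ (1/q)
        ≤ ((k.factorial : ℝ≥0∞) * ENNReal.ofReal (hsymm n k (fun i => x i ^ p))) ^ (1/q)
          + ((k.factorial : ℝ≥0∞) * ENNReal.ofReal (hsymm n k (fun i => y i ^ p))) ^ (1/q) := by
      rw [← int_f, ← int_g, ← int_h]
      exact le_trans step1 step2
    -- cancel the factor (k!)^(1/q)
    have hfac0 : ((k.factorial : ℝ≥0∞)) ^ (1/q) ≠ 0 := by
      simp [ENNReal.rpow_eq_zero_iff, Nat.factorial_ne_zero]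
    have hfact : ((k.factorial : ℝ≥0∞)) ^ (1/q) ≠ ⊤ :=
      ENNReal.rpow_ne_top_of_nonneg (by positivity) (by simp)
    rw [ENNReal.mul_rpow_of_nonneg _ _ (by positivity : (0:ℝ) ≤ 1/q),
      ENNReal.mul_rpow_of_nonneg _ _ (by positivity : (0:ℝ) ≤ 1/q),
      ENNReal.mul_rpow_of_nonneg _ _ (by positivity : (0:ℝ) ≤ 1/q), ← mul_add] at chain
    exact (ENNReal.mul_le_mul_iff_right hfac0 hfact).1 chain
  -- transfer back to ℝ
  rw [ENNReal.ofReal_rpow_of_nonneg hA (by positivity : (0:ℝ) ≤ 1/q),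
    ENNReal.ofReal_rpow_of_nonneg hB (by positivity : (0:ℝ) ≤ 1/q),
    ENNReal.ofReal_rpow_of_nonneg hC (by positivity : (0:ℝ) ≤ 1/q),
    ← ENNReal.ofReal_add (Real.rpow_nonneg hB _) (Real.rpow_nonneg hC _)] at main
  have := (ENNReal.ofReal_le_ofReal_iff
    (add_nonneg (Real.rpow_nonneg hB _) (Real.rpow_nonneg hC _))).1 main
  exact this
end

section
/- Let x, y ∈ ℝ₊ⁿ, p ≥ 1, and let k ≥ 2 be an integer. Then (h_k((x+y)^p) / h_1((x+y)^p))^(1/(p(k-1))) ≤ (h_k(x^p) / h_1(x^p))^(1/(p(k-1))) + (h_k(y^p) / h_1(y^p))^(1/(p(k-1))), where all quantities are interpreted on vectors with h_1 > 0 (e.g., x, y nonzero). -/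
open MeasureTheory Finset
open scoped ENNReal NNReal

namespace HsymmAux


/-- The exponential distribution on `ℝ` (rate 1), as `exp(-t)dt` on `(0,∞)`. -/
noncomputable def ν : Measure ℝ :=
  (volume.restrict (Set.Ioi 0)).withDensity fun t => ENNReal.ofReal (Real.exp (-t))

lemma integrableOn_moment (c : ℕ) :
    IntegrableOn (fun t : ℝ => Real.exp (-t) * t ^ c) (Set.Ioi 0) volume := by
  have h := Real.GammaIntegral_convergent (s := (c : ℝ) + 1) (by positivity)
  have he : (fun x : ℝ => Real.exp (-x) * x ^ ((c : ℝ) + 1 - 1)) =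
      fun t : ℝ => Real.exp (-t) * t ^ c := by
    funext t
    rw [add_sub_cancel_right, Real.rpow_natCast]
  rwa [he] at h

lemma integral_moment (c : ℕ) :
    ∫ t in Set.Ioi 0, Real.exp (-t) * t ^ c = (c.factorial : ℝ) := by
  have h := Real.Gamma_eq_integral (s := (c : ℝ) + 1) (by positivity)
  have he : (fun x : ℝ => Real.exp (-x) * x ^ ((c : ℝ) + 1 - 1)) =
      fun t : ℝ => Real.exp (-t) * t ^ c := by
    funext t
    rw [add_sub_cancel_right, Real.rpow_natCast]
  rw [← Real.Gamma_nat_eq_factorial, h]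
  exact integral_congr_ae (by rw [he])

lemma moment (c : ℕ) :
    ∫⁻ t, (ENNReal.ofReal t) ^ c ∂ν = ENNReal.ofReal (c.factorial) := by
  rw [ν, lintegral_withDensity_eq_lintegral_mul _ (by fun_prop : Measurable fun t : ℝ => ENNReal.ofReal (Real.exp (-t)))
    (g := fun t => (ENNReal.ofReal t) ^ c) (by measurability)]
  have h1 : ∀ᵐ t ∂(volume.restrict (Set.Ioi 0)),
      ENNReal.ofReal (Real.exp (-t)) * (ENNReal.ofReal t) ^ c
        = ENNReal.ofReal (Real.exp (-t) * t ^ c) := by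
    filter_upwards [ae_restrict_mem measurableSet_Ioi] with t ht
    rw [← ENNReal.ofReal_pow (le_of_lt ht), ← ENNReal.ofReal_mul (Real.exp_nonneg _)]
  calc ∫⁻ t in Set.Ioi 0, ENNReal.ofReal (Real.exp (-t)) * (ENNReal.ofReal t) ^ c
      = ∫⁻ t in Set.Ioi 0, ENNReal.ofReal (Real.exp (-t) * t ^ c) := lintegral_congr_ae h1
    _ = ENNReal.ofReal (∫ t in Set.Ioi 0, Real.exp (-t) * t ^ c) := by
        rw [ofReal_integral_eq_lintegral_ofReal (integrableOn_moment c)]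
        filter_upwards [ae_restrict_mem measurableSet_Ioi] with t ht
        have := Real.exp_nonneg (-t)
        have : (0:ℝ) ≤ t ^ c := pow_nonneg (le_of_lt ht) c
        positivity
    _ = ENNReal.ofReal (c.factorial) := by rw [integral_moment]

instance : IsProbabilityMeasure ν := by
  constructor
  have h := moment 0
  simpa [lintegral_one] using h





lemma lintegral_pi_prod : ∀ (N : ℕ) (g : Fin N → ℝ → ℝ≥0∞), (∀ i, Measurable (g i)) →
    ∫⁻ z : Fin N → ℝ, ∏ i, g i (z i) ∂(Measure.pi fun _ => ν) = ∏ i, ∫⁻ t, g i t ∂ν := by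
  intro N
  induction N with
  | zero =>
      intro g hg
      rw [Measure.pi_of_empty]
      simp
  | succ N ih =>
      intro g hg
      have hmp := (measurePreserving_piFinSuccAbove (fun _ : Fin (N + 1) => ν) 0).symm
      have hF : Measurable fun z : Fin (N + 1) → ℝ => ∏ i, g i (z i) := by
        exact Finset.measurable_prod _ fun i _ => (hg i).comp (measurable_pi_apply i)
      rw [← hmp.lintegral_comp hF]
      have hpt : ∀ q : ℝ × (Fin N → ℝ),
          (∏ i, g i (((MeasurableEquiv.piFinSuccAbove (fun _ => ℝ) 0).symm q) i)) =
          g 0 q.1 * ∏ i : Fin N, g i.succ (q.2 i) := by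
        rintro ⟨t, v⟩
        rw [Fin.prod_univ_succ]
        simp only [MeasurableEquiv.piFinSuccAbove_symm_apply, Fin.insertNthEquiv,
          Equiv.coe_fn_mk, Fin.insertNth_zero, Fin.cons_zero, Fin.cons_succ, Fin.zero_succAbove, cast_eq]
      calc ∫⁻ q : ℝ × (Fin N → ℝ),
              (∏ i, g i (((MeasurableEquiv.piFinSuccAbove (fun _ => ℝ) 0).symm q) i))
                ∂(ν.prod (Measure.pi fun _ => ν))
          = ∫⁻ q : ℝ × (Fin N → ℝ), g 0 q.1 * ∏ i : Fin N, g i.succ (q.2 i)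
                ∂(ν.prod (Measure.pi fun _ => ν)) := lintegral_congr hpt
        _ = (∫⁻ t, g 0 t ∂ν) * ∫⁻ v : Fin N → ℝ, ∏ i : Fin N, g i.succ (v i)
                ∂(Measure.pi fun _ => ν) := by
              exact lintegral_prod_mul (hg 0).aemeasurable
                (Finset.measurable_prod _ fun (i : Fin N) _ =>
                  (hg i.succ).comp (measurable_pi_apply i)).aemeasurable
        _ = ∏ i, ∫⁻ t, g i t ∂ν := by
              rw [ih (fun i => g i.succ) (fun i => hg i.succ), Fin.prod_univ_succ]



lemma multinomial_mul_prod_factorial {n : ℕ} (m : Multiset (Fin n)) :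
    (m.countPerms * ∏ i : Fin n, (m.count i).factorial) = (Multiset.card m).factorial := by
  have h := Nat.multinomial_spec m.toFinset (fun i => m.count i)
  have hprod : ∏ i : Fin n, (m.count i).factorial
      = ∏ i ∈ m.toFinset, (m.count i).factorial := by
    refine (Finset.prod_subset (Finset.subset_univ _) ?_).symm
    intro i _ hi
    rw [Multiset.count_eq_zero.2 fun h' => hi (Multiset.mem_toFinset.2 h'), Nat.factorial_zero]
  have hmult : m.countPerms = Nat.multinomial m.toFinset (fun i => m.count i) := by
    rw [Multiset.countPerms, Finsupp.multinomial_eq, Multiset.toFinsupp_support]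
    exact Nat.multinomial_congr fun i _ => Multiset.toFinsupp_apply m i
  rw [hmult, hprod, mul_comm, h, Multiset.toFinset_sum_count_eq]

lemma ofReal_multiset_prod {n : ℕ} (x : Fin n → ℝ) (hx : ∀ i, 0 ≤ x i)
    (m : Multiset (Fin n)) :
    (m.map fun i => ENNReal.ofReal (x i)).prod = ENNReal.ofReal ((m.map x).prod) := by
  induction m using Multiset.induction_on with
  | empty => simp
  | cons a s ih =>
      have hs : (0 : ℝ) ≤ (s.map x).prod :=
        Multiset.prod_nonneg fun b hb => by
          obtain ⟨i, _, rfl⟩ := Multiset.mem_map.1 hb; exact hx i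
      simp [Multiset.map_cons, Multiset.prod_cons, ih, ENNReal.ofReal_mul (hx a)]

lemma multiset_map_prod_count {n : ℕ} (m : Multiset (Fin n)) (f : Fin n → ℝ≥0∞) :
    (m.map f).prod = ∏ i : Fin n, f i ^ m.count i := by
  rw [Finset.prod_multiset_map_count]
  refine Finset.prod_subset (Finset.subset_univ _) ?_
  intro i _ hi
  rw [Multiset.count_eq_zero.2 fun h' => hi (Multiset.mem_toFinset.2 h'), pow_zero]


noncomputable def S {n : ℕ} (x : Fin n → ℝ) (z : Fin n → ℝ) : ℝ≥0∞ :=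
  ∑ i, ENNReal.ofReal (x i) * ENNReal.ofReal (z i)

noncomputable def μpi (n : ℕ) : Measure (Fin n → ℝ) := Measure.pi fun _ => ν

@[fun_prop]
lemma measurable_S {n : ℕ} (x : Fin n → ℝ) : Measurable (S x) :=
  Finset.measurable_sum _ fun i _ =>
    measurable_const.mul (ENNReal.measurable_ofReal.comp (measurable_pi_apply i))

lemma expansion {n : ℕ} (r : ℕ) (x : Fin n → ℝ) (hx : ∀ i, 0 ≤ x i) (φ : Fin n → ℕ) :
    ∫⁻ z, (S x z) ^ r * ∏ i, (ENNReal.ofReal (z i)) ^ (φ i) ∂(μpi n)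
      = ∑ m ∈ (Finset.univ : Finset (Fin n)).sym r,
          (m.1.countPerms : ℝ≥0∞) * ENNReal.ofReal ((m.1.map x).prod)
            * ∏ i, ENNReal.ofReal (((m.1.count i + φ i).factorial : ℝ)) := by
  have hexp : ∀ z : Fin n → ℝ, (S x z) ^ r * ∏ i, (ENNReal.ofReal (z i)) ^ (φ i)
      = ∑ m ∈ (Finset.univ : Finset (Fin n)).sym r,
          ((m.1.countPerms : ℝ≥0∞) * ENNReal.ofReal ((m.1.map x).prod))
            * ∏ i, (ENNReal.ofReal (z i)) ^ (m.1.count i + φ i) := by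
    intro z
    rw [S, Finset.sum_pow, Finset.sum_mul]
    refine Finset.sum_congr rfl fun m _ => ?_
    rw [Multiset.prod_map_mul, ofReal_multiset_prod x hx, multiset_map_prod_count]
    simp only [pow_add, Finset.prod_mul_distrib]
    ring
  rw [lintegral_congr hexp, lintegral_finset_sum]
  · refine Finset.sum_congr rfl fun m _ => ?_
    have hm : Measurable fun z : Fin n → ℝ =>
        ∏ i, ENNReal.ofReal (z i) ^ (Multiset.count i m.1 + φ i) := by fun_prop
    rw [lintegral_const_mul _ hm]
    rw [μpi, lintegral_pi_prod n
        (fun i t => (ENNReal.ofReal t) ^ (m.1.count i + φ i))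
        (fun i => ENNReal.measurable_ofReal.pow_const _)]
    congr 1
    exact Finset.prod_congr rfl fun i _ => moment _
  · intro m _
    have hm : Measurable fun z : Fin n → ℝ =>
        ∏ i, ENNReal.ofReal (z i) ^ (Multiset.count i m.1 + φ i) := by fun_prop
    exact measurable_const.mul hm

lemma term_eval {n r : ℕ} (m : Sym (Fin n) r) :
    (m.1.countPerms : ℝ≥0∞) * ∏ i, ENNReal.ofReal (((m.1.count i).factorial : ℝ))
      = (r.factorial : ℝ≥0∞) := by
  simp only [ENNReal.ofReal_natCast]
  rw [← Nat.cast_prod, ← Nat.cast_mul, multinomial_mul_prod_factorial, m.2]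

lemma hsymm_nonneg {n k : ℕ} {x : Fin n → ℝ} (hx : ∀ i, 0 ≤ x i) : 0 ≤ hsymm n k x :=
  Finset.sum_nonneg fun m _ => Multiset.prod_nonneg fun b hb => by
    obtain ⟨i, _, rfl⟩ := Multiset.mem_map.1 hb; exact hx i

lemma sum_eval {n : ℕ} (r : ℕ) (x : Fin n → ℝ) (hx : ∀ i, 0 ≤ x i) :
    ∑ m ∈ (Finset.univ : Finset (Fin n)).sym r,
        (m.1.countPerms : ℝ≥0∞) * ENNReal.ofReal ((m.1.map x).prod)
          * ∏ i, ENNReal.ofReal (((m.1.count i).factorial : ℝ))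
      = (r.factorial : ℝ≥0∞) * ENNReal.ofReal (hsymm n r x) := by
  have h : ∀ m ∈ (Finset.univ : Finset (Fin n)).sym r,
      (m.1.countPerms : ℝ≥0∞) * ENNReal.ofReal ((m.1.map x).prod)
          * ∏ i, ENNReal.ofReal (((m.1.count i).factorial : ℝ))
        = (r.factorial : ℝ≥0∞) * ENNReal.ofReal ((m.1.map x).prod) := by
    intro m _
    calc (m.1.countPerms : ℝ≥0∞) * ENNReal.ofReal ((m.1.map x).prod)
          * ∏ i, ENNReal.ofReal (((m.1.count i).factorial : ℝ))
        = ((m.1.countPerms : ℝ≥0∞) * ∏ i, ENNReal.ofReal (((m.1.count i).factorial : ℝ)))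
            * ENNReal.ofReal ((m.1.map x).prod) := by ring
      _ = (r.factorial : ℝ≥0∞) * ENNReal.ofReal ((m.1.map x).prod) := by rw [term_eval]
  rw [Finset.sum_congr rfl h, ← Finset.mul_sum, hsymm,
      ENNReal.ofReal_sum_of_nonneg]
  intro m _
  exact Multiset.prod_nonneg fun b hb => by
    obtain ⟨i, _, rfl⟩ := Multiset.mem_map.1 hb; exact hx i

lemma E1 {n : ℕ} (r : ℕ) (x : Fin n → ℝ) (hx : ∀ i, 0 ≤ x i) :
    ∫⁻ z, (S x z) ^ r ∂(μpi n) = (r.factorial : ℝ≥0∞) * ENNReal.ofReal (hsymm n r x) := by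
  have h := expansion r x hx (fun _ => 0)
  simp only [pow_zero, Finset.prod_const_one, mul_one, add_zero] at h
  rw [h, sum_eval r x hx]

lemma E2 {n : ℕ} (r : ℕ) (x : Fin n → ℝ) (hx : ∀ i, 0 ≤ x i) (j : Fin n) :
    (r.factorial : ℝ≥0∞) * ENNReal.ofReal (hsymm n r x)
      ≤ ∫⁻ z, (S x z) ^ r * ENNReal.ofReal (z j) ∂(μpi n) := by
  have h := expansion r x hx (Pi.single j 1)
  have hI : ∀ z : Fin n → ℝ,
      (∏ i, (ENNReal.ofReal (z i)) ^ (Pi.single j 1 i)) = ENNReal.ofReal (z j) := by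
    intro z
    rw [Finset.prod_eq_single j (fun i _ hij => by rw [Pi.single_eq_of_ne hij, pow_zero])
      (fun h' => absurd (Finset.mem_univ j) h')]
    rw [Pi.single_eq_same, pow_one]
  simp only [hI] at h
  rw [h, ← sum_eval r x hx]
  refine Finset.sum_le_sum fun m _ => ?_
  refine mul_le_mul_right (Finset.prod_le_prod' fun i _ => ?_) _
  exact ENNReal.ofReal_le_ofReal (Nat.cast_le.2 (Nat.factorial_le (Nat.le_add_right _ _)))


lemma hsymm_one {n : ℕ} (x : Fin n → ℝ) : hsymm n 1 x = ∑ i, x i := by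
  have hm : ∀ m ∈ (Finset.univ : Finset (Fin n)).sym 1,
      ((m.1.countPerms : ℝ)) * (m.1.map x).prod = (m.1.map x).prod := by
    intro m _
    have h2 := multinomial_mul_prod_factorial m.1
    rw [m.2] at h2
    have h3 : m.1.countPerms = 1 := by
      rcases Nat.eq_one_of_mul_eq_one_right h2 with h
      exact Nat.eq_one_of_mul_eq_one_right (by rwa [mul_comm] at h2)
    rw [h3]; simp
  have h := Finset.sum_pow (s := (Finset.univ : Finset (Fin n))) x 1
  rw [pow_one] at h
  rw [hsymm, ← Finset.sum_congr rfl hm, ← h]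

lemma hsymm_pos {n k : ℕ} {x : Fin n → ℝ} (hx : ∀ i, 0 ≤ x i) {i0 : Fin n}
    (hi0 : 0 < x i0) : 0 < hsymm n k x := by
  refine Finset.sum_pos' (fun m _ => Multiset.prod_nonneg fun b hb => by
    obtain ⟨i, _, rfl⟩ := Multiset.mem_map.1 hb; exact hx i) ?_
  refine ⟨Sym.replicate k i0, ?_, ?_⟩
  · rw [Finset.mem_sym_iff]; intro a _; exact Finset.mem_univ a
  · show 0 < (Multiset.map x (Multiset.replicate k i0)).prod
    rw [Multiset.map_replicate, Multiset.prod_replicate]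
    exact pow_pos hi0 k

lemma hsymm_smul {n k : ℕ} (c : ℝ) (x : Fin n → ℝ) :
    hsymm n k (fun i => c * x i) = c ^ k * hsymm n k x := by
  rw [hsymm, hsymm, Finset.mul_sum]
  refine Finset.sum_congr rfl fun m _ => ?_
  rw [Multiset.prod_map_mul]
  congr 1
  have : (Multiset.map (fun _ : Fin n => c) m.1) = Multiset.replicate k c := by
    rw [Multiset.map_const', m.2]
  rw [this, Multiset.prod_replicate]

lemma L3 {n k : ℕ} (x : Fin n → ℝ) (hx : ∀ i, 0 ≤ x i) :
    hsymm n (k + 1) x ≤ hsymm n 1 x * hsymm n k x := by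
  classical
  have hne : ∀ m : Sym (Fin n) (k + 1), m.1.toList ≠ [] := by
    intro m h
    have h0 : m.1 = 0 := by rw [← Multiset.coe_toList m.1, h]; rfl
    have hc := m.2
    rw [h0] at hc
    simp at hc
  let j : Sym (Fin n) (k + 1) → Fin n := fun m => m.1.toList.head (hne m)
  have hjmem : ∀ m : Sym (Fin n) (k + 1), j m ∈ m.1 := by
    intro m
    have := List.head_mem (hne m)
    rwa [← Multiset.mem_coe, Multiset.coe_toList] at this
  let e : Sym (Fin n) (k + 1) → Sym (Fin n) k := fun m =>
    ⟨m.1.erase (j m), by rw [Multiset.card_erase_of_mem (hjmem m), m.2]; rfl⟩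
  have hkey : ∀ m : Sym (Fin n) (k + 1), m.1 = j m ::ₘ (e m).1 := fun m =>
    (Multiset.cons_erase (hjmem m)).symm
  let f : Sym (Fin n) (k + 1) → Fin n × Sym (Fin n) k := fun m => (j m, e m)
  have hinj : Set.InjOn f ((Finset.univ : Finset (Fin n)).sym (k + 1)) := by
    intro m1 _ m2 _ hf
    have h1 : j m1 = j m2 := congrArg Prod.fst hf
    have h2 : e m1 = e m2 := congrArg Prod.snd hf
    apply Subtype.ext
    rw [hkey m1, hkey m2, h1, Subtype.ext_iff.1 h2]
  have hterm : ∀ m : Sym (Fin n) (k + 1),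
      (m.1.map x).prod = x (j m) * ((e m).1.map x).prod := by
    intro m
    conv_lhs => rw [hkey m]
    rw [Multiset.map_cons, Multiset.prod_cons]
  calc hsymm n (k + 1) x
      = ∑ m ∈ (Finset.univ : Finset (Fin n)).sym (k + 1),
          (fun q : Fin n × Sym (Fin n) k => x q.1 * (q.2.1.map x).prod) (f m) := by
        exact Finset.sum_congr rfl fun m _ => hterm m
    _ = ∑ q ∈ ((Finset.univ : Finset (Fin n)).sym (k + 1)).image f,
          x q.1 * (q.2.1.map x).prod := (Finset.sum_image
            (g := f)
            (f := fun q : Fin n × Sym (Fin n) k => x q.1 * (Multiset.map x q.2.1).prod)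
            (fun m hm m' hm' h => hinj hm hm' h)).symm
    _ ≤ ∑ q ∈ (Finset.univ : Finset (Fin n)) ×ˢ (Finset.univ : Finset (Fin n)).sym k,
          x q.1 * (q.2.1.map x).prod := by
        refine Finset.sum_le_sum_of_subset_of_nonneg ?_ ?_
        · intro q _; simp [Finset.mem_product]
        · intro q _ _
          exact mul_nonneg (hx q.1) (Multiset.prod_nonneg fun b hb => by
            obtain ⟨i, _, rfl⟩ := Multiset.mem_map.1 hb; exact hx i)
    _ = hsymm n 1 x * hsymm n k x := by
        rw [hsymm_one, hsymm, Finset.sum_mul_sum, Finset.sum_product]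


lemma S_add {n : ℕ} (x y : Fin n → ℝ) (hx : ∀ i, 0 ≤ x i) (hy : ∀ i, 0 ≤ y i)
    (z : Fin n → ℝ) : S (fun i => x i + y i) z = S x z + S y z := by
  rw [S, S, S, ← Finset.sum_add_distrib]
  refine Finset.sum_congr rfl fun i _ => ?_
  rw [ENNReal.ofReal_add (hx i) (hy i), add_mul]

lemma MINK {n k : ℕ} (hk : 1 ≤ k) (x y : Fin n → ℝ)
    (hx : ∀ i, 0 ≤ x i) (hy : ∀ i, 0 ≤ y i) :
    hsymm n k (fun i => x i + y i) ^ (1 / (k : ℝ))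
      ≤ hsymm n k x ^ (1 / (k : ℝ)) + hsymm n k y ^ (1 / (k : ℝ)) := by
  have hk0 : (0:ℝ) < k := by exact_mod_cast hk
  have hkinv : (0:ℝ) ≤ 1 / (k:ℝ) := by positivity
  have hmink := ENNReal.lintegral_Lp_add_le (μ := μpi n)
    (f := S x) (g := S y) (measurable_S x).aemeasurable (measurable_S y).aemeasurable
    (p := (k : ℝ)) (by exact_mod_cast hk)
  have hconv : ∀ (u : Fin n → ℝ) , (∀ i, 0 ≤ u i) →
      (∫⁻ z, (S u z) ^ (k:ℝ) ∂(μpi n)) = (k.factorial : ℝ≥0∞) * ENNReal.ofReal (hsymm n k u) := by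
    intro u hu
    rw [← E1 k u hu]
    refine lintegral_congr fun z => ?_
    rw [← ENNReal.rpow_natCast]
  have hfg : ∀ z, (S x + S y) z = S (fun i => x i + y i) z := by
    intro z
    rw [Pi.add_apply, S_add x y hx hy]
  have hlhs : (∫⁻ z, ((S x + S y) z) ^ (k:ℝ) ∂(μpi n))
      = (k.factorial : ℝ≥0∞) * ENNReal.ofReal (hsymm n k (fun i => x i + y i)) := by
    rw [← hconv _ (fun i => add_nonneg (hx i) (hy i))]
    exact lintegral_congr fun z => by rw [hfg z]
  rw [hlhs, hconv x hx, hconv y hy] at hmink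
  simp only [ENNReal.mul_rpow_of_nonneg _ _ hkinv] at hmink
  set K := ((k.factorial : ℝ≥0∞)) ^ (1/(k:ℝ)) with hK
  have hK0 : K ≠ 0 := by
    refine ne_of_gt (ENNReal.rpow_pos ?_ ?_)
    · exact_mod_cast Nat.pos_of_ne_zero (Nat.factorial_ne_zero k)
    · exact ENNReal.natCast_ne_top _
  have hKtop : K ≠ ⊤ := ENNReal.rpow_ne_top_of_nonneg hkinv (ENNReal.natCast_ne_top _)
  rw [← mul_add] at hmink
  have h2 := (ENNReal.mul_le_mul_iff_right hK0 hKtop).1 hmink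
  have hxy : ∀ i, 0 ≤ x i + y i := fun i => add_nonneg (hx i) (hy i)
  rw [ENNReal.ofReal_rpow_of_nonneg (hsymm_nonneg hxy) hkinv,
      ENNReal.ofReal_rpow_of_nonneg (hsymm_nonneg hx) hkinv,
      ENNReal.ofReal_rpow_of_nonneg (hsymm_nonneg hy) hkinv,
      ← ENNReal.ofReal_add (Real.rpow_nonneg (hsymm_nonneg hx) _)
        (Real.rpow_nonneg (hsymm_nonneg hy) _)] at h2
  exact (ENNReal.ofReal_le_ofReal_iff (add_nonneg
    (Real.rpow_nonneg (hsymm_nonneg hx) _) (Real.rpow_nonneg (hsymm_nonneg hy) _))).1 h2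


lemma pointwise_bin (a b : ℝ≥0∞) (k : ℕ) :
    a ^ (k + 1) + (k + 1 : ℝ≥0∞) * (a ^ k * b) ≤ (a + b) ^ (k + 1) := by
  rw [add_pow]
  have hsub : ({k, k + 1} : Finset ℕ) ⊆ Finset.range (k + 2) := by
    intro i hi
    rcases Finset.mem_insert.1 hi with h | h
    · rw [h]; exact Finset.mem_range.2 (by omega)
    · rw [Finset.mem_singleton.1 h]; exact Finset.mem_range.2 (by omega)
  calc a ^ (k + 1) + (k + 1 : ℝ≥0∞) * (a ^ k * b)
      = ∑ i ∈ ({k, k + 1} : Finset ℕ), a ^ i * b ^ (k + 1 - i) * ((k+1).choose i : ℝ≥0∞) := by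
        rw [Finset.sum_pair (by omega : k ≠ k + 1)]
        simp [Nat.choose_succ_self_right, Nat.sub_self, pow_one]
        ring
    _ ≤ ∑ i ∈ Finset.range (k + 2), a ^ i * b ^ (k + 1 - i) * ((k+1).choose i : ℝ≥0∞) :=
        Finset.sum_le_sum_of_subset hsub

lemma REC {n k : ℕ} (w d : Fin n → ℝ) (hw : ∀ i, 0 ≤ w i) (hd : ∀ i, 0 ≤ d i) :
    hsymm n (k + 1) w + hsymm n k w * hsymm n 1 d
      ≤ hsymm n (k + 1) (fun i => w i + d i) := by
  have hwd : ∀ i, 0 ≤ w i + d i := fun i => add_nonneg (hw i) (hd i)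
  have hmeasSw : Measurable fun z => (S w z) ^ (k + 1) := (measurable_S w).pow_const _
  have step1 : (((k+1).factorial : ℝ≥0∞)) * ENNReal.ofReal (hsymm n (k+1) w)
      + ((k + 1 : ℝ≥0∞)) * ∫⁻ z, (S w z) ^ k * S d z ∂(μpi n)
      ≤ (((k+1).factorial : ℝ≥0∞)) * ENNReal.ofReal (hsymm n (k+1) (fun i => w i + d i)) := by
    rw [← E1 (k+1) _ hwd, ← E1 (k+1) w hw]
    have hpt : ∀ z, (S w z) ^ (k+1) + (k + 1 : ℝ≥0∞) * ((S w z) ^ k * S d z)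
        ≤ (S (fun i => w i + d i) z) ^ (k + 1) := by
      intro z
      rw [S_add w d hw hd]
      exact pointwise_bin _ _ k
    calc (∫⁻ z, (S w z) ^ (k+1) ∂(μpi n))
          + (k + 1 : ℝ≥0∞) * ∫⁻ z, (S w z) ^ k * S d z ∂(μpi n)
        = ∫⁻ z, ((S w z) ^ (k+1) + (k + 1 : ℝ≥0∞) * ((S w z) ^ k * S d z)) ∂(μpi n) := by
          rw [lintegral_add_left hmeasSw, lintegral_const_mul _ (f := fun z => S w z ^ k * S d z)
            (((measurable_S w).pow_const _).mul (measurable_S d))]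
      _ ≤ ∫⁻ z, (S (fun i => w i + d i) z) ^ (k + 1) ∂(μpi n) := lintegral_mono hpt
  have step2 : ((k.factorial : ℝ≥0∞)) * ENNReal.ofReal (hsymm n k w)
        * ENNReal.ofReal (hsymm n 1 d)
      ≤ ∫⁻ z, (S w z) ^ k * S d z ∂(μpi n) := by
    have hrw : ∀ z, (S w z) ^ k * S d z
        = ∑ j, ENNReal.ofReal (d j) * ((S w z) ^ k * ENNReal.ofReal (z j)) := by
      intro z
      simp only [S, Finset.mul_sum]
      exact Finset.sum_congr rfl fun j _ => by ring
    rw [lintegral_congr hrw, lintegral_finset_sum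
      (f := fun (j : Fin n) (z : Fin n → ℝ) =>
        ENNReal.ofReal (d j) * ((S w z) ^ k * ENNReal.ofReal (z j))) _
      (fun j _ => by fun_prop)]
    have hj : ∀ j : Fin n, ENNReal.ofReal (d j) *
        (((k.factorial : ℝ≥0∞)) * ENNReal.ofReal (hsymm n k w))
        ≤ ∫⁻ z, ENNReal.ofReal (d j) * ((S w z) ^ k * ENNReal.ofReal (z j)) ∂(μpi n) := by
      intro j
      rw [lintegral_const_mul _
        (show Measurable fun z : Fin n → ℝ => (S w z) ^ k * ENNReal.ofReal (z j) by fun_prop)]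
      exact mul_le_mul_right (E2 k w hw j) _
    calc ((k.factorial : ℝ≥0∞)) * ENNReal.ofReal (hsymm n k w) * ENNReal.ofReal (hsymm n 1 d)
        = ∑ j, ENNReal.ofReal (d j) *
            (((k.factorial : ℝ≥0∞)) * ENNReal.ofReal (hsymm n k w)) := by
          rw [hsymm_one, ENNReal.ofReal_sum_of_nonneg (fun j _ => hd j), ← Finset.sum_mul]
          ring
      _ ≤ _ := Finset.sum_le_sum fun j _ => hj j
  -- combine
  have hfac : (((k+1).factorial : ℝ≥0∞)) = ((k + 1 : ℕ) : ℝ≥0∞) * ((k.factorial : ℝ≥0∞)) := by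
    rw [← Nat.cast_mul, Nat.factorial_succ]
  have hcomb : (((k+1).factorial : ℝ≥0∞)) *
      (ENNReal.ofReal (hsymm n (k+1) w) + ENNReal.ofReal (hsymm n k w * hsymm n 1 d))
      ≤ (((k+1).factorial : ℝ≥0∞)) * ENNReal.ofReal (hsymm n (k+1) (fun i => w i + d i)) := by
    refine le_trans ?_ step1
    rw [mul_add]
    refine add_le_add_right ?_ _
    rw [ENNReal.ofReal_mul (hsymm_nonneg hw), hfac]
    have hcast : ((k + 1 : ℕ) : ℝ≥0∞) = (k + 1 : ℝ≥0∞) := by push_cast; ring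
    rw [hcast]
    calc (k + 1 : ℝ≥0∞) * (k.factorial : ℝ≥0∞) *
          (ENNReal.ofReal (hsymm n k w) * ENNReal.ofReal (hsymm n 1 d))
        = (k + 1 : ℝ≥0∞) * ((k.factorial : ℝ≥0∞) * ENNReal.ofReal (hsymm n k w)
            * ENNReal.ofReal (hsymm n 1 d)) := by ring
      _ ≤ (k + 1 : ℝ≥0∞) * ∫⁻ z, (S w z) ^ k * S d z ∂(μpi n) :=
          mul_le_mul_right step2 _
  have hne0 : (((k+1).factorial : ℝ≥0∞)) ≠ 0 := by
    exact_mod_cast Nat.factorial_ne_zero (k+1)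
  have hnetop : (((k+1).factorial : ℝ≥0∞)) ≠ ⊤ := ENNReal.natCast_ne_top _
  have h3 := (ENNReal.mul_le_mul_iff_right hne0 hnetop).1 hcomb
  rw [← ENNReal.ofReal_add (hsymm_nonneg hw) (mul_nonneg (hsymm_nonneg hw)
    (hsymm_nonneg hd))] at h3
  exact (ENNReal.ofReal_le_ofReal_iff (hsymm_nonneg hwd)).1 h3


lemma CONV {a b θ q : ℝ} (ha : 0 ≤ a) (hb : 0 ≤ b) (hθ : 0 < θ) (hθ1 : θ < 1)
    (hq : 1 ≤ q) : (a + b) ^ q ≤ θ ^ (1 - q) * a ^ q + (1 - θ) ^ (1 - q) * b ^ q := by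
  have hμ : 0 < 1 - θ := by linarith
  have h := Real.rpow_arith_mean_le_arith_mean_rpow Finset.univ
    ![θ, 1 - θ] ![a / θ, b / (1 - θ)]
    (by intro i _; fin_cases i <;> simp <;> linarith)
    (by simp [Fin.sum_univ_two])
    (by intro i _; fin_cases i <;> simp <;> positivity) hq
  simp only [Fin.sum_univ_two, Matrix.cons_val_zero, Matrix.cons_val_one, Matrix.head_cons] at h
  have h1 : θ * (a / θ) = a := by field_simp
  have h2 : (1 - θ) * (b / (1 - θ)) = b := by field_simp
  rw [h1, h2] at h
  refine le_trans h (le_of_eq ?_)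
  rw [Real.div_rpow ha hθ.le, Real.div_rpow hb hμ.le,
      Real.rpow_sub hθ, Real.rpow_sub hμ, Real.rpow_one, Real.rpow_one]
  have hθq : θ ^ q ≠ 0 := ne_of_gt (Real.rpow_pos_of_pos hθ q)
  have hμq : (1 - θ) ^ q ≠ 0 := ne_of_gt (Real.rpow_pos_of_pos hμ q)
  field_simp

lemma theta_mink {n k : ℕ} (hk : 1 ≤ k) (r s : Fin n → ℝ)
    (hr : ∀ i, 0 ≤ r i) (hs : ∀ i, 0 ≤ s i) {θ : ℝ} (hθ : 0 < θ) (hθ1 : θ < 1) :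
    hsymm n k (fun i => r i + s i)
      ≤ θ ^ (1 - (k:ℝ)) * hsymm n k r + (1 - θ) ^ (1 - (k:ℝ)) * hsymm n k s := by
  have hk0 : (0:ℝ) < k := by exact_mod_cast hk
  have hkne : (k:ℝ) ≠ 0 := ne_of_gt hk0
  have hid : ∀ t : ℝ, 0 ≤ t → (t ^ (1/(k:ℝ))) ^ ((k:ℝ)) = t := by
    intro t ht
    rw [← Real.rpow_mul ht, one_div_mul_cancel hkne, Real.rpow_one]
  have hm := MINK hk r s hr hs
  have hrs : ∀ i, 0 ≤ r i + s i := fun i => add_nonneg (hr i) (hs i)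
  calc hsymm n k (fun i => r i + s i)
      = ((hsymm n k (fun i => r i + s i)) ^ (1/(k:ℝ))) ^ ((k:ℝ)) :=
        (hid _ (hsymm_nonneg hrs)).symm
    _ ≤ ((hsymm n k r) ^ (1/(k:ℝ)) + (hsymm n k s) ^ (1/(k:ℝ))) ^ ((k:ℝ)) :=
        Real.rpow_le_rpow (Real.rpow_nonneg (hsymm_nonneg hrs) _) hm hk0.le
    _ ≤ θ ^ (1 - (k:ℝ)) * ((hsymm n k r) ^ (1/(k:ℝ))) ^ ((k:ℝ))
          + (1 - θ) ^ (1 - (k:ℝ)) * ((hsymm n k s) ^ (1/(k:ℝ))) ^ ((k:ℝ)) :=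
        CONV (Real.rpow_nonneg (hsymm_nonneg hr) _)
          (Real.rpow_nonneg (hsymm_nonneg hs) _) hθ hθ1 (by exact_mod_cast hk)
    _ = θ ^ (1 - (k:ℝ)) * hsymm n k r + (1 - θ) ^ (1 - (k:ℝ)) * hsymm n k s := by
        rw [hid _ (hsymm_nonneg hr), hid _ (hsymm_nonneg hs)]

lemma scalar_id {A B p k' P : ℝ} (hA : 0 < A) (hB : 0 < B) (k : ℕ)
    (hk' : (k:ℝ) = k') (hP : P = p * (k' - 1)) :
    (A/(A+B)) ^ (1 - k') * ((A/(A+B)) ^ (1-p)) ^ k * A ^ P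
      = (A+B) ^ P * (A/(A+B)) ^ (1-p) := by
  have hAB : 0 < A + B := by linarith
  have hl : 0 < A / (A + B) := div_pos hA hAB
  have e1 : ((A/(A+B)) ^ (1-p)) ^ k = (A/(A+B)) ^ ((1-p) * k') := by
    rw [← Real.rpow_natCast ((A/(A+B)) ^ (1-p)) k, ← Real.rpow_mul hl.le, hk']
  have e2 : (1 - k') + (1-p) * k' = (1-p) + -P := by rw [hP]; ring
  rw [e1, ← Real.rpow_add hl, e2, Real.rpow_add hl, Real.rpow_neg hl.le]
  rw [show (A/(A+B)) ^ P = A ^ P / (A+B) ^ P from Real.div_rpow hA.le hAB.le P]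
  have h1 : (0:ℝ) < A ^ P := Real.rpow_pos_of_pos hA P
  have h2 : (0:ℝ) < (A+B) ^ P := Real.rpow_pos_of_pos hAB P
  field_simp

end HsymmAux


/-- Let `x, y ∈ ℝ₊ⁿ` be nonzero, `p ≥ 1`, and `k ≥ 2` an integer. Then
`(h_k((x+y)^p)/h_1((x+y)^p))^(1/(p(k-1))) ≤ (h_k(x^p)/h_1(x^p))^(1/(p(k-1))) + (h_k(y^p)/h_1(y^p))^(1/(p(k-1)))`. -/
theorem hsymm_ratio_rpow_subadditive (n : ℕ) (x y : Fin n → ℝ)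
    (hx : ∀ i, 0 ≤ x i) (hy : ∀ i, 0 ≤ y i) (hx0 : x ≠ 0) (hy0 : y ≠ 0)
    (p : ℝ) (hp : 1 ≤ p) (k : ℕ) (hk : 2 ≤ k) :
    (hsymm n k (fun i => (x i + y i) ^ p) /
        hsymm n 1 (fun i => (x i + y i) ^ p)) ^ (1 / (p * ((k : ℝ) - 1))) ≤
      (hsymm n k (fun i => x i ^ p) /
          hsymm n 1 (fun i => x i ^ p)) ^ (1 / (p * ((k : ℝ) - 1))) +
      (hsymm n k (fun i => y i ^ p) /
          hsymm n 1 (fun i => y i ^ p)) ^ (1 / (p * ((k : ℝ) - 1))) := by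
  classical
  obtain ⟨i0, hxi0⟩ : ∃ i, 0 < x i := by
    obtain ⟨i, hi⟩ := Function.ne_iff.1 hx0
    exact ⟨i, lt_of_le_of_ne (hx i) (Ne.symm hi)⟩
  obtain ⟨j0, hyj0⟩ : ∃ i, 0 < y i := by
    obtain ⟨i, hi⟩ := Function.ne_iff.1 hy0
    exact ⟨i, lt_of_le_of_ne (hy i) (Ne.symm hi)⟩
  have hp0 : 0 < p := lt_of_lt_of_le one_pos hp
  have hk2R : (2:ℝ) ≤ (k:ℝ) := by exact_mod_cast hk
  have hkR : (0:ℝ) < (k:ℝ) - 1 := by linarith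
  set u := fun i => x i ^ p with hu_def
  set v := fun i => y i ^ p with hv_def
  set w := fun i => (x i + y i) ^ p with hw_def
  have hu : ∀ i, 0 ≤ u i := fun i => Real.rpow_nonneg (hx i) p
  have hv : ∀ i, 0 ≤ v i := fun i => Real.rpow_nonneg (hy i) p
  have hw : ∀ i, 0 ≤ w i := fun i => Real.rpow_nonneg (add_nonneg (hx i) (hy i)) p
  have hui0 : 0 < u i0 := Real.rpow_pos_of_pos hxi0 p
  have hvj0 : 0 < v j0 := Real.rpow_pos_of_pos hyj0 p
  have hwi0 : 0 < w i0 :=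
    Real.rpow_pos_of_pos (add_pos_of_pos_of_nonneg hxi0 (hy i0)) p
  have h1u : 0 < hsymm n 1 u := HsymmAux.hsymm_pos hu hui0
  have hku : 0 < hsymm n k u := HsymmAux.hsymm_pos hu hui0
  have h1v : 0 < hsymm n 1 v := HsymmAux.hsymm_pos hv hvj0
  have hkv : 0 < hsymm n k v := HsymmAux.hsymm_pos hv hvj0
  have h1w : 0 < hsymm n 1 w := HsymmAux.hsymm_pos hw hwi0
  set P := p * ((k:ℝ) - 1) with hP_def
  have hPpos : 0 < P := mul_pos hp0 hkR
  set e := 1 / P with he_def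
  have hepos : 0 < e := by positivity
  set A := (hsymm n k u / hsymm n 1 u) ^ e with hA_def
  set B := (hsymm n k v / hsymm n 1 v) ^ e with hB_def
  have hA : 0 < A := Real.rpow_pos_of_pos (div_pos hku h1u) e
  have hB : 0 < B := Real.rpow_pos_of_pos (div_pos hkv h1v) e
  have hAB : 0 < A + B := by linarith
  have heP : e * P = 1 := by
    rw [he_def]; field_simp
  have hA_pow : A ^ P = hsymm n k u / hsymm n 1 u := by
    rw [hA_def, ← Real.rpow_mul (div_pos hku h1u).le, heP, Real.rpow_one]
  have hB_pow : B ^ P = hsymm n k v / hsymm n 1 v := by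
    rw [hB_def, ← Real.rpow_mul (div_pos hkv h1v).le, heP, Real.rpow_one]
  set l := A / (A + B) with hl_def
  have hl0 : 0 < l := div_pos hA hAB
  have hl1 : l < 1 := (div_lt_one hAB).2 (by linarith)
  have hml : 1 - l = B / (A + B) := by
    rw [hl_def]; field_simp; ring
  set r := fun i => l ^ (1-p) * u i with hr_def
  set s := fun i => (1 - l) ^ (1-p) * v i with hs_def
  have hr : ∀ i, 0 ≤ r i := fun i =>
    mul_nonneg (Real.rpow_nonneg hl0.le _) (hu i)
  have hs : ∀ i, 0 ≤ s i := fun i =>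
    mul_nonneg (Real.rpow_nonneg (by linarith : (0:ℝ) ≤ 1 - l) _) (hv i)
  set z := fun i => r i + s i with hz_def
  have hwz : ∀ i, w i ≤ z i := by
    intro i
    have h := HsymmAux.CONV (hx i) (hy i) hl0 hl1 hp
    exact h
  set d := fun i => z i - w i with hd_def
  have hd : ∀ i, 0 ≤ d i := fun i => sub_nonneg.2 (hwz i)
  have hzd : z = fun i => w i + d i := funext fun i => by rw [hd_def]; ring
  obtain ⟨K, hKk⟩ : ∃ K, k = K + 1 := ⟨k - 1, by omega⟩
  have hREC := HsymmAux.REC (k := K) w d hw hd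
  rw [← hKk, ← hzd] at hREC
  have hL3 := HsymmAux.L3 (k := K) w hw
  rw [← hKk] at hL3
  have h1z_split : hsymm n 1 z = hsymm n 1 w + hsymm n 1 d := by
    simp only [HsymmAux.hsymm_one]
    rw [← Finset.sum_add_distrib]
    refine Finset.sum_congr rfl fun i _ => ?_
    rw [hd_def]; ring
  have h1d : 0 ≤ hsymm n 1 d := HsymmAux.hsymm_nonneg hd
  have hKw : 0 ≤ hsymm n K w := HsymmAux.hsymm_nonneg hw
  have hkw0 : 0 ≤ hsymm n k w := HsymmAux.hsymm_nonneg hw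
  have hcross : hsymm n k w * hsymm n 1 z ≤ hsymm n k z * hsymm n 1 w := by
    have h1 : hsymm n k w * hsymm n 1 d ≤ (hsymm n 1 w * hsymm n K w) * hsymm n 1 d :=
      mul_le_mul_of_nonneg_right hL3 h1d
    calc hsymm n k w * hsymm n 1 z
        = hsymm n k w * hsymm n 1 w + hsymm n k w * hsymm n 1 d := by
          rw [h1z_split]; ring
      _ ≤ hsymm n k w * hsymm n 1 w + hsymm n 1 w * hsymm n K w * hsymm n 1 d := by
          linarith
      _ = (hsymm n k w + hsymm n K w * hsymm n 1 d) * hsymm n 1 w := by ring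
      _ ≤ hsymm n k z * hsymm n 1 w := mul_le_mul_of_nonneg_right hREC h1w.le
  -- step 3
  have hθm := HsymmAux.theta_mink (n := n) (k := k) (by omega) r s hr hs hl0 hl1
  rw [← hz_def] at hθm
  have hsmul_r : hsymm n k r = (l ^ (1-p)) ^ k * hsymm n k u :=
    HsymmAux.hsymm_smul _ _
  have hsmul_s : hsymm n k s = ((1 - l) ^ (1-p)) ^ k * hsymm n k v :=
    HsymmAux.hsymm_smul _ _
  have hku_eq : hsymm n k u = A ^ P * hsymm n 1 u := by
    rw [hA_pow]; field_simp
  have hkv_eq : hsymm n k v = B ^ P * hsymm n 1 v := by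
    rw [hB_pow]; field_simp
  have hidA := HsymmAux.scalar_id hA hB k rfl hP_def
  rw [← hl_def] at hidA
  have hidB := HsymmAux.scalar_id hB hA k rfl hP_def
  rw [show B + A = A + B from add_comm B A] at hidB
  rw [← hml] at hidB
  have hcoefA : l ^ (1 - (k:ℝ)) * hsymm n k r = (A+B) ^ P * (l ^ (1-p) * hsymm n 1 u) := by
    rw [hsmul_r, hku_eq]
    linear_combination (hsymm n 1 u) * hidA
  have hcoefB : (1 - l) ^ (1 - (k:ℝ)) * hsymm n k s
      = (A+B) ^ P * ((1 - l) ^ (1-p) * hsymm n 1 v) := by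
    rw [hsmul_s, hkv_eq]
    linear_combination (hsymm n 1 v) * hidB
  have h1z_eq : hsymm n 1 z = l ^ (1-p) * hsymm n 1 u + (1 - l) ^ (1-p) * hsymm n 1 v := by
    simp only [HsymmAux.hsymm_one]
    rw [Finset.mul_sum, Finset.mul_sum, ← Finset.sum_add_distrib]
  have hstep3 : hsymm n k z ≤ (A+B) ^ P * hsymm n 1 z := by
    calc hsymm n k z
        ≤ l ^ (1-(k:ℝ)) * hsymm n k r + (1 - l) ^ (1-(k:ℝ)) * hsymm n k s := hθm
      _ = (A+B) ^ P * (l ^ (1-p) * hsymm n 1 u)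
            + (A+B) ^ P * ((1 - l) ^ (1-p) * hsymm n 1 v) := by
          rw [hcoefA, hcoefB]
      _ = (A+B) ^ P * hsymm n 1 z := by rw [h1z_eq]; ring
  have h1zpos : 0 < hsymm n 1 z := by
    rw [h1z_split]; linarith
  have hkz_w : hsymm n k w ≤ (A+B) ^ P * hsymm n 1 w := by
    have h2 : hsymm n k w * hsymm n 1 z ≤ ((A+B) ^ P * hsymm n 1 w) * hsymm n 1 z := by
      calc hsymm n k w * hsymm n 1 z ≤ hsymm n k z * hsymm n 1 w := hcross
        _ ≤ ((A+B) ^ P * hsymm n 1 z) * hsymm n 1 w :=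
            mul_le_mul_of_nonneg_right hstep3 h1w.le
        _ = ((A+B) ^ P * hsymm n 1 w) * hsymm n 1 z := by ring
    exact le_of_mul_le_mul_right h2 h1zpos
  have hfrac : hsymm n k w / hsymm n 1 w ≤ (A+B) ^ P := by
    rw [div_le_iff₀ h1w]
    linarith
  calc (hsymm n k w / hsymm n 1 w) ^ e
      ≤ ((A+B) ^ P) ^ e :=
        Real.rpow_le_rpow (div_nonneg hkw0 h1w.le) hfrac hepos.le
    _ = A + B := by
        rw [← Real.rpow_mul hAB.le]
        rw [show P * e = 1 by rw [mul_comm]; exact heP]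
        exact Real.rpow_one _
end

section
/- Let a, b, c, d ≥ 0 (with the denominators positive), p ≥ 1, and let k ≥ 2 be an integer. Then (((a^p + b^p)^k + (c^p + d^p)^k) / ((a+b)^p + (c+d)^p))^(1/(p(k-1))) ≤ ((a^(pk) + c^(pk)) / (a^p + c^p))^(1/(p(k-1))) + ((b^(pk) + d^(pk)) / (b^p + d^p))^(1/(p(k-1))). -/
open Real Finset NNReal

lemma my_rpow_superadd {a b p : ℝ} (ha : 0 ≤ a) (hb : 0 ≤ b) (hp : 1 ≤ p) :
    a ^ p + b ^ p ≤ (a + b) ^ p := by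
  have h := NNReal.add_rpow_le_rpow_add (⟨a, ha⟩ : ℝ≥0) (⟨b, hb⟩ : ℝ≥0) hp
  exact_mod_cast h

lemma my_rpow_subadd {B C p : ℝ} (hB : 0 ≤ B) (hC : 0 ≤ C) (hp : 1 ≤ p) :
    (B + C) ^ (1 / p) ≤ B ^ (1 / p) + C ^ (1 / p) := by
  have hp0 : (0:ℝ) < p := lt_of_lt_of_le one_pos hp
  lift B to ℝ≥0 using hB with B'
  lift C to ℝ≥0 using hC with C'
  have h := NNReal.rpow_add_rpow_le_add (B' ^ (1 / p)) (C' ^ (1 / p)) hp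
  rw [← NNReal.rpow_mul, ← NNReal.rpow_mul, one_div, inv_mul_cancel₀ hp0.ne',
    NNReal.rpow_one, NNReal.rpow_one] at h
  rw [one_div]
  exact_mod_cast h

lemma my_radon2 {b c X Y q : ℝ} (hb : 0 ≤ b) (hc : 0 ≤ c) (hX : 0 < X) (hY : 0 < Y)
    (hq : 1 ≤ q) :
    (b + c) ^ q / (X + Y) ^ (q - 1) ≤ b ^ q / X ^ (q - 1) + c ^ q / Y ^ (q - 1) := by
  have hq0 : (0:ℝ) < q := lt_of_lt_of_le one_pos hq
  have h := Real.inner_le_weight_mul_Lp_of_nonneg Finset.univ hq ![X, Y] ![b / X, c / Y]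
    (by intro i; fin_cases i <;> · simp; positivity)
    (by intro i; fin_cases i <;> · simp; positivity)
  simp only [Fin.sum_univ_two, Matrix.cons_val_zero, Matrix.cons_val_one, Matrix.head_cons] at h
  rw [mul_div_cancel₀ _ hX.ne', mul_div_cancel₀ _ hY.ne'] at h
  have hbc : (0:ℝ) ≤ b + c := by positivity
  have h2 := Real.rpow_le_rpow hbc h hq0.le
  rw [Real.mul_rpow (by positivity) (by positivity),
    ← Real.rpow_mul (show (0:ℝ) ≤ X + Y by positivity),
    ← Real.rpow_mul (show (0:ℝ) ≤ X * (b / X) ^ q + Y * (c / Y) ^ q by positivity),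
    inv_mul_cancel₀ hq0.ne', Real.rpow_one] at h2
  have he : (1 - q⁻¹) * q = q - 1 := by field_simp
  rw [he] at h2
  rw [div_le_iff₀ (by positivity)]
  refine h2.trans (le_of_eq ?_)
  rw [Real.div_rpow hb hX.le, Real.div_rpow hc hY.le, Real.rpow_sub hX, Real.rpow_sub hY,
    Real.rpow_one]
  have hXq : X ^ q ≠ 0 := by positivity
  have hYq : Y ^ q ≠ 0 := by positivity
  field_simp
  simp only [Real.rpow_one, pow_one]
  ring

lemma my_dresher_core {x1 x2 y1 y2 K : ℝ} (hx1 : 0 ≤ x1) (hx2 : 0 ≤ x2)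
    (hy1 : 0 ≤ y1) (hy2 : 0 ≤ y2) (hX : 0 < x1 + x2) (hY : 0 < y1 + y2)
    (hK : 2 ≤ K) :
    (((x1 + y1) ^ K + (x2 + y2) ^ K) / ((x1 + y1) + (x2 + y2))) ^ (1 / (K - 1)) ≤
      ((x1 ^ K + x2 ^ K) / (x1 + x2)) ^ (1 / (K - 1)) +
      ((y1 ^ K + y2 ^ K) / (y1 + y2)) ^ (1 / (K - 1)) := by
  have hK1 : (0:ℝ) < K - 1 := by linarith
  have hK0 : (0:ℝ) < K := by linarith
  have hKone : (1:ℝ) ≤ K := by linarith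
  set Nx := x1 ^ K + x2 ^ K with hNxdef
  set Ny := y1 ^ K + y2 ^ K with hNydef
  set N := (x1 + y1) ^ K + (x2 + y2) ^ K with hNdef
  have hNx : 0 ≤ Nx := by positivity
  have hNy : 0 ≤ Ny := by positivity
  have hN : 0 ≤ N := by positivity
  set b := Nx ^ (1 / K) with hbdef
  set c := Ny ^ (1 / K) with hcdef
  have hb0 : 0 ≤ b := by positivity
  have hc0 : 0 ≤ c := by positivity
  -- Minkowski : N ^ (1/K) ≤ b + c
  have hmink : N ^ (1 / K) ≤ b + c := by
    have h := Real.Lp_add_le Finset.univ ![x1, x2] ![y1, y2] hKone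
    simp only [Fin.sum_univ_two, Matrix.cons_val_zero, Matrix.cons_val_one,
      Matrix.head_cons, abs_of_nonneg, hx1, hx2, hy1, hy2,
      abs_of_nonneg (add_nonneg hx1 hy1), abs_of_nonneg (add_nonneg hx2 hy2)] at h
    exact h
  have hNle : N ≤ (b + c) ^ K := by
    have h := Real.rpow_le_rpow (by positivity) hmink hK0.le
    rwa [← Real.rpow_mul hN, one_div, inv_mul_cancel₀ hK0.ne', Real.rpow_one] at h
  set q : ℝ := K / (K - 1) with hqdef
  have hq : 1 ≤ q := by rw [hqdef, le_div_iff₀ hK1]; linarith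
  have he : q - 1 = 1 / (K - 1) := by rw [hqdef]; field_simp; ring
  -- rewrite the goal denominators
  have hS : ((x1 + y1) + (x2 + y2)) = (x1 + x2) + (y1 + y2) := by ring
  rw [hS]
  have hD : (0:ℝ) < (x1 + x2) + (y1 + y2) := by linarith
  rw [Real.div_rpow hN hD.le, Real.div_rpow hNx hX.le, Real.div_rpow hNy hY.le]
  have hrad := my_radon2 hb0 hc0 hX hY hq
  have hbq : b ^ q = Nx ^ (1 / (K - 1)) := by
    rw [hbdef, ← Real.rpow_mul hNx]
    congr 1
    rw [hqdef]; field_simp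
  have hcq : c ^ q = Ny ^ (1 / (K - 1)) := by
    rw [hcdef, ← Real.rpow_mul hNy]
    congr 1
    rw [hqdef]; field_simp
  rw [hbq, hcq, he] at hrad
  refine le_trans ?_ hrad
  have hNe : N ^ (1 / (K - 1)) ≤ (b + c) ^ q := by
    calc N ^ (1 / (K - 1)) ≤ ((b + c) ^ K) ^ (1 / (K - 1)) :=
          Real.rpow_le_rpow hN hNle (by positivity)
      _ = (b + c) ^ q := by
          rw [← Real.rpow_mul (by positivity), hqdef, mul_one_div]
  gcongr

/-- Let `a, b, c, d ≥ 0` (with the denominators positive), `p ≥ 1`, and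
`k ≥ 2` an integer. Then
`(((a^p+b^p)^k + (c^p+d^p)^k)/((a+b)^p + (c+d)^p))^(1/(p(k-1)))
  ≤ ((a^(pk)+c^(pk))/(a^p+c^p))^(1/(p(k-1))) + ((b^(pk)+d^(pk))/(b^p+d^p))^(1/(p(k-1)))`. -/
theorem dresher_style_inequality (a b c d : ℝ)
    (ha : 0 ≤ a) (hb : 0 ≤ b) (hc : 0 ≤ c) (hd : 0 ≤ d)
    (p : ℝ) (hp : 1 ≤ p) (k : ℕ) (hk : 2 ≤ k)
    (h1 : 0 < a ^ p + c ^ p) (h2 : 0 < b ^ p + d ^ p)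
    (h3 : 0 < (a + b) ^ p + (c + d) ^ p) :
    (((a ^ p + b ^ p) ^ k + (c ^ p + d ^ p) ^ k) /
        ((a + b) ^ p + (c + d) ^ p)) ^ (1 / (p * ((k : ℝ) - 1))) ≤
      ((a ^ (p * (k : ℝ)) + c ^ (p * (k : ℝ))) /
          (a ^ p + c ^ p)) ^ (1 / (p * ((k : ℝ) - 1))) +
      ((b ^ (p * (k : ℝ)) + d ^ (p * (k : ℝ))) /
          (b ^ p + d ^ p)) ^ (1 / (p * ((k : ℝ) - 1))) := by
  have hp0 : (0:ℝ) < p := lt_of_lt_of_le one_pos hp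
  have hK2 : (2:ℝ) ≤ (k:ℝ) := by exact_mod_cast hk
  set K : ℝ := (k : ℝ) with hKdef
  have hK1 : (0:ℝ) < K - 1 := by linarith
  -- convert natural powers and p*k exponents
  rw [← Real.rpow_natCast (a ^ p + b ^ p) k, ← Real.rpow_natCast (c ^ p + d ^ p) k,
    Real.rpow_mul ha, Real.rpow_mul hb, Real.rpow_mul hc, Real.rpow_mul hd]
  set x1 := a ^ p with hx1def
  set x2 := c ^ p with hx2def
  set y1 := b ^ p with hy1def
  set y2 := d ^ p with hy2def
  have hx1 : 0 ≤ x1 := Real.rpow_nonneg ha p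
  have hx2 : 0 ≤ x2 := Real.rpow_nonneg hc p
  have hy1 : 0 ≤ y1 := Real.rpow_nonneg hb p
  have hy2 : 0 ≤ y2 := Real.rpow_nonneg hd p
  set N := (x1 + y1) ^ K + (x2 + y2) ^ K with hNdef
  have hN : 0 ≤ N := by positivity
  set S := (x1 + y1) + (x2 + y2) with hSdef
  have hS : 0 < S := by rw [hSdef]; linarith
  -- denominator comparison
  have hd1 : x1 + y1 ≤ (a + b) ^ p := my_rpow_superadd ha hb hp
  have hd2 : x2 + y2 ≤ (c + d) ^ p := my_rpow_superadd hc hd hp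
  have hfrac : N / ((a + b) ^ p + (c + d) ^ p) ≤ N / S := by
    apply div_le_div_of_nonneg_left hN hS
    rw [hSdef]; linarith
  have hexp : 1 / (p * (K - 1)) = (1 / (K - 1)) * (1 / p) := by
    rw [one_div, one_div, one_div, mul_inv, mul_comm]
  have hr0 : (0:ℝ) ≤ 1 / (p * (K - 1)) := by positivity
  have step1 : (N / ((a + b) ^ p + (c + d) ^ p)) ^ (1 / (p * (K - 1))) ≤
      (N / S) ^ (1 / (p * (K - 1))) :=
    Real.rpow_le_rpow (by positivity) hfrac hr0
  refine step1.trans ?_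
  have hcore := my_dresher_core hx1 hx2 hy1 hy2 h1 h2 hK2
  rw [hSdef, hexp, Real.rpow_mul (by positivity), Real.rpow_mul (by positivity),
    Real.rpow_mul (by positivity)]
  calc ((N / ((x1 + y1) + (x2 + y2))) ^ (1 / (K - 1))) ^ (1 / p)
      ≤ (((x1 ^ K + x2 ^ K) / (x1 + x2)) ^ (1 / (K - 1)) +
          ((y1 ^ K + y2 ^ K) / (y1 + y2)) ^ (1 / (K - 1))) ^ (1 / p) :=
        Real.rpow_le_rpow (by positivity) hcore (by positivity)
    _ ≤ (((x1 ^ K + x2 ^ K) / (x1 + x2)) ^ (1 / (K - 1))) ^ (1 / p) +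
          (((y1 ^ K + y2 ^ K) / (y1 + y2)) ^ (1 / (K - 1))) ^ (1 / p) :=
        my_rpow_subadd (by positivity) (by positivity) hp
end
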